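/- arXiv:1506.00753 — 5 statements merged into one kernel-verified Lean document; each statement's English description precedes it below -/
import Mathlib

section
/- Let ψ be a pattern of length n with multiplicities μ_1,…,μ_m (m ≥ 2), and define Υ(ψ) = (n²−n)/(Σ_{i=1}^m μ_i² − n) (with Υ(ψ) = ∞ when Σ_{i=1}^m μ_i² = n). Then for every integer k ≥ m: if k < Υ(ψ), the uniform distribution U_k is a local maximum of the function β_k^ψ on the simplex Π_[k]; and if k > Υ(ψ), U_k is a local minimum of β_k^ψ on Π_[k]. -/
open Finset in
lemma prod_one_add_expansion {ι : Type*} [DecidableEq ι] (w : ι → ℝ) (M Q : ℝ)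
    (hM0 : 0 ≤ M) (hM1 : M ≤ 1) (hQ : 0 ≤ Q) (hw : ∀ t, |w t| ≤ M)
    (s : Finset ι) (hs : ∑ t ∈ s, (w t)^2 ≤ Q) :
    |∏ t ∈ s, (1 + w t) -
      (1 + (∑ t ∈ s, w t) + ((∑ t ∈ s, w t)^2 - ∑ t ∈ s, (w t)^2)/2)|
      ≤ 4^(s.card) * M * Q := by
  induction s using Finset.induction_on with
  | empty => simpa using mul_nonneg (by simpa using hM0) hQ
  | @insert a s ha ih =>
    have hs' : ∑ t ∈ s, (w t)^2 ≤ Q := by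
      refine le_trans ?_ hs
      rw [Finset.sum_insert ha]
      nlinarith [sq_nonneg (w a)]
    have IH := ih hs'
    set S := ∑ t ∈ s, w t with hS
    set T := ∑ t ∈ s, (w t)^2 with hT
    set P := ∏ t ∈ s, (1 + w t) with hP
    have hSsq : S^2 ≤ s.card * T := sq_sum_le_card_mul_sum_sq
    have hT0 : 0 ≤ T := Finset.sum_nonneg fun t _ => sq_nonneg _
    have hTQ : T ≤ Q := hs'
    have hwa : |w a| ≤ M := hw a
    rw [Finset.prod_insert ha, Finset.sum_insert ha, Finset.sum_insert ha]
    have key : (1 + w a) * P -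
        (1 + (w a + S) + ((w a + S)^2 - ((w a)^2 + T))/2)
        = (1 + w a) * (P - (1 + S + (S^2 - T)/2)) + w a * ((S^2 - T)/2) := by
      ring
    rw [key]
    have habs : |1 + w a| ≤ 2 := by
      have h := abs_add_le 1 (w a)
      simp only [abs_one] at h
      linarith [hwa.trans hM1]
    have h1 : |(1 + w a) * (P - (1 + S + (S^2 - T)/2))| ≤ 2 * (4^s.card * M * Q) := by
      rw [abs_mul]
      exact mul_le_mul habs IH (abs_nonneg _) (by norm_num)
    have hb : |(S^2 - T)/2| ≤ ((s.card : ℝ) + 1) * Q / 2 := by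
      rw [abs_div, abs_two, div_le_div_iff_of_pos_right (by norm_num)]
      rw [abs_le]
      constructor
      · nlinarith [sq_nonneg S]
      · nlinarith [Nat.cast_nonneg (α := ℝ) s.card, mul_le_mul_of_nonneg_left hTQ (Nat.cast_nonneg (α := ℝ) s.card)]
    have h2 : |w a * ((S^2 - T)/2)| ≤ M * (((s.card : ℝ) + 1) * Q / 2) := by
      rw [abs_mul]
      exact mul_le_mul hwa hb (abs_nonneg _) hM0
    have hcard : ((s.card : ℝ) + 1) / 2 ≤ 2 * 4^s.card := by
      have h4 : (s.card : ℝ) + 1 ≤ 4^s.card := by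
        induction s.card with
        | zero => norm_num
        | succ c ihc =>
          push_cast
          push_cast at ihc
          have : (0:ℝ) < 4 ^ c := by positivity
          calc (c:ℝ) + 1 + 1 ≤ 4^c + 4^c := by linarith
          _ ≤ 4^(c+1) := by rw [pow_succ]; nlinarith
      linarith [pow_pos (show (0:ℝ) < 4 by norm_num) s.card]
    calc |(1 + w a) * (P - (1 + S + (S^2 - T)/2)) + w a * ((S^2 - T)/2)|
        ≤ 2 * (4^s.card * M * Q) + M * (((s.card : ℝ) + 1) * Q / 2) :=
          (abs_add_le _ _).trans (add_le_add h1 h2)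
      _ ≤ 4^(insert a s).card * M * Q := by
          rw [Finset.card_insert_of_notMem ha, pow_succ]
          have : M * (((s.card : ℝ) + 1) * Q / 2) ≤ M * ((2 * 4^s.card) * Q) := by
            apply mul_le_mul_of_nonneg_left ?_ hM0
            rw [mul_comm ((s.card:ℝ)+1) Q, mul_div_assoc]
            calc Q * (((#s:ℝ)+1)/2) ≤ Q * (2 * 4^#s) := mul_le_mul_of_nonneg_left hcard hQ
              _ = 2 * 4^#s * Q := mul_comm _ _
          nlinarith [pow_pos (show (0:ℝ) < 4 by norm_num) s.card, mul_nonneg hM0 hQ]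

lemma exists_perm_pair {α : Type*} [DecidableEq α] (a b c d : α) (hab : a ≠ b) (hcd : c ≠ d) :
    ∃ π : Equiv.Perm α, π a = c ∧ π b = d := by
  refine ⟨(Equiv.swap a c).trans (Equiv.swap ((Equiv.swap a c) b) d), ?_, ?_⟩
  · simp only [Equiv.trans_apply, Equiv.swap_apply_left]
    apply Equiv.swap_apply_of_ne_of_ne
    · intro h
      exact hab ((Equiv.swap a c).injective (by rw [← h, Equiv.swap_apply_left]))
    · exact hcd
  · simp only [Equiv.trans_apply, Equiv.swap_apply_left]

private def Inj (m k : ℕ) : Finset (Fin m → Fin k) :=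
  Finset.univ.filter (fun σ : Fin m → Fin k => Function.Injective σ)

open Finset in
private lemma comp_mem_Inj {m k : ℕ} (π : Equiv.Perm (Fin k)) {σ : Fin m → Fin k}
    (hσ : σ ∈ Inj m k) : π ∘ σ ∈ Inj m k := by
  simp only [Inj, Finset.mem_filter, Finset.mem_univ, true_and] at *
  exact π.injective.comp hσ

open Finset in
private lemma fiber_card_const {m k : ℕ} (i : Fin m) (j j' : Fin k) :
    ((Inj m k).filter (fun σ => σ i = j)).card
      = ((Inj m k).filter (fun σ => σ i = j')).card := by
  by_cases hjj : j = j'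
  · rw [hjj]
  · apply Finset.card_bij' (fun σ _ => Equiv.swap j j' ∘ σ)
      (fun σ _ => Equiv.swap j j' ∘ σ)
    · intro σ hσ
      rw [Finset.mem_filter] at hσ ⊢
      refine ⟨comp_mem_Inj _ hσ.1, ?_⟩
      simp [Function.comp, hσ.2]
    · intro σ hσ
      rw [Finset.mem_filter] at hσ ⊢
      refine ⟨comp_mem_Inj _ hσ.1, ?_⟩
      simp [Function.comp, hσ.2, Equiv.swap_apply_right]
    · intro σ _
      funext t
      simp [Function.comp]
    · intro σ _
      funext t
      simp [Function.comp]

open Finset in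
private lemma sum_fiber_single {m k : ℕ} (i : Fin m) (g : Fin k → ℝ) :
    (k : ℝ) * ∑ σ ∈ Inj m k, g (σ i)
      = ((Inj m k).card : ℝ) * ∑ j, g j := by
  classical
  have h1 : ∑ σ ∈ Inj m k, g (σ i)
      = ∑ j : Fin k, ∑ σ ∈ (Inj m k).filter (fun σ => σ i = j), g (σ i) :=
    (Finset.sum_fiberwise_of_maps_to (fun σ _ => Finset.mem_univ (σ i)) _).symm
  have h2 : ∀ j : Fin k, ∑ σ ∈ (Inj m k).filter (fun σ => σ i = j), g (σ i)
      = (((Inj m k).filter (fun σ => σ i = j)).card : ℝ) * g j := by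
    intro j
    rw [Finset.sum_congr rfl (fun σ hσ => by
      rw [(Finset.mem_filter.1 hσ).2]), Finset.sum_const, nsmul_eq_mul]
  have hN : ∑ j : Fin k, (((Inj m k).filter (fun σ => σ i = j)).card)
      = (Inj m k).card :=
    (Finset.card_eq_sum_card_fiberwise (fun σ _ => Finset.mem_univ (σ i))).symm
  rcases Nat.eq_zero_or_pos k with hk0 | hk0
  · subst hk0
    simp
  have j0 : Fin k := ⟨0, hk0⟩
  have hconst : ∀ j : Fin k, ((Inj m k).filter (fun σ => σ i = j)).card
      = ((Inj m k).filter (fun σ => σ i = j0)).card := fun j => fiber_card_const i j j0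
  have hkc : k * ((Inj m k).filter (fun σ => σ i = j0)).card = (Inj m k).card := by
    rw [← hN, Finset.sum_congr rfl (fun j _ => hconst j), Finset.sum_const,
      Finset.card_univ, Fintype.card_fin, smul_eq_mul]
  rw [h1, Finset.sum_congr rfl (fun j _ => h2 j),
    Finset.sum_congr rfl (fun j (_ : j ∈ univ) => by rw [hconst j]),
    ← Finset.mul_sum, ← hkc]
  push_cast
  ring

open Finset in
private lemma pairfiber_card_const {m k : ℕ} (i i' : Fin m) (p q : Fin k × Fin k)
    (hp : p.1 ≠ p.2) (hq : q.1 ≠ q.2) :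
    ((Inj m k).filter (fun σ => (σ i, σ i') = p)).card
      = ((Inj m k).filter (fun σ => (σ i, σ i') = q)).card := by
  obtain ⟨π, hπ1, hπ2⟩ := exists_perm_pair p.1 p.2 q.1 q.2 hp hq
  apply Finset.card_bij' (fun σ _ => π ∘ σ) (fun σ _ => π.symm ∘ σ)
  · intro σ hσ
    rw [Finset.mem_filter] at hσ ⊢
    obtain ⟨h1, h2⟩ := hσ
    rw [Prod.ext_iff] at h2
    have h2a : σ i = p.1 := h2.1
    have h2b : σ i' = p.2 := h2.2
    refine ⟨comp_mem_Inj _ h1, ?_⟩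
    show (π (σ i), π (σ i')) = q
    rw [h2a, h2b, hπ1, hπ2]
  · intro σ hσ
    rw [Finset.mem_filter] at hσ ⊢
    obtain ⟨h1, h2⟩ := hσ
    rw [Prod.ext_iff] at h2
    have h2a : σ i = q.1 := h2.1
    have h2b : σ i' = q.2 := h2.2
    refine ⟨comp_mem_Inj _ h1, ?_⟩
    show (π.symm (σ i), π.symm (σ i')) = p
    rw [h2a, h2b, ← hπ1, ← hπ2, Equiv.symm_apply_apply, Equiv.symm_apply_apply]
  · intro σ _; funext t; simp
  · intro σ _; funext t; simp

open Finset in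
private lemma sum_fiber_pair {m k : ℕ} (i i' : Fin m) (hii : i ≠ i') (f : Fin k → Fin k → ℝ) :
    (((univ : Finset (Fin k)).offDiag.card) : ℝ) * ∑ σ ∈ Inj m k, f (σ i) (σ i')
      = ((Inj m k).card : ℝ) * ∑ p ∈ (univ : Finset (Fin k)).offDiag, f p.1 p.2 := by
  classical
  have hmaps : ∀ σ ∈ Inj m k, (σ i, σ i') ∈ (univ : Finset (Fin k)).offDiag := by
    intro σ hσ
    rw [Finset.mem_offDiag]
    simp only [Inj, Finset.mem_filter, Finset.mem_univ, true_and] at hσ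
    exact ⟨Finset.mem_univ _, Finset.mem_univ _, fun h => hii (hσ h)⟩
  have h1 : ∑ σ ∈ Inj m k, f (σ i) (σ i')
      = ∑ p ∈ (univ : Finset (Fin k)).offDiag,
          ∑ σ ∈ (Inj m k).filter (fun σ => (σ i, σ i') = p), f (σ i) (σ i') :=
    (Finset.sum_fiberwise_of_maps_to hmaps _).symm
  have h2 : ∀ p ∈ (univ : Finset (Fin k)).offDiag,
      ∑ σ ∈ (Inj m k).filter (fun σ => (σ i, σ i') = p), f (σ i) (σ i')
      = (((Inj m k).filter (fun σ => (σ i, σ i') = p)).card : ℝ) * f p.1 p.2 := by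
    intro p _
    rw [Finset.sum_congr rfl (fun σ hσ =>
      (show f (σ i) (σ i') = f p.1 p.2 by
        rw [← (Finset.mem_filter.1 hσ).2])), Finset.sum_const, nsmul_eq_mul]
  have hN : ∑ p ∈ (univ : Finset (Fin k)).offDiag,
      (((Inj m k).filter (fun σ => (σ i, σ i') = p)).card)
      = (Inj m k).card := (Finset.card_eq_sum_card_fiberwise hmaps).symm
  rcases Finset.eq_empty_or_nonempty ((univ : Finset (Fin k)).offDiag) with he | ⟨p0, hp0⟩
  · rw [he] at hN ⊢
    simp only [Finset.sum_empty, Finset.card_empty] at hN ⊢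
    rw [← hN]
    simp
  · have hp0' := (Finset.mem_offDiag.1 hp0).2.2
    have hconst : ∀ p ∈ (univ : Finset (Fin k)).offDiag,
        ((Inj m k).filter (fun σ => (σ i, σ i') = p)).card
        = ((Inj m k).filter (fun σ => (σ i, σ i') = p0)).card := by
      intro p hp
      exact pairfiber_card_const i i' p p0 (Finset.mem_offDiag.1 hp).2.2 hp0'
    have hkc : (univ : Finset (Fin k)).offDiag.card
        * ((Inj m k).filter (fun σ => (σ i, σ i') = p0)).card = (Inj m k).card := by
      rw [← hN, Finset.sum_congr rfl hconst, Finset.sum_const, smul_eq_mul]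
    rw [h1, Finset.sum_congr rfl h2, Finset.sum_congr rfl
      (fun p hp => by rw [hconst p hp]), ← Finset.mul_sum, ← hkc]
    push_cast
    ring

open Finset in
lemma sum_offDiag_mul {α : Type*} [Fintype α] [DecidableEq α] (f g : α → ℝ) :
    ∑ p ∈ (univ : Finset α).offDiag, f p.1 * g p.2
      = (∑ j, f j) * (∑ j, g j) - ∑ j, f j * g j := by
  have h : (∑ j, f j) * (∑ j, g j) = ∑ p ∈ univ ×ˢ univ, f p.1 * g p.2 := by
    rw [Finset.sum_mul_sum, Finset.sum_product]
  rw [h, ← Finset.diag_union_offDiag (univ : Finset α),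
    Finset.sum_union (Finset.disjoint_diag_offDiag _), Finset.sum_diag]
  ring

open Finset in
lemma per_sigma_expansion {m k n : ℕ} (μ : Fin m → ℕ) (hμsum : ∑ i, μ i = n)
    (y : Fin k → ℝ) (M : ℝ) (hM0 : 0 ≤ M) (hM1 : M ≤ 1) (hw : ∀ j, |y j| ≤ M)
    (σ : Fin m → Fin k) (hσ : Function.Injective σ) :
    |∏ i, (1 + y (σ i)) ^ μ i -
      (1 + (∑ i, (μ i : ℝ) * y (σ i)) +
        ((∑ i, (μ i : ℝ) * y (σ i))^2 - ∑ i, (μ i : ℝ) * (y (σ i))^2)/2)|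
      ≤ 4^n * M * ((n : ℝ) * ∑ j, (y j)^2) := by
  classical
  set w : (Σ i : Fin m, Fin (μ i)) → ℝ := fun t => y (σ t.1) with hwdef
  have hprod : ∏ t : (Σ i : Fin m, Fin (μ i)), (1 + w t)
      = ∏ i, (1 + y (σ i)) ^ μ i := by
    rw [← Finset.univ_sigma_univ, Finset.prod_sigma]
    simp [hwdef]
  have hsum : ∑ t : (Σ i : Fin m, Fin (μ i)), w t = ∑ i, (μ i : ℝ) * y (σ i) := by
    rw [← Finset.univ_sigma_univ, Finset.sum_sigma]
    simp [hwdef, mul_comm]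
  have hsum2 : ∑ t : (Σ i : Fin m, Fin (μ i)), (w t)^2
      = ∑ i, (μ i : ℝ) * (y (σ i))^2 := by
    rw [← Finset.univ_sigma_univ, Finset.sum_sigma]
    simp [hwdef, mul_comm]
  have hcard : (Finset.univ : Finset (Σ i : Fin m, Fin (μ i))).card = n := by
    rw [Finset.card_univ, Fintype.card_sigma]
    simpa using hμsum
  have hinj : ∑ i, (y (σ i))^2 ≤ ∑ j, (y j)^2 := by
    calc ∑ i, (y (σ i))^2
        = ∑ j ∈ Finset.univ.image σ, (y j)^2 :=
          (Finset.sum_image (g := σ) (f := fun j => (y j)^2) (fun x _ x' _ h => hσ h)).symm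
      _ ≤ ∑ j, (y j)^2 :=
          Finset.sum_le_sum_of_subset_of_nonneg (Finset.subset_univ _)
            (fun _ _ _ => sq_nonneg _)
  have hQ : ∑ t : (Σ i : Fin m, Fin (μ i)), (w t)^2 ≤ (n : ℝ) * ∑ j, (y j)^2 := by
    rw [hsum2]
    have h1 : ∀ i : Fin m, (μ i : ℝ) ≤ (n : ℝ) := by
      intro i
      exact_mod_cast Nat.cast_le.2 (hμsum ▸ Finset.single_le_sum
        (fun i _ => Nat.zero_le (μ i)) (Finset.mem_univ i))
    calc ∑ i, (μ i:ℝ) * (y (σ i))^2 ≤ ∑ i, (n:ℝ) * (y (σ i))^2 :=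
          Finset.sum_le_sum (fun i _ =>
            mul_le_mul_of_nonneg_right (h1 i) (sq_nonneg _))
      _ = (n:ℝ) * ∑ i, (y (σ i))^2 := by rw [Finset.mul_sum]
      _ ≤ (n:ℝ) * ∑ j, (y j)^2 :=
          mul_le_mul_of_nonneg_left hinj (Nat.cast_nonneg n)
  have hQ0 : (0:ℝ) ≤ (n : ℝ) * ∑ j, (y j)^2 := by positivity
  have := prod_one_add_expansion w M ((n : ℝ) * ∑ j, (y j)^2) hM0 hM1 hQ0
    (fun t => hw _) Finset.univ hQ
  rw [hprod, hsum, hsum2, hcard] at this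
  exact this

open Finset in
lemma key_quadratic {m k n U : ℕ} (hk2 : 2 ≤ k) (μ : Fin m → ℕ)
    (hμsum : ∑ i, μ i = n) (hU : ∑ i, (μ i)^2 = U)
    (y : Fin k → ℝ) (hy0 : ∑ j, y j = 0) :
    ∑ σ ∈ Inj m k, ((∑ i, (μ i : ℝ) * y (σ i)) +
        ((∑ i, (μ i : ℝ) * y (σ i))^2 - ∑ i, (μ i : ℝ) * (y (σ i))^2)/2)
    = (∑ j, (y j)^2) * ((Inj m k).card : ℝ)
        * ((k:ℝ)*(U:ℝ) - (n:ℝ)^2 + (n:ℝ) - (k:ℝ)*(n:ℝ)) / (2*(k:ℝ)*((k:ℝ)-1)) := by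
  classical
  set N : ℝ := ((Inj m k).card : ℝ) with hN
  set Qy : ℝ := ∑ j, (y j)^2 with hQy
  have hkpos : (0:ℝ) < (k:ℝ) := by exact_mod_cast Nat.lt_of_lt_of_le (by norm_num) hk2
  have hk1 : (0:ℝ) < (k:ℝ) - 1 := by
    have : (2:ℝ) ≤ (k:ℝ) := by exact_mod_cast hk2
    linarith
  -- off-diagonal card
  have hoffcard : (((univ : Finset (Fin k)).offDiag.card) : ℝ) = (k:ℝ) * ((k:ℝ) - 1) := by
    rw [Finset.offDiag_card, Finset.card_univ, Fintype.card_fin]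
    have hle : k ≤ k * k := Nat.le_mul_of_pos_left k (by omega)
    push_cast [Nat.cast_sub hle]
    ring
  -- single-index sums
  have hsingle : ∀ (i : Fin m) (g : Fin k → ℝ),
      ∑ σ ∈ Inj m k, g (σ i) = N * (∑ j, g j) / (k:ℝ) := by
    intro i g
    rw [eq_div_iff (ne_of_gt hkpos), mul_comm _ (k:ℝ), sum_fiber_single i g]
  -- pair sums
  have hpair : ∀ (i i' : Fin m), i ≠ i' →
      ∑ σ ∈ Inj m k, y (σ i) * y (σ i')
        = N * (0 - Qy) / ((k:ℝ) * ((k:ℝ) - 1)) := by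
    intro i i' hii
    have h := sum_fiber_pair i i' hii (fun a b => y a * y b)
    rw [hoffcard] at h
    rw [eq_div_iff (by positivity), mul_comm _ ((k:ℝ) * ((k:ℝ)-1)), h,
      sum_offDiag_mul y y, hy0]
    ring_nf
    rw [hN, hQy]
  -- sum of S
  have hS : ∑ σ ∈ Inj m k, (∑ i, (μ i : ℝ) * y (σ i)) = 0 := by
    rw [Finset.sum_comm]
    refine Finset.sum_eq_zero fun i _ => ?_
    rw [← Finset.mul_sum, hsingle i y, hy0]
    ring
  -- sum of T
  have hT : ∑ σ ∈ Inj m k, (∑ i, (μ i : ℝ) * (y (σ i))^2) = (n:ℝ) * N * Qy / (k:ℝ) := by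
    rw [Finset.sum_comm]
    have : ∀ i : Fin m, (∑ σ ∈ Inj m k, (μ i : ℝ) * (y (σ i))^2)
        = (μ i : ℝ) * (N * Qy / (k:ℝ)) := by
      intro i
      rw [← Finset.mul_sum, hsingle i (fun j => (y j)^2)]
    rw [Finset.sum_congr rfl (fun i _ => this i), ← Finset.sum_mul,
      show (∑ i, (μ i:ℝ)) = (n:ℝ) by exact_mod_cast hμsum]
    ring
  -- sum of S^2
  have hsq : ∀ σ : Fin m → Fin k,
      (∑ i, (μ i : ℝ) * y (σ i))^2
      = (∑ i, ((μ i:ℝ) * y (σ i)) * ((μ i:ℝ) * y (σ i)))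
        + ∑ p ∈ (univ : Finset (Fin m)).offDiag,
            ((μ p.1:ℝ) * y (σ p.1)) * ((μ p.2:ℝ) * y (σ p.2)) := by
    intro σ
    rw [sum_offDiag_mul (fun i => (μ i:ℝ) * y (σ i)) (fun i => (μ i:ℝ) * y (σ i))]
    ring
  have hS2 : ∑ σ ∈ Inj m k, (∑ i, (μ i : ℝ) * y (σ i))^2
      = (U:ℝ) * N * Qy / (k:ℝ)
        + ((n:ℝ)^2 - (U:ℝ)) * (N * (0 - Qy) / ((k:ℝ) * ((k:ℝ) - 1))) := by
    rw [Finset.sum_congr rfl (fun σ _ => hsq σ), Finset.sum_add_distrib]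
    congr 1
    · -- diagonal part
      rw [Finset.sum_comm]
      have : ∀ i : Fin m, ∑ σ ∈ Inj m k, ((μ i:ℝ) * y (σ i)) * ((μ i:ℝ) * y (σ i))
          = (μ i:ℝ)^2 * (N * Qy / (k:ℝ)) := by
        intro i
        have : ∀ σ : Fin m → Fin k, ((μ i:ℝ) * y (σ i)) * ((μ i:ℝ) * y (σ i))
            = (μ i:ℝ)^2 * (y (σ i))^2 := fun σ => by ring
        rw [Finset.sum_congr rfl (fun σ _ => this σ), ← Finset.mul_sum,
          hsingle i (fun j => (y j)^2)]
      rw [Finset.sum_congr rfl (fun i _ => this i), ← Finset.sum_mul,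
        show (∑ i, (μ i:ℝ)^2) = (U:ℝ) by exact_mod_cast hU]
      ring
    · -- off-diagonal part
      rw [Finset.sum_comm]
      have h1 : ∀ p ∈ (univ : Finset (Fin m)).offDiag,
          ∑ σ ∈ Inj m k, ((μ p.1:ℝ) * y (σ p.1)) * ((μ p.2:ℝ) * y (σ p.2))
          = (μ p.1:ℝ) * (μ p.2:ℝ) * (N * (0 - Qy) / ((k:ℝ) * ((k:ℝ) - 1))) := by
        intro p hp
        have hne : p.1 ≠ p.2 := (Finset.mem_offDiag.1 hp).2.2
        have : ∀ σ : Fin m → Fin k, ((μ p.1:ℝ) * y (σ p.1)) * ((μ p.2:ℝ) * y (σ p.2))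
            = ((μ p.1:ℝ) * (μ p.2:ℝ)) * (y (σ p.1) * y (σ p.2)) := fun σ => by ring
        rw [Finset.sum_congr rfl (fun σ _ => this σ), ← Finset.mul_sum,
          hpair p.1 p.2 hne]
      rw [Finset.sum_congr rfl h1, ← Finset.sum_mul]
      have h2 : ∑ p ∈ (univ : Finset (Fin m)).offDiag, (μ p.1:ℝ) * (μ p.2:ℝ)
          = (n:ℝ)^2 - (U:ℝ) := by
        rw [sum_offDiag_mul (fun i => (μ i:ℝ)) (fun i => (μ i:ℝ)),
          show (∑ i, (μ i:ℝ)) = (n:ℝ) by exact_mod_cast hμsum]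
        have : ∑ i, (μ i:ℝ) * (μ i:ℝ) = (U:ℝ) := by
          rw [← hU]; push_cast; exact Finset.sum_congr rfl fun i _ => by ring
        rw [this]; ring
      rw [h2]
  -- assemble
  rw [Finset.sum_add_distrib, hS, zero_add]
  have : ∑ σ ∈ Inj m k, ((∑ i, (μ i : ℝ) * y (σ i))^2
      - ∑ i, (μ i : ℝ) * (y (σ i))^2)/2
      = ((∑ σ ∈ Inj m k, (∑ i, (μ i : ℝ) * y (σ i))^2)
        - ∑ σ ∈ Inj m k, (∑ i, (μ i : ℝ) * (y (σ i))^2))/2 := by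
    rw [← Finset.sum_sub_distrib, Finset.sum_div]
  rw [this, hS2, hT]
  field_simp
  ring

open Finset in
lemma main_expansion {n m k U : ℕ} (hk2 : 2 ≤ k)
    (μ : Fin m → ℕ) (hμsum : ∑ i, μ i = n) (hU : ∑ i, (μ i)^2 = U)
    (p : Fin k → ℝ) (hp1 : ∑ j, p j = 1) (M : ℝ) (hM0 : 0 ≤ M) (hM1 : M ≤ 1)
    (hpM : ∀ j, |(k:ℝ) * (p j - (k:ℝ)⁻¹)| ≤ M) :
    |(∑ σ ∈ Inj m k, ∏ i, p (σ i) ^ μ i)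
      - (∑ σ ∈ Inj m k, ∏ i, ((k:ℝ)⁻¹) ^ μ i)
      - ((k:ℝ)⁻¹)^n * ((∑ j, ((k:ℝ) * (p j - (k:ℝ)⁻¹))^2) * ((Inj m k).card : ℝ)
          * ((k:ℝ)*(U:ℝ) - (n:ℝ)^2 + (n:ℝ) - (k:ℝ)*(n:ℝ)) / (2*(k:ℝ)*((k:ℝ)-1)))|
      ≤ ((k:ℝ)⁻¹)^n * (((Inj m k).card : ℝ) * (4^n * ((n:ℝ) * 1)))
          * M * (∑ j, ((k:ℝ) * (p j - (k:ℝ)⁻¹))^2) := by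
  classical
  set u : ℝ := (k:ℝ)⁻¹ with hu
  have hkpos : (0:ℝ) < (k:ℝ) := by exact_mod_cast Nat.lt_of_lt_of_le (by norm_num) hk2
  have hupos : 0 < u := by positivity
  have huk : u * (k:ℝ) = 1 := inv_mul_cancel₀ (ne_of_gt hkpos)
  set y : Fin k → ℝ := fun j => (k:ℝ) * (p j - u) with hy
  set Qy : ℝ := ∑ j, (y j)^2 with hQy
  have hQy0 : 0 ≤ Qy := Finset.sum_nonneg fun j _ => sq_nonneg _
  have hy0 : ∑ j, y j = 0 := by
    show ∑ j, (k:ℝ) * (p j - u) = 0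
    rw [← Finset.mul_sum, Finset.sum_sub_distrib, hp1, Finset.sum_const,
      Finset.card_univ, Fintype.card_fin, nsmul_eq_mul, hu]
    field_simp
    ring
  have hpy : ∀ j, p j = u * (1 + y j) := by
    intro j
    show p j = u * (1 + (k:ℝ) * (p j - u))
    rw [hu]
    field_simp
    ring
  -- rewrite β p
  have hβp : ∀ σ : Fin m → Fin k, ∏ i, p (σ i) ^ μ i
      = u^n * ∏ i, (1 + y (σ i)) ^ μ i := by
    intro σ
    rw [Finset.prod_congr rfl (fun i _ => by rw [hpy (σ i), mul_pow]),
      Finset.prod_mul_distrib, Finset.prod_pow_eq_pow_sum, hμsum]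
  have hβU : ∀ σ : Fin m → Fin k, ∏ i, ((k:ℝ)⁻¹) ^ μ i
      = u^n * 1 := by
    intro σ
    rw [mul_one, Finset.prod_pow_eq_pow_sum, hμsum]
  have hkey := key_quadratic hk2 μ hμsum hU y hy0
  have heq : (∑ σ ∈ Inj m k, ∏ i, p (σ i) ^ μ i)
      - (∑ σ ∈ Inj m k, ∏ i, ((k:ℝ)⁻¹) ^ μ i)
      - u^n * (Qy * ((Inj m k).card : ℝ)
          * ((k:ℝ)*(U:ℝ) - (n:ℝ)^2 + (n:ℝ) - (k:ℝ)*(n:ℝ)) / (2*(k:ℝ)*((k:ℝ)-1)))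
      = u^n * ∑ σ ∈ Inj m k, (∏ i, (1 + y (σ i)) ^ μ i - 1
          - ((∑ i, (μ i : ℝ) * y (σ i)) +
            ((∑ i, (μ i : ℝ) * y (σ i))^2 - ∑ i, (μ i : ℝ) * (y (σ i))^2)/2)) := by
    calc (∑ σ ∈ Inj m k, ∏ i, p (σ i) ^ μ i)
        - (∑ σ ∈ Inj m k, ∏ i, ((k:ℝ)⁻¹) ^ μ i)
        - u^n * (Qy * ((Inj m k).card : ℝ)
            * ((k:ℝ)*(U:ℝ) - (n:ℝ)^2 + (n:ℝ) - (k:ℝ)*(n:ℝ)) / (2*(k:ℝ)*((k:ℝ)-1)))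
        = (∑ σ ∈ Inj m k, u^n * ∏ i, (1 + y (σ i)) ^ μ i)
          - (∑ σ ∈ Inj m k, u^n * 1)
          - ∑ σ ∈ Inj m k, u^n * ((∑ i, (μ i : ℝ) * y (σ i)) +
              ((∑ i, (μ i : ℝ) * y (σ i))^2 - ∑ i, (μ i : ℝ) * (y (σ i))^2)/2) := by
          rw [Finset.sum_congr rfl (fun σ _ => hβp σ),
            Finset.sum_congr rfl (fun σ _ => hβU σ), ← hkey, Finset.mul_sum]
      _ = ∑ σ ∈ Inj m k, u^n * (∏ i, (1 + y (σ i)) ^ μ i - 1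
            - ((∑ i, (μ i : ℝ) * y (σ i)) +
              ((∑ i, (μ i : ℝ) * y (σ i))^2 - ∑ i, (μ i : ℝ) * (y (σ i))^2)/2)) := by
          rw [← Finset.sum_sub_distrib, ← Finset.sum_sub_distrib]
          exact Finset.sum_congr rfl (fun σ _ => by ring)
      _ = u^n * ∑ σ ∈ Inj m k, (∏ i, (1 + y (σ i)) ^ μ i - 1
            - ((∑ i, (μ i : ℝ) * y (σ i)) +
              ((∑ i, (μ i : ℝ) * y (σ i))^2 - ∑ i, (μ i : ℝ) * (y (σ i))^2)/2)) :=
          (Finset.mul_sum _ _ _).symm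
  rw [heq, abs_mul, abs_of_pos (pow_pos hupos n),
    mul_assoc (u^n), mul_assoc (u^n)]
  apply mul_le_mul_of_nonneg_left ?_ (le_of_lt (pow_pos hupos n))
  -- remains: |∑ σ (G σ - 1 - (S + (S²-T)/2))| ≤ N * (4^n * (n*1)) * M * Qy
  calc |∑ σ ∈ Inj m k, (∏ i, (1 + y (σ i)) ^ μ i - 1
          - ((∑ i, (μ i : ℝ) * y (σ i)) +
            ((∑ i, (μ i : ℝ) * y (σ i))^2 - ∑ i, (μ i : ℝ) * (y (σ i))^2)/2))|
      ≤ ∑ σ ∈ Inj m k, |∏ i, (1 + y (σ i)) ^ μ i - 1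
          - ((∑ i, (μ i : ℝ) * y (σ i)) +
            ((∑ i, (μ i : ℝ) * y (σ i))^2 - ∑ i, (μ i : ℝ) * (y (σ i))^2)/2)| :=
        Finset.abs_sum_le_sum_abs _ _
    _ ≤ ∑ σ ∈ Inj m k, 4^n * M * ((n:ℝ) * Qy) := by
        apply Finset.sum_le_sum
        intro σ hσ
        have hinj : Function.Injective σ := (Finset.mem_filter.1 hσ).2
        have h := per_sigma_expansion μ hμsum y M hM0 hM1
          (fun j => hpM j) σ hinj
        calc |∏ i, (1 + y (σ i)) ^ μ i - 1
            - ((∑ i, (μ i : ℝ) * y (σ i)) +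
              ((∑ i, (μ i : ℝ) * y (σ i))^2 - ∑ i, (μ i : ℝ) * (y (σ i))^2)/2)|
            = |∏ i, (1 + y (σ i)) ^ μ i -
              (1 + (∑ i, (μ i : ℝ) * y (σ i)) +
                ((∑ i, (μ i : ℝ) * y (σ i))^2 - ∑ i, (μ i : ℝ) * (y (σ i))^2)/2)| := by
              rw [show ∏ i, (1 + y (σ i)) ^ μ i - 1
                - ((∑ i, (μ i : ℝ) * y (σ i)) +
                  ((∑ i, (μ i : ℝ) * y (σ i))^2 - ∑ i, (μ i : ℝ) * (y (σ i))^2)/2)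
                = ∏ i, (1 + y (σ i)) ^ μ i -
                  (1 + (∑ i, (μ i : ℝ) * y (σ i)) +
                    ((∑ i, (μ i : ℝ) * y (σ i))^2 - ∑ i, (μ i : ℝ) * (y (σ i))^2)/2)
                from by ring]
          _ ≤ 4^n * M * ((n:ℝ) * Qy) := h
    _ = ((Inj m k).card : ℝ) * (4^n * ((n:ℝ) * 1)) * M * Qy := by
        rw [Finset.sum_const, nsmul_eq_mul]
        ring

set_option maxHeartbeats 2000000 in
open Finset in
/-- **Phase transition in the PML problem** (Theorem 1).
For a pattern ψ of length n with multiplicities μ₁,…,μ_m (m ≥ 2), let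
Υ(ψ) = (n²−n)/(Σ μᵢ² − n), interpreted as ∞ when Σ μᵢ² = n.  For every k ≥ m:
if k < Υ(ψ) then the uniform distribution U_k is a local maximum of
β_k^ψ : p ↦ P(ψ;p) on the simplex Π_[k], and if k > Υ(ψ) then U_k is a local
minimum. -/
theorem pml_phase_transition
    (n m : ℕ) (hm : 2 ≤ m) (hmn : m ≤ n)
    (μ : Fin m → ℕ) (hμpos : ∀ i, 0 < μ i) (hμsum : ∑ i, μ i = n)
    (k : ℕ) (hk : m ≤ k)
    (β : (Fin k → ℝ) → ℝ)
    (hβ : ∀ p, β p =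
      ∑ σ ∈ Finset.univ.filter (fun σ : Fin m → Fin k => Function.Injective σ),
        ∏ i, p (σ i) ^ μ i)
    (simplex : Set (Fin k → ℝ))
    (hsimplex : simplex = {p | (∀ i, 0 ≤ p i) ∧ ∑ i, p i = 1})
    (Uk : Fin k → ℝ) (hUk : Uk = fun _ => (k : ℝ)⁻¹)
    (𝒰 : ℕ) (h𝒰 : 𝒰 = ∑ i, μ i ^ 2) :
    ((𝒰 = n ∨ (k : ℝ) < ((n : ℝ) ^ 2 - n) / ((𝒰 : ℝ) - n)) →
      IsLocalMaxOn β simplex Uk) ∧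
    ((𝒰 ≠ n ∧ ((n : ℝ) ^ 2 - n) / ((𝒰 : ℝ) - n) < (k : ℝ)) →
      IsLocalMinOn β simplex Uk) := by
  classical
  have hk2 : 2 ≤ k := le_trans hm hk
  have hn2 : 2 ≤ n := le_trans hm hmn
  have hkR : (2:ℝ) ≤ (k:ℝ) := by exact_mod_cast hk2
  have hnR : (2:ℝ) ≤ (n:ℝ) := by exact_mod_cast hn2
  have hkpos : (0:ℝ) < (k:ℝ) := by linarith
  have hIeq : (Finset.univ.filter (fun σ : Fin m → Fin k => Function.Injective σ))
      = Inj m k := rfl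
  have hNpos : 0 < (Inj m k).card := Finset.card_pos.2
    ⟨Fin.castLE hk, Finset.mem_filter.2 ⟨Finset.mem_univ _, Fin.castLE_injective hk⟩⟩
  have hN1 : (1:ℝ) ≤ ((Inj m k).card : ℝ) := by exact_mod_cast hNpos
  have hUn : n ≤ 𝒰 := by
    rw [h𝒰, ← hμsum]
    exact Finset.sum_le_sum fun i _ => Nat.le_self_pow two_ne_zero _
  have hU : ∑ i, (μ i)^2 = 𝒰 := h𝒰.symm
  set N : ℝ := ((Inj m k).card : ℝ) with hN
  set c1 : ℝ := (k:ℝ)*(𝒰:ℝ) - (n:ℝ)^2 + (n:ℝ) - (k:ℝ)*(n:ℝ) with hc1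
  set D : ℝ := 2*(k:ℝ)*((k:ℝ)-1) with hD
  have hDpos : (0:ℝ) < D := by rw [hD]; nlinarith
  set K : ℝ := N * (4^n * ((n:ℝ)*1)) with hK
  have hKpos : (0:ℝ) < K := by
    rw [hK]
    have h4 : (0:ℝ) < 4^n := by positivity
    have hN0 : (0:ℝ) < N := lt_of_lt_of_le one_pos hN1
    have hn0 : (0:ℝ) < (n:ℝ)*1 := by nlinarith
    exact mul_pos hN0 (mul_pos h4 hn0)
  have hvpos : (0:ℝ) < ((k:ℝ)⁻¹)^n := by positivity
  -- rewrite β at p and Uk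
  have hBp : ∀ p : Fin k → ℝ, β p = ∑ σ ∈ Inj m k, ∏ i, p (σ i) ^ μ i := by
    intro p; rw [hβ p, hIeq]
  have hBU : β Uk = ∑ σ ∈ Inj m k, ∏ i : Fin m, ((k:ℝ)⁻¹) ^ μ i := by
    rw [hBp Uk]
    exact Finset.sum_congr rfl fun σ _ => Finset.prod_congr rfl fun i _ => by rw [hUk]
  clear_value N c1 D K
  -- the common engine
  have engine : ∀ s : ℝ, (s = 1 ∨ s = -1) → s * c1 < 0 →
      ∀ᶠ p in nhdsWithin Uk simplex, s * (β p - β Uk) ≤ 0 := by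
    intro s hs hsc1
    set E0 : ℝ := -(s*c1) * N / D with hE0
    have hE0pos : 0 < E0 := by
      rw [hE0]
      apply div_pos ?_ hDpos
      nlinarith
    set M : ℝ := min 1 (E0/(K+1)) with hM
    have hMpos : 0 < M := lt_min one_pos (div_pos hE0pos (by linarith))
    have hM1 : M ≤ 1 := min_le_left _ _
    have hMle : M ≤ E0/(K+1) := min_le_right _ _
    clear_value E0 M
    apply eventually_nhdsWithin_iff.2
    apply Metric.eventually_nhds_iff.2
    refine ⟨M / k, div_pos hMpos hkpos, fun p hdist hmem => ?_⟩
    rw [hsimplex] at hmem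
    have hp1 : ∑ j, p j = 1 := hmem.2
    have hpM : ∀ j, |(k:ℝ)*(p j - (k:ℝ)⁻¹)| ≤ M := by
      intro j
      rw [abs_mul, abs_of_pos hkpos]
      have h1 : |p j - (k:ℝ)⁻¹| ≤ dist p Uk := by
        calc |p j - (k:ℝ)⁻¹| = dist (p j) (Uk j) := by rw [hUk, Real.dist_eq]
          _ ≤ dist p Uk := dist_le_pi_dist p Uk j
      calc (k:ℝ)*|p j - (k:ℝ)⁻¹| ≤ (k:ℝ)*(M/k) :=
            mul_le_mul_of_nonneg_left (h1.trans (le_of_lt hdist)) (le_of_lt hkpos)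
        _ = M := by field_simp
    have happly := main_expansion hk2 μ hμsum hU p hp1 M hMpos.le hM1 hpM
    set Qy : ℝ := ∑ j, ((k:ℝ)*(p j - (k:ℝ)⁻¹))^2 with hQy
    have hQy0 : 0 ≤ Qy := Finset.sum_nonneg fun j _ => sq_nonneg _
    rw [← hBp p, ← hBU, ← hc1, ← hD, ← hN, ← hK] at happly
    clear_value Qy
    have hup := (abs_le.1 happly).2
    have hlo := (abs_le.1 happly).1
    have hKM : K * M ≤ E0 := by
      have h2 : K * M ≤ K * (E0/(K+1)) :=
        mul_le_mul_of_nonneg_left hMle (le_of_lt hKpos)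
      have h3 : K * (E0/(K+1)) ≤ E0 := by
        rw [mul_div_assoc']
        rw [div_le_iff₀ (by linarith)]
        nlinarith
      linarith
    rcases hs with rfl | rfl
    · -- s = 1, c1 < 0
      have hc1D : N * c1 / D * Qy = -(E0 * Qy) := by rw [hE0]; ring
      have key : β p - β Uk ≤ ((k:ℝ)⁻¹)^n * (K * M * Qy) + ((k:ℝ)⁻¹)^n * (-(E0*Qy)) := by
        have : ((k:ℝ)⁻¹)^n * (Qy * N * c1 / D) = ((k:ℝ)⁻¹)^n * (-(E0*Qy)) := by
          rw [← hc1D]; ring_nf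
        nlinarith [hup]
      have hfin : ((k:ℝ)⁻¹)^n * (K * M * Qy) + ((k:ℝ)⁻¹)^n * (-(E0*Qy)) ≤ 0 := by
        have : K * M * Qy - E0 * Qy ≤ 0 := by nlinarith
        nlinarith
      nlinarith
    · -- s = -1, c1 > 0
      have hc1D : N * c1 / D * Qy = E0 * Qy := by rw [hE0]; ring
      have key : β Uk - β p ≤ ((k:ℝ)⁻¹)^n * (K * M * Qy) + ((k:ℝ)⁻¹)^n * (-(E0*Qy)) := by
        have : ((k:ℝ)⁻¹)^n * (Qy * N * c1 / D) = ((k:ℝ)⁻¹)^n * (E0*Qy) := by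
          rw [← hc1D]; ring_nf
        nlinarith [hlo]
      have hfin : ((k:ℝ)⁻¹)^n * (K * M * Qy) + ((k:ℝ)⁻¹)^n * (-(E0*Qy)) ≤ 0 := by
        have : K * M * Qy - E0 * Qy ≤ 0 := by nlinarith
        nlinarith
      nlinarith
  constructor
  · intro hcase
    have hc1neg : c1 < 0 := by
      rcases hcase with hEq | hlt
      · have hcast : (𝒰:ℝ) = (n:ℝ) := by exact_mod_cast hEq
        rw [hc1, hcast]
        nlinarith
      · by_cases hEq : 𝒰 = n
        · exfalso
          have hcast : (𝒰:ℝ) - (n:ℝ) = 0 := by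
            have : (𝒰:ℝ) = (n:ℝ) := by exact_mod_cast hEq
            linarith
          rw [hcast, div_zero] at hlt
          linarith
        · have hgt : n < 𝒰 := lt_of_le_of_ne hUn (Ne.symm hEq)
          have hB : (0:ℝ) < (𝒰:ℝ) - (n:ℝ) := by
            have : (n:ℝ) < (𝒰:ℝ) := by exact_mod_cast hgt
            linarith
          have h2 := (lt_div_iff₀ hB).1 hlt
          rw [hc1]; nlinarith
    have := engine 1 (Or.inl rfl) (by linarith)
    refine this.mono fun p hp => ?_
    linarith [hp]
  · rintro ⟨hne, hgt⟩
    have hc1pos : 0 < c1 := by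
      have hgtn : n < 𝒰 := lt_of_le_of_ne hUn (Ne.symm hne)
      have hB : (0:ℝ) < (𝒰:ℝ) - (n:ℝ) := by
        have : (n:ℝ) < (𝒰:ℝ) := by exact_mod_cast hgtn
        linarith
      have h2 := (div_lt_iff₀ hB).1 hgt
      rw [hc1]; nlinarith
    have := engine (-1) (Or.inr rfl) (by linarith)
    refine this.mono fun p hp => ?_
    show β Uk ≤ β p
    nlinarith [hp]
end

section
/- Let ψ be a pattern of length n with multiplicities μ_1,…,μ_m (m ≥ 2), let k ≥ m and M ≥ 1 be integers, let ξ ∈ ℝ^k be a unit vector with Σ_{j=1}^k ξ_j = 0, and set p(t) = U_k + tξ and G_{k,M}(t) = β_{k,M}^ψ(p(t)) for t in a sufficiently small interval around 0. Then G_{k,M}'(0) = 0 and G_{k,M}''(0) = [(M!)^{2k−k²}]^{1/M} (Z_{k,M})^{1/M} k^{1−n} [ (k²/(k−1)²)·(Var_{k,M}(a_{1,1})/M)·( k Σ_{i=1}^m μ_i² − n² ) − n ], where Var_{k,M}(a_{1,1}) is the variance of the entry a_{1,1} of a random matrix A ∈ A_{k,M} distributed according to Q_{k,M}. -/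
open Finset

namespace GkMAux

open Finset


variable {k : ℕ}

noncomputable def Pf (c : ℝ) (b : Fin k → ℝ) (D : Fin k → ℕ) (t : ℝ) : ℝ :=
  ∏ j, (c + t * b j) ^ D j

def dec (D : Fin k → ℕ) (i : Fin k) : Fin k → ℕ := Function.update D i (D i - 1)

lemma Pf_update (c : ℝ) (b : Fin k → ℝ) (D : Fin k → ℕ) (i : Fin k) (v : ℕ) (t : ℝ) :
    Pf c b (Function.update D i v) t
      = (c + t * b i) ^ v * ∏ j ∈ univ.erase i, (c + t * b j) ^ D j := by
  rw [Pf, ← Finset.mul_prod_erase univ _ (mem_univ i), Function.update_self]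
  congr 1
  exact Finset.prod_congr rfl fun j hj => by
    rw [Function.update_of_ne (Finset.ne_of_mem_erase hj)]

lemma hasDerivAt_Pf (c : ℝ) (b : Fin k → ℝ) (D : Fin k → ℕ) (t : ℝ) :
    HasDerivAt (Pf c b D) (∑ i, (D i : ℝ) * b i * Pf c b (dec D i) t) t := by
  have h : ∀ j ∈ (univ : Finset (Fin k)),
      HasDerivAt (fun s : ℝ => (c + s * b j) ^ D j)
        ((D j : ℝ) * (c + t * b j) ^ (D j - 1) * b j) t := by
    intro j _
    have h1 : HasDerivAt (fun s : ℝ => c + s * b j) (b j) t := by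
      simpa using ((hasDerivAt_id t).mul_const (b j)).const_add c
    exact h1.pow (D j)
  have H := HasDerivAt.fun_finsetProd h
  have hval : ∑ i ∈ univ, (∏ j ∈ univ.erase i, (c + t * b j) ^ D j) •
        ((D i : ℝ) * (c + t * b i) ^ (D i - 1) * b i)
      = ∑ i, (D i : ℝ) * b i * Pf c b (dec D i) t := by
    refine Finset.sum_congr rfl fun i _ => ?_
    rw [dec, Pf_update, smul_eq_mul]
    ring
  rw [hval] at H
  exact H

lemma Pf_zero (c : ℝ) (b : Fin k → ℝ) (D : Fin k → ℕ) :
    Pf c b D 0 = c ^ (∑ j, D j) := by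
  simp [Pf, Finset.prod_pow_eq_pow_sum]

lemma sum_dec (D : Fin k → ℕ) (i : Fin k) (h : 1 ≤ D i) :
    ∑ j, dec D i j = (∑ j, D j) - 1 := by
  have h1 : dec D i i + ∑ j ∈ univ.erase i, dec D i j = ∑ j, dec D i j :=
    Finset.add_sum_erase univ _ (mem_univ i)
  have h2 : D i + ∑ j ∈ univ.erase i, D j = ∑ j, D j :=
    Finset.add_sum_erase univ _ (mem_univ i)
  have h3 : ∑ j ∈ univ.erase i, dec D i j = ∑ j ∈ univ.erase i, D j :=
    Finset.sum_congr rfl fun j hj => by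
      rw [dec, Function.update_of_ne (Finset.ne_of_mem_erase hj)]
  have h4 : dec D i i = D i - 1 := by rw [dec, Function.update_self]
  omega

lemma sum_dec_mul (D : Fin k → ℕ) (b : Fin k → ℝ) (i : Fin k) (h : 1 ≤ D i) :
    ∑ j, (dec D i j : ℝ) * b j = (∑ j, (D j : ℝ) * b j) - b i := by
  have h1 : (dec D i i : ℝ) * b i + ∑ j ∈ univ.erase i, (dec D i j : ℝ) * b j
      = ∑ j, (dec D i j : ℝ) * b j :=
    Finset.add_sum_erase univ (fun j => (dec D i j : ℝ) * b j) (mem_univ i)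
  have h2 : (D i : ℝ) * b i + ∑ j ∈ univ.erase i, (D j : ℝ) * b j
      = ∑ j, (D j : ℝ) * b j :=
    Finset.add_sum_erase univ (fun j => (D j : ℝ) * b j) (mem_univ i)
  have h3 : ∑ j ∈ univ.erase i, (dec D i j : ℝ) * b j
      = ∑ j ∈ univ.erase i, (D j : ℝ) * b j :=
    Finset.sum_congr rfl fun j hj => by
      rw [dec, Function.update_of_ne (Finset.ne_of_mem_erase hj)]
  have h4 : (dec D i i : ℝ) = (D i : ℝ) - 1 := by
    rw [dec, Function.update_self, Nat.cast_sub h, Nat.cast_one]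
  rw [← h1, h3, h4, ← h2]
  ring

lemma Pderiv_zero (c : ℝ) (b : Fin k → ℝ) (D : Fin k → ℕ) :
    ∑ i, (D i : ℝ) * b i * Pf c b (dec D i) 0
      = (∑ i, (D i : ℝ) * b i) * c ^ ((∑ j, D j) - 1) := by
  rw [Finset.sum_mul]
  refine Finset.sum_congr rfl fun i _ => ?_
  rcases Nat.eq_zero_or_pos (D i) with h | h
  · simp [h]
  · rw [Pf_zero, sum_dec D i h]

lemma hasDerivAt_P1 (c : ℝ) (b : Fin k → ℝ) (D : Fin k → ℕ) :
    HasDerivAt (fun t => ∑ i, (D i : ℝ) * b i * Pf c b (dec D i) t)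
      (((∑ i, (D i : ℝ) * b i) ^ 2 - ∑ i, (D i : ℝ) * b i ^ 2) * c ^ ((∑ j, D j) - 2))
      0 := by
  have h : ∀ i ∈ (univ : Finset (Fin k)),
      HasDerivAt (fun t => (D i : ℝ) * b i * Pf c b (dec D i) t)
        ((D i : ℝ) * b i * ((((∑ j, (D j : ℝ) * b j) - b i)) * c ^ ((∑ j, D j) - 2))) 0 := by
    intro i _
    rcases Nat.eq_zero_or_pos (D i) with h0 | h0
    · simpa [h0] using hasDerivAt_const (0 : ℝ) (0 : ℝ)
    · have H := (hasDerivAt_Pf c b (dec D i) 0).const_mul ((D i : ℝ) * b i)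
      rw [Pderiv_zero, sum_dec_mul D b i h0, sum_dec D i h0,
        show (∑ j, D j) - 1 - 1 = (∑ j, D j) - 2 by omega] at H
      exact H
  have H := HasDerivAt.fun_sum h
  have hval : ∑ i ∈ univ, (D i : ℝ) * b i * ((((∑ j, (D j : ℝ) * b j) - b i))
        * c ^ ((∑ j, D j) - 2))
      = ((∑ i, (D i : ℝ) * b i) ^ 2 - ∑ i, (D i : ℝ) * b i ^ 2)
        * c ^ ((∑ j, D j) - 2) := by
    have e1 : ∀ i : Fin k, (D i : ℝ) * b i * ((((∑ j, (D j : ℝ) * b j) - b i))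
          * c ^ ((∑ j, D j) - 2))
        = ((D i : ℝ) * b i * (∑ j, (D j : ℝ) * b j) - (D i : ℝ) * b i ^ 2)
          * c ^ ((∑ j, D j) - 2) := fun i => by ring
    rw [Finset.sum_congr rfl fun i _ => e1 i, ← Finset.sum_mul,
      Finset.sum_sub_distrib, ← Finset.sum_mul]
    ring
  rw [hval] at H
  exact H

lemma exists_perm_pair {α : Type*} [DecidableEq α] {a b c d : α} (hab : a ≠ b) (hcd : c ≠ d) :
    ∃ π : Equiv.Perm α, π a = c ∧ π b = d := by
  refine ⟨(Equiv.swap (Equiv.swap a c b) d) * (Equiv.swap a c), ?_, ?_⟩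
  · have hc1 : Equiv.swap a c b ≠ c := fun h =>
      hab ((Equiv.swap a c).injective (h.trans (Equiv.swap_apply_left a c).symm)).symm
    simp only [Equiv.Perm.mul_apply, Equiv.swap_apply_left]
    exact Equiv.swap_apply_of_ne_of_ne (Ne.symm hc1) hcd
  · simp [Equiv.Perm.mul_apply]


open Finset


lemma sym_sum {k M : ℕ} (𝒜 : Finset (Fin k → Fin k → Fin (M + 1)))
    (h𝒜 : 𝒜 = Finset.univ.filter fun A =>
      (∀ i, ∑ j, (A i j : ℕ) = M) ∧ ∀ j, ∑ i, (A i j : ℕ) = M)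
    (w : (Fin k → Fin k → Fin (M + 1)) → ℝ)
    (hw : ∀ A, w A = ∏ i, ∏ j,
      ((M - (A i j : ℕ)).factorial : ℝ) / ((A i j : ℕ).factorial : ℝ))
    (σ τ : Equiv.Perm (Fin k)) (g : (Fin k → Fin k → Fin (M + 1)) → ℝ) :
    ∑ A ∈ 𝒜, w A * g (fun i j => A (σ i) (τ j)) = ∑ A ∈ 𝒜, w A * g A := by
  have hmap : ∀ (σ τ : Equiv.Perm (Fin k)), ∀ A ∈ 𝒜,
      (fun i j => A (σ i) (τ j)) ∈ 𝒜 := by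
    intro σ τ A hA
    rw [h𝒜, Finset.mem_filter] at hA ⊢
    obtain ⟨-, h1, h2⟩ := hA
    refine ⟨mem_univ _, fun i => ?_, fun j => ?_⟩
    · rw [Fintype.sum_equiv τ _ (fun j => (A (σ i) j : ℕ)) (fun j => rfl)]
      exact h1 (σ i)
    · rw [Fintype.sum_equiv σ _ (fun i => (A i (τ j) : ℕ)) (fun i => rfl)]
      exact h2 (τ j)
  have hwinv : ∀ A, w (fun i j => A (σ i) (τ j)) = w A := by
    intro A
    rw [hw, hw]
    exact Fintype.prod_equiv σ _ _ fun i => Fintype.prod_equiv τ _ _ fun j => rfl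
  refine Finset.sum_nbij' (i := fun A => fun i j => A (σ i) (τ j))
    (j := fun B => fun i j => B (σ⁻¹ i) (τ⁻¹ j))
    (fun A hA => hmap σ τ A hA) (fun B hB => hmap σ⁻¹ τ⁻¹ B hB) ?_ ?_ ?_
  · intro A _; funext i j; simp
  · intro B _; funext i j; simp
  · intro A _
    rw [hwinv A]

lemma quad_sum {k : ℕ} (ξ μR : Fin k → ℝ) (W : Fin k → Fin k → Fin k → Fin k → ℝ)
    (Sd Sr Sc Sq nR Preal : ℝ)
    (hd : ∀ i j, W i j i j = Sd)
    (hr : ∀ i j j', j ≠ j' → W i j i j' = Sr)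
    (hc : ∀ i i' j, i ≠ i' → W i j i' j = Sc)
    (hq : ∀ i i' j j', i ≠ i' → j ≠ j' → W i j i' j' = Sq)
    (hμs : ∑ j, μR j = nR) (hμq : ∑ j, μR j ^ 2 = Preal)
    (hξ1 : ∑ i, ξ i ^ 2 = 1) (hξ0 : ∑ i, ξ i = 0) :
    ∑ i, ∑ i', ξ i * ξ i' * (∑ j, ∑ j', μR j * μR j' * W i j i' j')
      = (Preal * Sd + (nR ^ 2 - Preal) * Sr)
        - (Preal * Sc + (nR ^ 2 - Preal) * Sq) := by
  have inner : ∀ (i i' : Fin k) (X Y : ℝ), (∀ j, W i j i' j = X) →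
      (∀ j j', j ≠ j' → W i j i' j' = Y) →
      ∑ j, ∑ j', μR j * μR j' * W i j i' j'
        = Preal * X + (nR ^ 2 - Preal) * Y := by
    intro i i' X Y hX hY
    have hj : ∀ j : Fin k, ∑ j', μR j * μR j' * W i j i' j'
        = μR j ^ 2 * X + μR j * (nR - μR j) * Y := by
      intro j
      rw [← Finset.add_sum_erase univ (fun j' => μR j * μR j' * W i j i' j') (mem_univ j),
        hX j,
        Finset.sum_congr rfl (fun j' hj' => by
          rw [hY j j' (Ne.symm (Finset.ne_of_mem_erase hj'))])]
      have he : ∑ j' ∈ univ.erase j, μR j' = nR - μR j := by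
        have h0 := Finset.add_sum_erase univ μR (mem_univ j)
        rw [hμs] at h0
        linarith
      have h1 : ∑ j' ∈ univ.erase j, μR j * μR j' * Y
          = μR j * (nR - μR j) * Y := by
        rw [show (fun j' => μR j * μR j' * Y) = fun j' => (μR j * Y) * μR j' from
          funext fun j' => by ring]
        rw [← Finset.mul_sum, he]
        ring
      rw [h1]
      ring
    rw [Finset.sum_congr rfl fun j _ => hj j, Finset.sum_add_distrib,
      ← Finset.sum_mul, hμq]
    have h2 : ∑ j, μR j * (nR - μR j) * Y = (nR ^ 2 - Preal) * Y := by
      rw [← Finset.sum_mul]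
      congr 1
      rw [Finset.sum_congr rfl fun j _ =>
        (by ring : μR j * (nR - μR j) = nR * μR j - μR j ^ 2),
        Finset.sum_sub_distrib, ← Finset.mul_sum, hμs, hμq]
      ring
    rw [h2]
  have houter : ∀ i : Fin k,
      ∑ i', ξ i * ξ i' * (∑ j, ∑ j', μR j * μR j' * W i j i' j')
      = ξ i ^ 2 * (Preal * Sd + (nR ^ 2 - Preal) * Sr)
        + (ξ i * (0 - ξ i)) * (Preal * Sc + (nR ^ 2 - Preal) * Sq) := by
    intro i
    rw [← Finset.add_sum_erase univ
        (fun i' => ξ i * ξ i' * (∑ j, ∑ j', μR j * μR j' * W i j i' j'))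
        (mem_univ i),
      inner i i Sd Sr (fun j => hd i j) (fun j j' h => hr i j j' h),
      Finset.sum_congr rfl (fun i' hi' => by
        rw [inner i i' Sc Sq (fun j => hc i i' j (Ne.symm (Finset.ne_of_mem_erase hi')))
          (fun j j' hj => hq i i' j j' (Ne.symm (Finset.ne_of_mem_erase hi')) hj)])]
    have he : ∑ i' ∈ univ.erase i, ξ i' = 0 - ξ i := by
      have h0 := Finset.add_sum_erase univ ξ (mem_univ i)
      rw [hξ0] at h0
      linarith
    have h1 : ∑ i' ∈ univ.erase i, ξ i * ξ i' * (Preal * Sc + (nR ^ 2 - Preal) * Sq)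
        = (ξ i * (0 - ξ i)) * (Preal * Sc + (nR ^ 2 - Preal) * Sq) := by
      rw [show (fun i' => ξ i * ξ i' * (Preal * Sc + (nR ^ 2 - Preal) * Sq))
          = fun i' => (ξ i * (Preal * Sc + (nR ^ 2 - Preal) * Sq)) * ξ i' from
        funext fun i' => by ring]
      rw [← Finset.mul_sum, he]
      ring
    rw [h1]
    ring
  rw [Finset.sum_congr rfl fun i _ => houter i, Finset.sum_add_distrib,
    ← Finset.sum_mul, hξ1]
  have h3 : ∑ i, (ξ i * (0 - ξ i)) * (Preal * Sc + (nR ^ 2 - Preal) * Sq)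
      = -1 * (Preal * Sc + (nR ^ 2 - Preal) * Sq) := by
    rw [← Finset.sum_mul]
    congr 1
    rw [Finset.sum_congr rfl fun i _ => (by ring : ξ i * (0 - ξ i) = -(ξ i ^ 2))]
    rw [Finset.sum_neg_distrib, hξ1]
  rw [h3]
  ring


open Finset


lemma sum_mue {k m : ℕ} (hk : m ≤ k) (hm : 0 < m) (μ : Fin m → ℕ) (μe : Fin k → ℕ)
    (hμe : ∀ j : Fin k, μe j = if h : (j : ℕ) < m then μ ⟨j, h⟩ else 0)
    (f : ℕ → ℕ) (hf : f 0 = 0) :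
    ∑ j : Fin k, f (μe j) = ∑ i : Fin m, f (μ i) := by
  have h1 : ∑ j : Fin k, f (μe j)
      = ∑ j ∈ univ.filter (fun j : Fin k => (j : ℕ) < m), f (μe j) :=
    (Finset.sum_subset (Finset.filter_subset _ _) (fun j _ hj => by
      rw [hμe j, dif_neg (by simpa using hj)]; exact hf)).symm
  rw [h1]
  refine Finset.sum_nbij'
    (i := fun j => if h : (j : ℕ) < m then (⟨j, h⟩ : Fin m) else ⟨0, hm⟩)
    (j := fun i => (⟨(i : ℕ), lt_of_lt_of_le i.2 hk⟩ : Fin k)) ?_ ?_ ?_ ?_ ?_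
  · intro a _; exact mem_univ _
  · intro b _; simp [b.2]
  · intro a ha
    have haa : (a : ℕ) < m := by simpa using ha
    simp [haa]
  · intro b _
    simp [b.2]
  · intro a ha
    have haa : (a : ℕ) < m := by simpa using ha
    rw [hμe a, dif_pos haa]; simp [haa]

end GkMAux

set_option maxHeartbeats 2000000 in
open GkMAux in
/-- **Lemma 1.** With G_{k,M}(t) = β_{k,M}^ψ(U_k + tξ) for a unit vector ξ with
Σ ξ_j = 0, one has G_{k,M}'(0) = 0 and
G_{k,M}''(0) = [(M!)^{2k−k²}]^{1/M} (Z_{k,M})^{1/M} k^{1−n}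
  [ (k²/(k−1)²) · (Var_{k,M}(a_{1,1})/M) · (kΣμᵢ² − n²) − n ]. -/
theorem GkM_derivatives_at_zero
    (n m : ℕ) (hm : 2 ≤ m) (hmn : m ≤ n)
    (μ : Fin m → ℕ) (hμpos : ∀ i, 0 < μ i) (hμsum : ∑ i, μ i = n)
    (k M : ℕ) (hk : m ≤ k) (hM : 1 ≤ M)
    (μe : Fin k → ℕ)
    (hμe : ∀ j : Fin k, μe j = if h : (j : ℕ) < m then μ ⟨j, h⟩ else 0)
    (𝒜 : Finset (Fin k → Fin k → Fin (M + 1)))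
    (h𝒜 : 𝒜 = Finset.univ.filter fun A =>
      (∀ i, ∑ j, (A i j : ℕ) = M) ∧ ∀ j, ∑ i, (A i j : ℕ) = M)
    (w : (Fin k → Fin k → Fin (M + 1)) → ℝ)
    (hw : ∀ A, w A = ∏ i, ∏ j,
      ((M - (A i j : ℕ)).factorial : ℝ) / ((A i j : ℕ).factorial : ℝ))
    (Z : ℝ) (hZ : Z = ∑ A ∈ 𝒜, w A)
    (E Var : ℝ)
    (hE : E = ∑ A ∈ 𝒜,
      ((A ⟨0, by omega⟩ ⟨0, by omega⟩ : ℕ) : ℝ) * (w A / Z))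
    (hVar : Var = ∑ A ∈ 𝒜,
      (((A ⟨0, by omega⟩ ⟨0, by omega⟩ : ℕ) : ℝ) - E) ^ 2 * (w A / Z))
    (ξ : Fin k → ℝ) (hξnorm : ∑ j, ξ j ^ 2 = 1) (hξsum : ∑ j, ξ j = 0)
    (G : ℝ → ℝ)
    (hG : ∀ t, G t = ((M.factorial : ℝ) ^ (2 * (k : ℤ) - (k : ℤ) ^ 2) *
      ∑ A ∈ 𝒜, (∏ i, ∏ j, ((k : ℝ)⁻¹ + t * ξ i) ^ (μe j * (A i j : ℕ))) * w A)
        ^ ((1 : ℝ) / M)) :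
    deriv G 0 = 0 ∧
    deriv (deriv G) 0 =
      ((M.factorial : ℝ) ^ (2 * (k : ℤ) - (k : ℤ) ^ 2)) ^ ((1 : ℝ) / M) *
        Z ^ ((1 : ℝ) / M) * (k : ℝ) ^ (1 - (n : ℤ)) *
        ((k : ℝ) ^ 2 / ((k : ℝ) - 1) ^ 2 * (Var / M) *
            ((k : ℝ) * ∑ i, (μ i : ℝ) ^ 2 - (n : ℝ) ^ 2) - n) := by
  classical
  have hk2 : 2 ≤ k := hm.trans hk
  have hn2 : 2 ≤ n := hm.trans hmn
  have hkR2 : (2 : ℝ) ≤ (k : ℝ) := by exact_mod_cast hk2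
  have hkpos : (0 : ℝ) < (k : ℝ) := by linarith
  have hkne : (k : ℝ) ≠ 0 := ne_of_gt hkpos
  have hk1pos : (0 : ℝ) < (k : ℝ) - 1 := by linarith
  have hk1ne : (k : ℝ) - 1 ≠ 0 := ne_of_gt hk1pos
  have hMR : (0 : ℝ) < (M : ℝ) := by exact_mod_cast hM
  have hMne : (M : ℝ) ≠ 0 := ne_of_gt hMR
  set c : ℝ := (k : ℝ)⁻¹ with hcdef
  have hcpos : 0 < c := by rw [hcdef]; positivity
  -- membership facts
  have hmem : ∀ A ∈ 𝒜, (∀ i, ∑ j, (A i j : ℕ) = M) ∧ (∀ j, ∑ i, (A i j : ℕ) = M) := by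
    intro A hA
    rw [h𝒜, Finset.mem_filter] at hA
    exact hA.2
  have hwpos : ∀ A, 0 < w A := by
    intro A
    rw [hw]
    refine Finset.prod_pos fun i _ => Finset.prod_pos fun j _ => ?_
    have h1 : (0 : ℝ) < ((M - (A i j : ℕ)).factorial : ℝ) := by
      exact_mod_cast (M - (A i j : ℕ)).factorial_pos
    have h2 : (0 : ℝ) < (((A i j : ℕ)).factorial : ℝ) := by
      exact_mod_cast ((A i j : ℕ)).factorial_pos
    positivity
  have h𝒜ne : 𝒜.Nonempty := by
    refine ⟨fun i j => if i = j then (⟨M, Nat.lt_succ_self M⟩ : Fin (M + 1))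
      else ⟨0, Nat.succ_pos M⟩, ?_⟩
    rw [h𝒜, Finset.mem_filter]
    refine ⟨mem_univ _, fun i => ?_, fun j => ?_⟩
    · simp [apply_ite (Fin.val (n := M + 1))]
    · simp [apply_ite (Fin.val (n := M + 1))]
  have hZpos : 0 < Z := by
    rw [hZ]
    exact Finset.sum_pos (fun A _ => hwpos A) h𝒜ne
  have hZne : Z ≠ 0 := ne_of_gt hZpos
  -- μe sums
  have hsumN : ∑ j : Fin k, μe j = n := by
    rw [sum_mue hk (by omega) μ μe hμe (fun x => x) rfl]
    exact hμsum
  have hsqN : ∑ j : Fin k, (μe j) ^ 2 = ∑ i : Fin m, (μ i) ^ 2 :=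
    sum_mue hk (by omega) μ μe hμe (fun x => x ^ 2) (by norm_num)
  have hnR : ∑ j : Fin k, ((μe j : ℕ) : ℝ) = (n : ℝ) := by exact_mod_cast hsumN
  have hPrealR : ∑ j : Fin k, ((μe j : ℕ) : ℝ) ^ 2 = ∑ i : Fin m, ((μ i : ℕ) : ℝ) ^ 2 := by
    exact_mod_cast hsqN
  -- exponent family
  set EA : (Fin k → Fin k → Fin (M + 1)) → Fin k → ℕ :=
    fun A i => ∑ j, μe j * (A i j : ℕ) with hEAdef
  have hEA_cast : ∀ A i, ((EA A i : ℕ) : ℝ) = ∑ j, ((μe j : ℕ) : ℝ) * ((A i j : ℕ) : ℝ) := by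
    intro A i
    rw [hEAdef]
    push_cast
    rfl
  have hEAsum : ∀ A ∈ 𝒜, ∑ i, EA A i = n * M := by
    intro A hA
    rw [hEAdef]
    calc ∑ i, ∑ j, μe j * (A i j : ℕ) = ∑ j, ∑ i, μe j * (A i j : ℕ) := Finset.sum_comm
      _ = ∑ j, μe j * M := by
          refine Finset.sum_congr rfl fun j _ => ?_
          rw [← Finset.mul_sum, (hmem A hA).2 j]
      _ = (∑ j, μe j) * M := by rw [Finset.sum_mul]
      _ = n * M := by rw [hsumN]
  have hnM2 : 2 ≤ n * M := le_trans hn2 (Nat.le_mul_of_pos_right n (by omega))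
  -- special indices
  have hk0 : 0 < k := by omega
  have hk1 : 1 < k := by omega
  set i0 : Fin k := ⟨0, hk0⟩ with hi0def
  set i1 : Fin k := ⟨1, hk1⟩ with hi1def
  have hi01 : i0 ≠ i1 := by
    rw [hi0def, hi1def]
    simp [Fin.ext_iff]
  -- moments
  set S1 : ℝ := ∑ A ∈ 𝒜, w A * ((A i0 i0 : ℕ) : ℝ) with hS1def
  set Sd : ℝ := ∑ A ∈ 𝒜, w A * (((A i0 i0 : ℕ) : ℝ) * ((A i0 i0 : ℕ) : ℝ)) with hSddef
  set Sr : ℝ := ∑ A ∈ 𝒜, w A * (((A i0 i0 : ℕ) : ℝ) * ((A i0 i1 : ℕ) : ℝ)) with hSrdef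
  set Sc : ℝ := ∑ A ∈ 𝒜, w A * (((A i0 i0 : ℕ) : ℝ) * ((A i1 i0 : ℕ) : ℝ)) with hScdef
  set Sq : ℝ := ∑ A ∈ 𝒜, w A * (((A i0 i0 : ℕ) : ℝ) * ((A i1 i1 : ℕ) : ℝ)) with hSqdef
  have hsymm := sym_sum 𝒜 h𝒜 w hw
  have m1 : ∀ i j : Fin k, ∑ A ∈ 𝒜, w A * ((A i j : ℕ) : ℝ) = S1 := by
    intro i j
    rw [hS1def]
    have h := hsymm (Equiv.swap i0 i) (Equiv.swap i0 j)
      (fun A => ((A i0 i0 : ℕ) : ℝ))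
    simpa using h
  have m2 : ∀ i j : Fin k, ∑ A ∈ 𝒜, w A * (((A i j : ℕ) : ℝ) * ((A i j : ℕ) : ℝ)) = Sd := by
    intro i j
    rw [hSddef]
    have h := hsymm (Equiv.swap i0 i) (Equiv.swap i0 j)
      (fun A => ((A i0 i0 : ℕ) : ℝ) * ((A i0 i0 : ℕ) : ℝ))
    simpa using h
  have mr : ∀ (i j j' : Fin k), j ≠ j' →
      ∑ A ∈ 𝒜, w A * (((A i j : ℕ) : ℝ) * ((A i j' : ℕ) : ℝ)) = Sr := by
    intro i j j' hjj
    rw [hSrdef]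
    obtain ⟨τ, hτ0, hτ1⟩ := exists_perm_pair hi01 hjj
    have h := hsymm (Equiv.swap i0 i) τ
      (fun A => ((A i0 i0 : ℕ) : ℝ) * ((A i0 i1 : ℕ) : ℝ))
    simpa [hτ0, hτ1] using h
  have mc : ∀ (i i' j : Fin k), i ≠ i' →
      ∑ A ∈ 𝒜, w A * (((A i j : ℕ) : ℝ) * ((A i' j : ℕ) : ℝ)) = Sc := by
    intro i i' j hii
    rw [hScdef]
    obtain ⟨σ, hσ0, hσ1⟩ := exists_perm_pair hi01 hii
    have h := hsymm σ (Equiv.swap i0 j)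
      (fun A => ((A i0 i0 : ℕ) : ℝ) * ((A i1 i0 : ℕ) : ℝ))
    simpa [hσ0, hσ1] using h
  have mq : ∀ (i i' j j' : Fin k), i ≠ i' → j ≠ j' →
      ∑ A ∈ 𝒜, w A * (((A i j : ℕ) : ℝ) * ((A i' j' : ℕ) : ℝ)) = Sq := by
    intro i i' j j' hii hjj
    rw [hSqdef]
    obtain ⟨σ, hσ0, hσ1⟩ := exists_perm_pair hi01 hii
    obtain ⟨τ, hτ0, hτ1⟩ := exists_perm_pair hi01 hjj
    have h := hsymm σ τ
      (fun A => ((A i0 i0 : ℕ) : ℝ) * ((A i1 i1 : ℕ) : ℝ))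
    simpa [hσ0, hσ1, hτ0, hτ1] using h
  -- row/column relation machinery
  have hrowrel : ∀ (φ : (Fin k → Fin k → Fin (M + 1)) → ℝ) (i : Fin k),
      ∑ j, ∑ A ∈ 𝒜, w A * (φ A * ((A i j : ℕ) : ℝ))
        = (M : ℝ) * ∑ A ∈ 𝒜, w A * φ A := by
    intro φ i
    rw [Finset.sum_comm, Finset.mul_sum]
    refine Finset.sum_congr rfl fun A hA => ?_
    have hr : ∑ j, ((A i j : ℕ) : ℝ) = (M : ℝ) := by exact_mod_cast (hmem A hA).1 i
    calc ∑ j, w A * (φ A * ((A i j : ℕ) : ℝ))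
        = (w A * φ A) * ∑ j, ((A i j : ℕ) : ℝ) := by
          rw [Finset.mul_sum]
          exact Finset.sum_congr rfl fun _ _ => by ring
      _ = (M : ℝ) * (w A * φ A) := by rw [hr]; ring
  have hcolrel : ∀ (φ : (Fin k → Fin k → Fin (M + 1)) → ℝ) (j : Fin k),
      ∑ i, ∑ A ∈ 𝒜, w A * (φ A * ((A i j : ℕ) : ℝ))
        = (M : ℝ) * ∑ A ∈ 𝒜, w A * φ A := by
    intro φ j
    rw [Finset.sum_comm, Finset.mul_sum]
    refine Finset.sum_congr rfl fun A hA => ?_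
    have hr : ∑ i, ((A i j : ℕ) : ℝ) = (M : ℝ) := by exact_mod_cast (hmem A hA).2 j
    calc ∑ i, w A * (φ A * ((A i j : ℕ) : ℝ))
        = (w A * φ A) * ∑ i, ((A i j : ℕ) : ℝ) := by
          rw [Finset.mul_sum]
          exact Finset.sum_congr rfl fun _ _ => by ring
      _ = (M : ℝ) * (w A * φ A) := by rw [hr]; ring
  have hkS1 : (k : ℝ) * S1 = (M : ℝ) * Z := by
    have h := hrowrel (fun _ => (1 : ℝ)) i0
    simp only [one_mul, mul_one] at h
    rw [Finset.sum_congr rfl (fun j _ => m1 i0 j), Finset.sum_const,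
      Finset.card_univ, Fintype.card_fin, nsmul_eq_mul] at h
    rw [h, hZ]
  have hcard : ((univ.erase i0).card : ℝ) = (k : ℝ) - 1 := by
    rw [Finset.card_erase_of_mem (mem_univ i0), Finset.card_univ, Fintype.card_fin]
    push_cast [Nat.cast_sub (by omega : 1 ≤ k)]
    ring
  have hR2 : Sd + ((k : ℝ) - 1) * Sr = (M : ℝ) * S1 := by
    have h := hrowrel (fun A => ((A i0 i0 : ℕ) : ℝ)) i0
    rw [← Finset.add_sum_erase univ
        (fun j => ∑ A ∈ 𝒜, w A * (((A i0 i0 : ℕ) : ℝ) * ((A i0 j : ℕ) : ℝ)))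
        (mem_univ i0)] at h
    rw [Finset.sum_congr rfl (fun j hj =>
      mr i0 i0 j (Ne.symm (Finset.ne_of_mem_erase hj))), Finset.sum_const,
      nsmul_eq_mul, hcard, m2 i0 i0] at h
    rw [h]
  have hR3 : Sd + ((k : ℝ) - 1) * Sc = (M : ℝ) * S1 := by
    have h := hcolrel (fun A => ((A i0 i0 : ℕ) : ℝ)) i0
    rw [← Finset.add_sum_erase univ
        (fun i => ∑ A ∈ 𝒜, w A * (((A i0 i0 : ℕ) : ℝ) * ((A i i0 : ℕ) : ℝ)))
        (mem_univ i0)] at h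
    rw [Finset.sum_congr rfl (fun i hi =>
      mc i0 i i0 (Ne.symm (Finset.ne_of_mem_erase hi))), Finset.sum_const,
      nsmul_eq_mul, hcard, m2 i0 i0] at h
    rw [h]
  have hR4 : Sc + ((k : ℝ) - 1) * Sq = (M : ℝ) * S1 := by
    have h := hrowrel (fun A => ((A i0 i0 : ℕ) : ℝ)) i1
    rw [← Finset.add_sum_erase univ
        (fun j => ∑ A ∈ 𝒜, w A * (((A i0 i0 : ℕ) : ℝ) * ((A i1 j : ℕ) : ℝ)))
        (mem_univ i0)] at h
    rw [Finset.sum_congr rfl (fun j hj =>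
      mq i0 i1 i0 j hi01 (Ne.symm (Finset.ne_of_mem_erase hj))), Finset.sum_const,
      nsmul_eq_mul, hcard, mc i0 i1 i0 hi01] at h
    rw [h]
  -- E and Var
  have hE' : E = ∑ A ∈ 𝒜, ((A i0 i0 : ℕ) : ℝ) * (w A / Z) := hE
  have hVar' : Var = ∑ A ∈ 𝒜, (((A i0 i0 : ℕ) : ℝ) - E) ^ 2 * (w A / Z) := hVar
  have hEZ : E * Z = S1 := by
    rw [hE', hS1def, Finset.sum_mul]
    refine Finset.sum_congr rfl fun A _ => ?_
    field_simp
  have hZVar : Z * Var = Sd - 2 * E * S1 + E ^ 2 * Z := by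
    have h1 : Z * Var = ∑ A ∈ 𝒜, (((A i0 i0 : ℕ) : ℝ) - E) ^ 2 * w A := by
      rw [hVar', Finset.mul_sum]
      refine Finset.sum_congr rfl fun A _ => ?_
      field_simp
    rw [h1, Finset.sum_congr rfl (fun A _ =>
      (by ring : (((A i0 i0 : ℕ) : ℝ) - E) ^ 2 * w A
        = w A * (((A i0 i0 : ℕ) : ℝ) * ((A i0 i0 : ℕ) : ℝ))
          - 2 * E * (w A * ((A i0 i0 : ℕ) : ℝ)) + E ^ 2 * w A))]
    rw [Finset.sum_add_distrib]
    rw [Finset.sum_sub_distrib]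
    rw [← Finset.mul_sum]
    rw [← Finset.mul_sum]
    rw [← hZ]
  -- explicit values
  have hS1v : S1 = (M : ℝ) * Z / (k : ℝ) := by
    rw [eq_div_iff hkne]
    linarith [hkS1]
  have hSdv : Sd = Z * Var + (M : ℝ) * S1 / (k : ℝ) := by
    have hD : (k : ℝ) * (Z * Var) = (k : ℝ) * Sd - (M : ℝ) * S1 := by
      linear_combination (k : ℝ) * hZVar - E * hkS1 - (M : ℝ) * hEZ + (k : ℝ) * E * hEZ
    field_simp
    linarith [hD]
  have hSrv : Sr = ((M : ℝ) * S1 - Sd) / ((k : ℝ) - 1) := by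
    rw [eq_div_iff hk1ne]
    linarith [hR2]
  have hScv : Sc = ((M : ℝ) * S1 - Sd) / ((k : ℝ) - 1) := by
    rw [eq_div_iff hk1ne]
    linarith [hR3]
  have hSqv : Sq = ((M : ℝ) * S1 - Sc) / ((k : ℝ) - 1) := by
    rw [eq_div_iff hk1ne]
    linarith [hR4]
  -- abbreviations
  set Preal : ℝ := ∑ i : Fin m, ((μ i : ℕ) : ℝ) ^ 2 with hPrealdef
  set RR : ℝ := (k : ℝ) * Var * ((k : ℝ) * Preal - (n : ℝ) ^ 2) / (((k : ℝ) - 1) ^ 2)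
    - (n : ℝ) * (M : ℝ) / (k : ℝ) with hRRdef
  have hval : (Preal * Sd + ((n : ℝ) ^ 2 - Preal) * Sr)
      - (Preal * Sc + ((n : ℝ) ^ 2 - Preal) * Sq) - (n : ℝ) * S1 = Z * RR := by
    rw [hRRdef, hSqv, hScv, hSrv, hSdv, hS1v]
    field_simp
    ring
  -- linear sums
  have hlin : ∀ v : Fin k → ℝ,
      ∑ A ∈ 𝒜, w A * ∑ i, ((EA A i : ℕ) : ℝ) * v i = (∑ i, v i) * ((n : ℝ) * S1) := by
    intro v
    have h1 : ∀ A ∈ 𝒜, w A * ∑ i, ((EA A i : ℕ) : ℝ) * v i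
        = ∑ i, ∑ j, v i * ((μe j : ℕ) : ℝ) * (w A * ((A i j : ℕ) : ℝ)) := by
      intro A _
      rw [Finset.mul_sum]
      refine Finset.sum_congr rfl fun i _ => ?_
      rw [hEA_cast A i, Finset.sum_mul, Finset.mul_sum]
      exact Finset.sum_congr rfl fun j _ => by ring
    rw [Finset.sum_congr rfl h1, Finset.sum_comm]
    have h2 : ∀ i : Fin k, ∑ A ∈ 𝒜, ∑ j, v i * ((μe j : ℕ) : ℝ) * (w A * ((A i j : ℕ) : ℝ))
        = v i * ((n : ℝ) * S1) := by
      intro i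
      rw [Finset.sum_comm]
      rw [Finset.sum_congr rfl (fun j _ => by
        rw [← Finset.mul_sum, m1 i j])]
      rw [Finset.sum_congr rfl (fun j _ =>
        (by ring : v i * ((μe j : ℕ) : ℝ) * S1 = (v i * S1) * ((μe j : ℕ) : ℝ))),
        ← Finset.mul_sum, hnR]
      ring
    rw [Finset.sum_congr rfl fun i _ => h2 i, ← Finset.sum_mul]
  have hK1 : ∑ A ∈ 𝒜, w A * ∑ i, ((EA A i : ℕ) : ℝ) * ξ i = 0 := by
    rw [hlin ξ, hξsum, zero_mul]
  have hpart2 : ∑ A ∈ 𝒜, w A * ∑ i, ((EA A i : ℕ) : ℝ) * ξ i ^ 2 = (n : ℝ) * S1 := by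
    have h := hlin (fun i => ξ i ^ 2)
    simp only [hξnorm, one_mul] at h
    exact h
  -- quadratic sum
  have hpart1 : ∑ A ∈ 𝒜, w A * (∑ i, ((EA A i : ℕ) : ℝ) * ξ i) ^ 2
      = (Preal * Sd + ((n : ℝ) ^ 2 - Preal) * Sr)
        - (Preal * Sc + ((n : ℝ) ^ 2 - Preal) * Sq) := by
    have hin : ∀ (A : Fin k → Fin k → Fin (M + 1)) (i i' : Fin k),
        ∑ j, ∑ j', ((μe j : ℕ) : ℝ) * ((μe j' : ℕ) : ℝ)
            * (w A * (((A i j : ℕ) : ℝ) * ((A i' j' : ℕ) : ℝ)))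
          = w A * (((EA A i : ℕ) : ℝ) * ((EA A i' : ℕ) : ℝ)) := by
      intro A i i'
      rw [hEA_cast A i, hEA_cast A i', Finset.sum_mul_sum, Finset.mul_sum]
      refine Finset.sum_congr rfl fun j _ => ?_
      rw [Finset.mul_sum]
      exact Finset.sum_congr rfl fun j' _ => by ring
    have hexp : ∀ A ∈ 𝒜, w A * (∑ i, ((EA A i : ℕ) : ℝ) * ξ i) ^ 2
        = ∑ i, ∑ i', ξ i * ξ i' *
            (∑ j, ∑ j', ((μe j : ℕ) : ℝ) * ((μe j' : ℕ) : ℝ)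
              * (w A * (((A i j : ℕ) : ℝ) * ((A i' j' : ℕ) : ℝ)))) := by
      intro A _
      rw [sq, Finset.sum_mul_sum, Finset.mul_sum]
      refine Finset.sum_congr rfl fun i _ => ?_
      rw [Finset.mul_sum]
      refine Finset.sum_congr rfl fun i' _ => ?_
      rw [hin A i i']
      ring
    rw [Finset.sum_congr rfl hexp]
    have hswap : ∑ A ∈ 𝒜, ∑ i, ∑ i', ξ i * ξ i' *
          (∑ j, ∑ j', ((μe j : ℕ) : ℝ) * ((μe j' : ℕ) : ℝ)
            * (w A * (((A i j : ℕ) : ℝ) * ((A i' j' : ℕ) : ℝ))))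
        = ∑ i, ∑ i', ξ i * ξ i' *
            (∑ j, ∑ j', ((μe j : ℕ) : ℝ) * ((μe j' : ℕ) : ℝ)
              * (∑ A ∈ 𝒜, w A * (((A i j : ℕ) : ℝ) * ((A i' j' : ℕ) : ℝ)))) := by
      rw [Finset.sum_comm]
      refine Finset.sum_congr rfl fun i _ => ?_
      rw [Finset.sum_comm]
      refine Finset.sum_congr rfl fun i' _ => ?_
      rw [← Finset.mul_sum]
      congr 1
      rw [Finset.sum_comm]
      refine Finset.sum_congr rfl fun j _ => ?_
      rw [Finset.sum_comm]
      refine Finset.sum_congr rfl fun j' _ => ?_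
      rw [← Finset.mul_sum]
    rw [hswap]
    exact quad_sum ξ (fun j => ((μe j : ℕ) : ℝ))
      (fun i j i' j' => ∑ A ∈ 𝒜, w A * (((A i j : ℕ) : ℝ) * ((A i' j' : ℕ) : ℝ)))
      Sd Sr Sc Sq (n : ℝ) Preal m2 mr mc mq hnR hPrealR hξnorm hξsum
  -- the function F and its derivatives
  set F : ℝ → ℝ := fun t => ∑ A ∈ 𝒜, w A * Pf c ξ (EA A) t with hFdef
  set F1 : ℝ → ℝ := fun t =>
    ∑ A ∈ 𝒜, w A * ∑ i, ((EA A i : ℕ) : ℝ) * ξ i * Pf c ξ (dec (EA A) i) t with hF1def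
  set C : ℝ := (M.factorial : ℝ) ^ (2 * (k : ℤ) - (k : ℤ) ^ 2) with hCdef
  have hCpos : 0 < C := by
    rw [hCdef]
    have hf : (0 : ℝ) < (M.factorial : ℝ) := by exact_mod_cast M.factorial_pos
    positivity
  have hGF : ∀ t, G t = (C * F t) ^ ((1 : ℝ) / M) := by
    intro t
    rw [hG t]
    congr 2
    refine Finset.sum_congr rfl fun A _ => ?_
    rw [mul_comm]
    congr 1
    rw [show Pf c ξ (EA A) t = ∏ i : Fin k, (c + t * ξ i) ^ (EA A i) from rfl]
    exact Finset.prod_congr rfl fun i _ =>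
      Finset.prod_pow_eq_pow_sum univ (fun j => μe j * (A i j : ℕ)) _
  have hF0 : F 0 = c ^ (n * M) * Z := by
    show ∑ A ∈ 𝒜, w A * Pf c ξ (EA A) 0 = _
    rw [hZ, Finset.mul_sum]
    refine Finset.sum_congr rfl fun A hA => ?_
    rw [Pf_zero, hEAsum A hA, mul_comm]
  have hFd : ∀ t, HasDerivAt F (F1 t) t := by
    intro t
    exact HasDerivAt.fun_sum fun A _ => (hasDerivAt_Pf c ξ (EA A) t).const_mul (w A)
  have hF1_0 : F1 0 = 0 := by
    show ∑ A ∈ 𝒜, w A * ∑ i, ((EA A i : ℕ) : ℝ) * ξ i * Pf c ξ (dec (EA A) i) 0 = 0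
    have h1 : ∀ A ∈ 𝒜, w A * ∑ i, ((EA A i : ℕ) : ℝ) * ξ i * Pf c ξ (dec (EA A) i) 0
        = (w A * ∑ i, ((EA A i : ℕ) : ℝ) * ξ i) * c ^ (n * M - 1) := by
      intro A hA
      rw [Pderiv_zero, hEAsum A hA]
      ring
    rw [Finset.sum_congr rfl h1, ← Finset.sum_mul, hK1, zero_mul]
  have hK2sum : ∑ A ∈ 𝒜, w A * ((∑ i, ((EA A i : ℕ) : ℝ) * ξ i) ^ 2
        - ∑ i, ((EA A i : ℕ) : ℝ) * ξ i ^ 2) = Z * RR := by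
    rw [Finset.sum_congr rfl (fun A _ =>
      (by ring : w A * ((∑ i, ((EA A i : ℕ) : ℝ) * ξ i) ^ 2
          - ∑ i, ((EA A i : ℕ) : ℝ) * ξ i ^ 2)
        = w A * (∑ i, ((EA A i : ℕ) : ℝ) * ξ i) ^ 2
          - w A * ∑ i, ((EA A i : ℕ) : ℝ) * ξ i ^ 2)),
      Finset.sum_sub_distrib, hpart1, hpart2]
    exact hval
  have hF2 : HasDerivAt F1 ((Z * RR) * c ^ (n * M - 2)) 0 := by
    have h := HasDerivAt.fun_sum (x := (0 : ℝ)) (u := 𝒜)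
      (A := fun A t => w A * ∑ i, ((EA A i : ℕ) : ℝ) * ξ i * Pf c ξ (dec (EA A) i) t)
      (A' := fun A => w A * (((∑ i, ((EA A i : ℕ) : ℝ) * ξ i) ^ 2
        - ∑ i, ((EA A i : ℕ) : ℝ) * ξ i ^ 2) * c ^ ((∑ j, EA A j) - 2)))
      (fun A _ => (hasDerivAt_P1 c ξ (EA A)).const_mul (w A))
    have h2 : ∀ A ∈ 𝒜, w A * (((∑ i, ((EA A i : ℕ) : ℝ) * ξ i) ^ 2
          - ∑ i, ((EA A i : ℕ) : ℝ) * ξ i ^ 2) * c ^ ((∑ j, EA A j) - 2))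
        = (w A * ((∑ i, ((EA A i : ℕ) : ℝ) * ξ i) ^ 2
          - ∑ i, ((EA A i : ℕ) : ℝ) * ξ i ^ 2)) * c ^ (n * M - 2) := by
      intro A hA
      rw [hEAsum A hA]
      ring
    rw [Finset.sum_congr rfl h2, ← Finset.sum_mul] at h
    rw [Finset.sum_congr rfl (fun A _ =>
      (by ring : w A * ((∑ i, ((EA A i : ℕ) : ℝ) * ξ i) ^ 2
          - ∑ i, ((EA A i : ℕ) : ℝ) * ξ i ^ 2)
        = w A * ((∑ i, ((EA A i : ℕ) : ℝ) * ξ i) ^ 2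
          - ∑ i, ((EA A i : ℕ) : ℝ) * ξ i ^ 2)))] at h
    rw [hK2sum] at h
    exact h
  -- chain rule
  have hFpos0 : 0 < F 0 := by
    rw [hF0]
    positivity
  have hFpos : ∀ᶠ t in nhds (0 : ℝ), 0 < F t := by
    have hcont : ContinuousAt F 0 := (hFd 0).continuousAt
    exact hcont.eventually (eventually_gt_nhds hFpos0)
  have hGd : ∀ᶠ t in nhds (0 : ℝ), deriv G t
      = 1 / (M : ℝ) * (C * F t) ^ ((1 : ℝ) / M - 1) * (C * F1 t) := by
    filter_upwards [hFpos] with t ht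
    have hCF : 0 < C * F t := mul_pos hCpos ht
    have h1 : HasDerivAt (fun s => C * F s) (C * F1 t) t := (hFd t).const_mul C
    have h2 : HasDerivAt (fun x : ℝ => x ^ ((1 : ℝ) / M))
        ((1 : ℝ) / M * (C * F t) ^ ((1 : ℝ) / M - 1)) (C * F t) :=
      Real.hasDerivAt_rpow_const (Or.inl (ne_of_gt hCF))
    have h3 := h2.comp t h1
    have hGfun : G = fun s => (C * F s) ^ ((1 : ℝ) / M) := funext hGF
    rw [hGfun]
    exact h3.deriv
  have hG0 : deriv G 0 = 0 := by
    have h := hGd.self_of_nhds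
    rw [h, hF1_0, mul_zero, mul_zero]
  refine ⟨hG0, ?_⟩
  have hd2 : deriv (deriv G) 0
      = deriv (fun t => 1 / (M : ℝ) * (C * F t) ^ ((1 : ℝ) / M - 1) * (C * F1 t)) 0 :=
    Filter.EventuallyEq.deriv_eq hGd
  have hCF0 : 0 < C * F 0 := mul_pos hCpos hFpos0
  have hu := (((Real.hasDerivAt_rpow_const
      (p := (1 : ℝ) / M - 1) (Or.inl (ne_of_gt hCF0))).comp 0
    ((hFd 0).const_mul C))).const_mul (1 / (M : ℝ))
  rw [hF1_0, mul_zero, mul_zero, mul_zero] at hu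
  have hv : HasDerivAt (fun t => C * F1 t) (C * ((Z * RR) * c ^ (n * M - 2))) 0 :=
    hF2.const_mul C
  have hH := hu.mul hv
  rw [hd2]
  have hfinal : (0 : ℝ) * (C * F1 0) + 1 / (M : ℝ) * (C * F 0) ^ ((1 : ℝ) / M - 1)
        * (C * ((Z * RR) * c ^ (n * M - 2)))
      = C ^ ((1 : ℝ) / M) * Z ^ ((1 : ℝ) / M) * (k : ℝ) ^ (1 - (n : ℤ)) *
        ((k : ℝ) ^ 2 / ((k : ℝ) - 1) ^ 2 * (Var / M) *
          ((k : ℝ) * Preal - (n : ℝ) ^ 2) - n) := by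
    rw [hF0, zero_mul, zero_add]
    rw [Real.mul_rpow hCpos.le (mul_nonneg (by positivity) hZpos.le),
      Real.mul_rpow (by positivity : (0 : ℝ) ≤ c ^ (n * M)) hZpos.le]
    have e1 : C ^ ((1 : ℝ) / M - 1) * C = C ^ ((1 : ℝ) / M) := by
      rw [← Real.rpow_add_one (ne_of_gt hCpos)]
      norm_num
    have e2 : Z ^ ((1 : ℝ) / M - 1) * Z = Z ^ ((1 : ℝ) / M) := by
      rw [← Real.rpow_add_one hZne]
      norm_num
    have e3 : (c ^ (n * M)) ^ ((1 : ℝ) / M - 1) * c ^ (n * M - 2)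
        = (k : ℝ) ^ (1 - (n : ℤ)) * (k : ℝ) := by
      rw [← Real.rpow_natCast c (n * M), ← Real.rpow_natCast c (n * M - 2),
        ← Real.rpow_mul hcpos.le, ← Real.rpow_add hcpos]
      have hE : ((n * M : ℕ) : ℝ) * ((1 : ℝ) / M - 1) + ((n * M - 2 : ℕ) : ℝ)
          = (n : ℝ) - 2 := by
        rw [Nat.cast_sub hnM2]
        push_cast
        field_simp
        ring
      rw [hE, hcdef, Real.inv_rpow hkpos.le, ← Real.rpow_neg hkpos.le]
      rw [show -((n : ℝ) - 2) = (((1 - (n : ℤ)) : ℤ) : ℝ) + 1 by push_cast; ring]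
      rw [Real.rpow_add hkpos, Real.rpow_one, Real.rpow_intCast]
    have e4 : (k : ℝ) * (1 / (M : ℝ) * RR)
        = (k : ℝ) ^ 2 / ((k : ℝ) - 1) ^ 2 * (Var / M) *
          ((k : ℝ) * Preal - (n : ℝ) ^ 2) - (n : ℝ) := by
      rw [hRRdef]
      field_simp
    calc 1 / (M : ℝ) * (C ^ ((1 : ℝ) / M - 1) * ((c ^ (n * M)) ^ ((1 : ℝ) / M - 1)
          * Z ^ ((1 : ℝ) / M - 1))) * (C * ((Z * RR) * c ^ (n * M - 2)))
        = (C ^ ((1 : ℝ) / M - 1) * C) * ((c ^ (n * M)) ^ ((1 : ℝ) / M - 1)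
            * c ^ (n * M - 2)) * (Z ^ ((1 : ℝ) / M - 1) * Z) * (1 / (M : ℝ) * RR) := by
          ring
      _ = C ^ ((1 : ℝ) / M) * ((k : ℝ) ^ (1 - (n : ℤ)) * (k : ℝ)) * Z ^ ((1 : ℝ) / M)
            * (1 / (M : ℝ) * RR) := by rw [e1, e2, e3]
      _ = C ^ ((1 : ℝ) / M) * Z ^ ((1 : ℝ) / M) * (k : ℝ) ^ (1 - (n : ℤ))
            * ((k : ℝ) * (1 / (M : ℝ) * RR)) := by ring
      _ = _ := by rw [e4]
  rw [← hfinal]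
  exact hH.deriv
end

section
/- For every fixed integer k ≥ 3, lim_{M→∞} [(M!)^{2k−k²}]^{1/M} · (Z_{k,M})^{1/M} = (k−1)^{k(k−1)} / k^{k(k−2)}. -/
open Real Filter Finset

section ZkMProof


lemma logfac_lower (n : ℕ) : (n : ℝ) * Real.log n - n ≤ Real.log (n.factorial) := by
  induction n with
  | zero => simp
  | succ m ih =>
    rcases Nat.eq_zero_or_pos m with hm | hm
    · subst hm; simp
    have hm1 : (1:ℝ) ≤ m := by exact_mod_cast hm
    have hmpos : (0:ℝ) < m := by linarith
    have hfac : Real.log ((m+1).factorial) = Real.log (m.factorial) + Real.log (m+1) := by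
      rw [Nat.factorial_succ]
      push_cast
      rw [Real.log_mul (by positivity) (by positivity), add_comm]
    -- need : (m+1) log(m+1) - (m+1) ≤ log m! + log (m+1)
    -- since log m! ≥ m log m - m, suffices (m+1)log(m+1) - 1 ≤ m log m + log(m+1)
    -- i.e. m log(m+1) - m log m ≤ 1, i.e. m * log(1+1/m) ≤ 1
    have key : (m:ℝ) * Real.log (m+1) - (m:ℝ) * Real.log m ≤ 1 := by
      have h1 : Real.log ((m+1)/m) ≤ (m+1)/m - 1 :=
        Real.log_le_sub_one_of_pos (by positivity)
      have h2 : Real.log ((m+1)/m) = Real.log (m+1) - Real.log m :=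
        Real.log_div (by positivity) (by positivity)
      have h3 : ((m:ℝ)+1)/m - 1 = 1/m := by field_simp; ring
      rw [h2, h3] at h1
      have := mul_le_mul_of_nonneg_left h1 (le_of_lt hmpos)
      calc (m:ℝ) * Real.log (m+1) - (m:ℝ) * Real.log m
          = (m:ℝ) * (Real.log (m+1) - Real.log m) := by ring
        _ ≤ (m:ℝ) * (1/m) := this
        _ = 1 := by field_simp
    push_cast at ih ⊢
    rw [hfac]
    push_cast
    nlinarith [ih]

lemma logfac_upper (n : ℕ) :
    Real.log (n.factorial) ≤ (n : ℝ) * Real.log n - n + 1 + Real.log n := by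
  induction n with
  | zero => simp
  | succ m ih =>
    rcases Nat.eq_zero_or_pos m with hm | hm
    · subst hm; simp
    have hm1 : (1:ℝ) ≤ m := by exact_mod_cast hm
    have hmpos : (0:ℝ) < m := by linarith
    have hfac : Real.log ((m+1).factorial) = Real.log (m.factorial) + Real.log (m+1) := by
      rw [Nat.factorial_succ]
      push_cast
      rw [Real.log_mul (by positivity) (by positivity), add_comm]
    -- need: log m! + log(m+1) ≤ (m+1)log(m+1) - (m+1) + 1 + log(m+1)
    -- suffices m log m + 1 + log m ≤ (m+1) log (m+1) - 1 + 1
    -- i.e. (m+1) log m ≤ (m+1) log(m+1) - 1, i.e. 1 ≤ (m+1) log((m+1)/m)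
    have key : (1:ℝ) ≤ ((m:ℝ)+1) * (Real.log (m+1) - Real.log m) := by
      have h1 : Real.log ((m:ℝ)/(m+1)) ≤ (m:ℝ)/(m+1) - 1 :=
        Real.log_le_sub_one_of_pos (by positivity)
      have h2 : Real.log ((m:ℝ)/(m+1)) = Real.log m - Real.log (m+1) :=
        Real.log_div (by positivity) (by positivity)
      have h3 : (m:ℝ)/(m+1) - 1 = -(1/(m+1)) := by field_simp; ring
      rw [h2, h3] at h1
      have h4 : (1:ℝ)/(m+1) ≤ Real.log (m+1) - Real.log m := by linarith
      have := mul_le_mul_of_nonneg_left h4 (by positivity : (0:ℝ) ≤ (m:ℝ)+1)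
      calc (1:ℝ) = ((m:ℝ)+1) * (1/(m+1)) := by field_simp
        _ ≤ _ := this
    rw [hfac]
    push_cast at ih ⊢
    nlinarith [ih]



/-- `vv M a = (M-a)!/a!` as a real number. -/
noncomputable def vv (M a : ℕ) : ℝ := ((M - a).factorial : ℝ) / (a.factorial : ℝ)

lemma vv_pos (M a : ℕ) : 0 < vv M a := by
  unfold vv; positivity

/-- exchange inequality: if `q+2 ≤ p` and `p+q ≤ M` then `vv p * vv q ≤ vv (p-1) * vv (q+1)` -/
lemma vv_exchange {M p q : ℕ} (h1 : q + 2 ≤ p) (h2 : p + q ≤ M) :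
    vv M p * vv M q ≤ vv M (p - 1) * vv M (q + 1) := by
  have hpM : p ≤ M := by omega
  unfold vv
  rw [div_mul_div_comm, div_mul_div_comm, div_le_div_iff₀ (by positivity) (by positivity)]
  have key : (M-p).factorial * (M - q).factorial * ((p - 1).factorial * (q + 1).factorial)
      ≤ (M - (p-1)).factorial * (M - (q+1)).factorial * (p.factorial * q.factorial) := by
    have e1 : M - (p-1) = (M - p) + 1 := by omega
    have e2 : M - q = (M - (q+1)) + 1 := by omega
    have e3 : p = (p - 1) + 1 := by omega
    have hp : p.factorial = ((p-1)+1) * (p - 1).factorial := by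
      rw [← Nat.factorial_succ]; congr 1
    rw [e1, e2, hp]
    rw [Nat.factorial_succ ((M-p)), Nat.factorial_succ (M - (q+1)), Nat.factorial_succ q]
    have core : ((M - (q+1)) + 1) * (q + 1) ≤ ((M - p) + 1) * ((p-1)+1) := by
      zify [show q+1 ≤ M by omega, hpM, show 1 ≤ p by omega]
      nlinarith [mul_nonneg (by omega : (0:ℤ) ≤ (p:ℤ) - q - 1) (by omega : (0:ℤ) ≤ (M:ℤ) - p - q),
        (by omega : ((M:ℤ) - (q+1)) + 1 = M - q), (by omega : ((M:ℤ) - p) + 1 = M - p + 1),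
        (by omega : ((p:ℤ) - 1) + 1 = p)]
    calc (M-p).factorial * (((M-(q+1))+1) * (M-(q+1)).factorial) * ((p-1).factorial * ((q+1)*q.factorial))
        = ((M-(q+1))+1)*(q+1) * ((M-p).factorial * (M-(q+1)).factorial * ((p-1).factorial * q.factorial)) := by ring
      _ ≤ ((M-p)+1)*((p-1)+1) * ((M-p).factorial * (M-(q+1)).factorial * ((p-1).factorial * q.factorial)) := by
          exact Nat.mul_le_mul_right _ core
      _ = ((M-p)+1)*(M-p).factorial * (M-(q+1)).factorial * ((((p-1)+1) * (p-1).factorial) * q.factorial) := by ring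
  exact_mod_cast key


/-- if all values are `f` or `f+1`, with at least one `f`, and sum `M`, the product equals
the near-uniform value. -/
lemma prod_near {k M : ℕ} (hk : 0 < k) (f : ℕ) (a : Fin k → ℕ)
    (h : ∀ j, a j = f ∨ a j = f + 1) (hex : ∃ j, a j = f) (hs : ∑ j, a j = M) :
    ∏ j, vv M (a j) = vv M (M / k + 1) ^ (M % k) * vv M (M / k) ^ (k - M % k) := by
  classical
  set S : Finset (Fin k) := univ.filter (fun j => a j = f + 1) with hS
  have hcard_le : S.card ≤ k := by
    simpa using Finset.card_filter_le univ (fun j => a j = f + 1)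
  have hSlt : S.card < k := by
    obtain ⟨j0, hj0⟩ := hex
    have : j0 ∉ S := by simp [hS, hj0]
    have h1 : S.card < Finset.univ.card := Finset.card_lt_card ⟨Finset.filter_subset _ _, fun hsub => this (hsub (mem_univ j0))⟩
    simpa using h1
  -- the sum equals k*f + S.card
  have hsum : M = k * f + S.card := by
    have h1 : ∀ j, a j = f + (if a j = f + 1 then 1 else 0) := by
      intro j
      rcases h j with h' | h' <;> simp [h']
    have h2 : ∑ j, a j = ∑ j : Fin k, (f + (if a j = f + 1 then 1 else 0)) :=
      Finset.sum_congr rfl (fun j _ => h1 j)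
    rw [Finset.sum_add_distrib, Finset.sum_const, Finset.card_univ, Fintype.card_fin,
      smul_eq_mul] at h2
    rw [Finset.sum_boole] at h2
    rw [← hs, h2, hS]
    norm_cast
  have hdiv : M / k = f ∧ M % k = S.card := by
    constructor
    · rw [hsum]; rw [Nat.mul_add_div hk]; simp [Nat.div_eq_of_lt hSlt]
    · rw [hsum]; rw [Nat.mul_add_mod]; exact Nat.mod_eq_of_lt hSlt
  -- product
  have hprod : ∏ j, vv M (a j) = vv M (f + 1) ^ S.card * vv M f ^ (k - S.card) := by
    rw [← Finset.prod_filter_mul_prod_filter_not univ (fun j => a j = f + 1)]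
    congr 1
    · rw [Finset.prod_congr rfl (fun j hj => ?_), Finset.prod_const, ← hS]
      rw [Finset.mem_filter] at hj
      rw [hj.2]
    · have hcc : (univ.filter (fun j => ¬ a j = f + 1)).card = k - S.card := by
        have := Finset.card_filter_add_card_filter_not (s := (univ : Finset (Fin k)))
          (p := fun j => a j = f + 1)
        simp only [Finset.card_univ, Fintype.card_fin] at this
        have h3 : S.card = #(filter (fun j => a j = f + 1) univ) := by rw [hS]
        omega
      rw [Finset.prod_congr rfl (fun j hj => ?_), Finset.prod_const, hcc]
      rw [Finset.mem_filter] at hj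
      have := h j
      have hne : a j = f := by tauto
      rw [hne]
  rw [hprod, hdiv.1, hdiv.2]

/-- Row bound: any row with sum M has product at most the near-uniform product. -/
lemma row_le {k M : ℕ} (hk : 0 < k) (N : ℕ) (a : Fin k → ℕ)
    (hN : ∑ j, (a j) ^ 2 = N) (hs : ∑ j, a j = M) :
    ∏ j, vv M (a j) ≤ vv M (M / k + 1) ^ (M % k) * vv M (M / k) ^ (k - M % k) := by
  classical
  induction N using Nat.strong_induction_on generalizing a with
  | _ N ih =>
  by_cases hne : ∀ j j', a j ≤ a j' + 1
  · -- near-equal case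
    have hU : (univ : Finset (Fin k)).Nonempty := by
      simp [Finset.univ_nonempty_iff]
      exact Fin.pos_iff_nonempty.mp hk
    obtain ⟨j0, _, hj0min⟩ := Finset.exists_min_image univ a hU
    set m := a j0 with hm
    have hvals : ∀ j, a j = m ∨ a j = m + 1 := by
      intro j
      have h1 : m ≤ a j := hj0min j (mem_univ j)
      have h2 : a j ≤ m + 1 := hne j j0
      omega
    have := prod_near hk m a hvals ⟨j0, rfl⟩ hs
    rw [this]
  · -- exchange case
    push_neg at hne
    obtain ⟨j0, j1, hgt⟩ := hne
    have hj01 : j0 ≠ j1 := by intro h; rw [h] at hgt; omega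
    set p := a j0 with hp
    set q := a j1 with hq
    have hpq : q + 2 ≤ p := by omega
    have hj0mem : j0 ∈ univ.erase j1 := Finset.mem_erase.2 ⟨hj01, mem_univ _⟩
    have key : ∀ (F : Fin k → ℕ), ∑ j, F j = F j1 + (F j0 + ∑ j ∈ (univ.erase j1).erase j0, F j) := by
      intro F
      rw [Finset.add_sum_erase _ _ hj0mem, Finset.add_sum_erase _ _ (mem_univ j1)]
    have keyP : ∀ (F : Fin k → ℝ), ∏ j, F j = F j1 * (F j0 * ∏ j ∈ (univ.erase j1).erase j0, F j) := by
      intro F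
      rw [Finset.mul_prod_erase _ _ hj0mem, Finset.mul_prod_erase _ _ (mem_univ j1)]
    set b : Fin k → ℕ := Function.update (Function.update a j0 (p - 1)) j1 (q + 1) with hb
    have hb1 : b j1 = q + 1 := by simp [hb]
    have hb0 : b j0 = p - 1 := by
      simp [hb, Function.update_of_ne hj01]
    have hbo : ∀ j, j ≠ j0 → j ≠ j1 → b j = a j := by
      intro j h0 h1
      simp [hb, Function.update_of_ne h1, Function.update_of_ne h0]
    have hRsame : ∑ j ∈ (univ.erase j1).erase j0, b j = ∑ j ∈ (univ.erase j1).erase j0, a j := by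
      apply Finset.sum_congr rfl
      intro j hj
      rw [Finset.mem_erase, Finset.mem_erase] at hj
      exact hbo j hj.1 hj.2.1
    have hRsame2 : ∑ j ∈ (univ.erase j1).erase j0, (b j)^2 = ∑ j ∈ (univ.erase j1).erase j0, (a j)^2 := by
      apply Finset.sum_congr rfl
      intro j hj
      rw [Finset.mem_erase, Finset.mem_erase] at hj
      rw [hbo j hj.1 hj.2.1]
    have hsa := key a
    rw [← hp, ← hq] at hsa
    have hsb := key b
    rw [hRsame, hb0, hb1] at hsb
    have hs2a := key (fun j => (a j)^2)
    have hs2b := key (fun j => (b j)^2)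
    rw [← hp, ← hq] at hs2a
    rw [hRsame2, hb0, hb1] at hs2b
    have hpqM : p + q ≤ M := by omega
    have hsb' : ∑ j, b j = M := by omega
    have hlt : ∑ j, (b j)^2 < N := by
      have hsq : (q+1)^2 + (p-1)^2 < q^2 + p^2 := by
        zify [show 1 ≤ p by omega]
        nlinarith [hpq]
      omega
    have hle := ih _ hlt b rfl hsb'
    refine le_trans ?_ hle
    rw [keyP (fun j => vv M (a j)), keyP (fun j => vv M (b j))]
    rw [hb0, hb1, ← hp, ← hq]
    have hRP : ∏ j ∈ (univ.erase j1).erase j0, vv M (b j) = ∏ j ∈ (univ.erase j1).erase j0, vv M (a j) := by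
      apply Finset.prod_congr rfl
      intro j hj
      rw [Finset.mem_erase, Finset.mem_erase] at hj
      rw [hbo j hj.1 hj.2.1]
    rw [hRP]
    have hexch : vv M q * vv M p ≤ vv M (q+1) * vv M (p-1) := by
      have := vv_exchange hpq hpqM
      calc vv M q * vv M p = vv M p * vv M q := by ring
        _ ≤ vv M (p-1) * vv M (q+1) := this
        _ = vv M (q+1) * vv M (p-1) := by ring
    have hRnn : 0 ≤ ∏ j ∈ (univ.erase j1).erase j0, vv M (a j) :=
      Finset.prod_nonneg (fun j _ => (vv_pos M (a j)).le)
    calc vv M q * (vv M p * ∏ j ∈ (univ.erase j1).erase j0, vv M (a j))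
        = (vv M q * vv M p) * ∏ j ∈ (univ.erase j1).erase j0, vv M (a j) := by ring
      _ ≤ (vv M (q+1) * vv M (p-1)) * ∏ j ∈ (univ.erase j1).erase j0, vv M (a j) :=
          mul_le_mul_of_nonneg_right hexch hRnn
      _ = vv M (q+1) * (vv M (p-1) * ∏ j ∈ (univ.erase j1).erase j0, vv M (a j)) := by ring


noncomputable def Wb (k M : ℕ) : ℝ :=
  (vv M (M / k + 1) ^ (M % k) * vv M (M / k) ^ (k - M % k)) ^ k

lemma Wb_pos (k M : ℕ) : 0 < Wb k M := by
  unfold Wb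
  have := vv_pos M (M / k + 1)
  have := vv_pos M (M / k)
  positivity

lemma card_filter_val_lt {k r : ℕ} (hr : r ≤ k) :
    #(univ.filter (fun t : Fin k => (t : ℕ) < r)) = r := by
  have h : univ.filter (fun t : Fin k => (t : ℕ) < r)
      = (Finset.range r).attachFin (fun m hm => lt_of_lt_of_le (Finset.mem_range.mp hm) hr) := by
    ext t
    simp [Finset.mem_attachFin]
  rw [h, Finset.card_attachFin, Finset.card_range]

lemma card_filter_equiv {α β : Type*} [Fintype α] [Fintype β] [DecidableEq β] (e : α ≃ β)
    (p : β → Prop) [DecidablePred p] :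
    #(univ.filter (fun x => p (e x))) = #(univ.filter p) := by
  rw [← Finset.card_image_of_injective (univ.filter fun x => p (e x)) e.injective]
  congr 1
  ext y
  simp only [Finset.mem_image, Finset.mem_filter, Finset.mem_univ, true_and]
  constructor
  · rintro ⟨x, hx, rfl⟩; exact hx
  · intro hy; exact ⟨e.symm y, by simpa using hy, by simp⟩

section construction

variable {k : ℕ} (hk3 : 3 ≤ k) (M : ℕ)

/-- The `ℕ`-valued near-uniform doubly "stochastic" matrix. -/
def aa (i j : Fin k) (_ : 3 ≤ k) : ℕ :=
  haveI : NeZero k := ⟨by omega⟩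
  M / k + (if ((j - i : Fin k) : ℕ) < M % k then 1 else 0)

lemma aa_le (i j : Fin k) : aa M i j hk3 ≤ M := by
  haveI : NeZero k := ⟨by omega⟩
  unfold aa
  have h3 : M / k ≤ M / 3 := Nat.div_le_div_left hk3 (by norm_num)
  split
  · rename_i hc
    have hr1 : 1 ≤ M % k := by omega
    have hrM : M % k ≤ M := Nat.mod_le M k
    omega
  · have := Nat.div_le_self M k
    omega

lemma aa_row_count (i : Fin k) :
    #(univ.filter (fun j : Fin k => aa M i j hk3 = M / k + 1)) = M % k := by
  haveI : NeZero k := ⟨by omega⟩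
  have hmod : M % k < k := Nat.mod_lt M (by omega)
  have heq : (univ.filter (fun j : Fin k => aa M i j hk3 = M / k + 1))
      = univ.filter (fun j : Fin k => ((j - i : Fin k) : ℕ) < M % k) := by
    apply Finset.filter_congr
    intro j _
    unfold aa
    split <;> simp [*]
  rw [heq]
  have := card_filter_equiv (Equiv.subRight i) (fun t : Fin k => (t : ℕ) < M % k)
  simp only [Equiv.subRight_apply] at this
  rw [this, card_filter_val_lt hmod.le]

lemma aa_col_count (j : Fin k) :
    #(univ.filter (fun i : Fin k => aa M i j hk3 = M / k + 1)) = M % k := by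
  haveI : NeZero k := ⟨by omega⟩
  have hmod : M % k < k := Nat.mod_lt M (by omega)
  have heq : (univ.filter (fun i : Fin k => aa M i j hk3 = M / k + 1))
      = univ.filter (fun i : Fin k => ((j - i : Fin k) : ℕ) < M % k) := by
    apply Finset.filter_congr
    intro i _
    unfold aa
    split <;> simp [*]
  rw [heq]
  have := card_filter_equiv (Equiv.subLeft j) (fun t : Fin k => (t : ℕ) < M % k)
  simp only [Equiv.subLeft_apply] at this
  rw [this, card_filter_val_lt hmod.le]

lemma sum_of_vals {f r : ℕ} (b : Fin k → ℕ) (h : ∀ j, b j = f ∨ b j = f + 1)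
    (hcard : #(univ.filter (fun j : Fin k => b j = f + 1)) = r) :
    ∑ j, b j = k * f + r := by
  have h1 : ∀ j, b j = f + (if b j = f + 1 then 1 else 0) := by
    intro j; rcases h j with h' | h' <;> simp [h']
  rw [Finset.sum_congr rfl (fun j _ => h1 j), Finset.sum_add_distrib, Finset.sum_const,
    Finset.card_univ, Fintype.card_fin, smul_eq_mul, Finset.sum_boole, hcard]
  norm_cast

lemma aa_row_sum (i : Fin k) : ∑ j, aa M i j hk3 = M := by
  have hv : ∀ j, aa M i j hk3 = M / k ∨ aa M i j hk3 = M / k + 1 := by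
    intro j; unfold aa; split <;> simp
  rw [sum_of_vals (fun j => aa M i j hk3) hv (aa_row_count hk3 M i)]
  exact Nat.div_add_mod M k

lemma aa_col_sum (j : Fin k) : ∑ i, aa M i j hk3 = M := by
  have hv : ∀ i, aa M i j hk3 = M / k ∨ aa M i j hk3 = M / k + 1 := by
    intro i; unfold aa; split <;> simp
  rw [sum_of_vals (fun i => aa M i j hk3) hv (aa_col_count hk3 M j)]
  exact Nat.div_add_mod M k

lemma aa_row_prod (i : Fin k) :
    ∏ j, vv M (aa M i j hk3) = vv M (M / k + 1) ^ (M % k) * vv M (M / k) ^ (k - M % k) := by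
  haveI : NeZero k := ⟨by omega⟩
  have hmod : M % k < k := Nat.mod_lt M (by omega)
  apply prod_near (by omega) (M / k) _ ?_ ?_ (aa_row_sum hk3 M i)
  · intro j; unfold aa; split <;> simp
  · -- exhibit a j with value M/k : take j := i + (k-1)
    refine ⟨i + ⟨k - 1, by omega⟩, ?_⟩
    unfold aa
    have : (i + ⟨k - 1, by omega⟩ - i : Fin k) = ⟨k - 1, by omega⟩ := by
      rw [add_comm]; exact add_sub_cancel_right _ _
    rw [this]
    simp only [Fin.val_mk]
    rw [if_neg (by omega), Nat.add_zero]

end construction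

/-- lower bound : Wb ≤ Z -/
lemma Z_lower {k : ℕ} (hk3 : 3 ≤ k) (M : ℕ) :
    Wb k M ≤ ∑ A ∈ Finset.univ.filter
        (fun A : Fin k → Fin k → Fin (M + 1) =>
          (∀ i, ∑ j, (A i j : ℕ) = M) ∧ ∀ j, ∑ i, (A i j : ℕ) = M),
        ∏ i, ∏ j, ((M - (A i j : ℕ)).factorial : ℝ) / ((A i j : ℕ).factorial : ℝ) := by
  classical
  set A₀ : Fin k → Fin k → Fin (M + 1) :=
    fun i j => ⟨aa M i j hk3, Nat.lt_succ_of_le (aa_le hk3 M i j)⟩ with hA₀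
  have hmem : A₀ ∈ Finset.univ.filter
      (fun A : Fin k → Fin k → Fin (M + 1) =>
        (∀ i, ∑ j, (A i j : ℕ) = M) ∧ ∀ j, ∑ i, (A i j : ℕ) = M) := by
    rw [Finset.mem_filter]
    exact ⟨Finset.mem_univ _, fun i => aa_row_sum hk3 M i, fun j => aa_col_sum hk3 M j⟩
  have hval : ∏ i, ∏ j, ((M - (A₀ i j : ℕ)).factorial : ℝ) / ((A₀ i j : ℕ).factorial : ℝ)
      = Wb k M := by
    have : ∀ i j : Fin k, ((M - (A₀ i j : ℕ)).factorial : ℝ) / ((A₀ i j : ℕ).factorial : ℝ)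
        = vv M (aa M i j hk3) := fun i j => rfl
    rw [Finset.prod_congr rfl (fun i _ => Finset.prod_congr rfl (fun j _ => this i j))]
    unfold Wb
    rw [Finset.prod_congr rfl (fun i _ => aa_row_prod hk3 M i), Finset.prod_const,
      Finset.card_univ, Fintype.card_fin]
  rw [← hval]
  apply Finset.single_le_sum (f := fun A : Fin k → Fin k → Fin (M+1) =>
    ∏ i, ∏ j, ((M - (A i j : ℕ)).factorial : ℝ) / ((A i j : ℕ).factorial : ℝ)) ?_ hmem
  intro A _
  apply Finset.prod_nonneg; intro i _; apply Finset.prod_nonneg; intro j _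
  positivity

/-- upper bound : Z ≤ (M+1)^(k*k) * Wb -/
lemma Z_upper {k : ℕ} (hk3 : 3 ≤ k) (M : ℕ) :
    (∑ A ∈ Finset.univ.filter
        (fun A : Fin k → Fin k → Fin (M + 1) =>
          (∀ i, ∑ j, (A i j : ℕ) = M) ∧ ∀ j, ∑ i, (A i j : ℕ) = M),
        ∏ i, ∏ j, ((M - (A i j : ℕ)).factorial : ℝ) / ((A i j : ℕ).factorial : ℝ))
      ≤ ((M : ℝ) + 1) ^ (k * k) * Wb k M := by
  classical
  have hterm : ∀ A ∈ Finset.univ.filter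
      (fun A : Fin k → Fin k → Fin (M + 1) =>
        (∀ i, ∑ j, (A i j : ℕ) = M) ∧ ∀ j, ∑ i, (A i j : ℕ) = M),
      ∏ i, ∏ j, ((M - (A i j : ℕ)).factorial : ℝ) / ((A i j : ℕ).factorial : ℝ) ≤ Wb k M := by
    intro A hA
    rw [Finset.mem_filter] at hA
    have hrow := hA.2.1
    have : ∀ i j : Fin k, ((M - (A i j : ℕ)).factorial : ℝ) / ((A i j : ℕ).factorial : ℝ)
        = vv M (A i j : ℕ) := fun i j => rfl
    rw [Finset.prod_congr rfl (fun i _ => Finset.prod_congr rfl (fun j _ => this i j))]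
    unfold Wb
    calc ∏ i, ∏ j, vv M (A i j : ℕ)
        ≤ ∏ _i : Fin k, (vv M (M / k + 1) ^ (M % k) * vv M (M / k) ^ (k - M % k)) := by
          apply Finset.prod_le_prod
          · intro i _; apply Finset.prod_nonneg; intro j _; exact (vv_pos _ _).le
          · intro i _
            exact row_le (by omega) _ (fun j => (A i j : ℕ)) rfl (hrow i)
      _ = (vv M (M / k + 1) ^ (M % k) * vv M (M / k) ^ (k - M % k)) ^ k := by
          rw [Finset.prod_const, Finset.card_univ, Fintype.card_fin]
  calc (∑ A ∈ Finset.univ.filter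
        (fun A : Fin k → Fin k → Fin (M + 1) =>
          (∀ i, ∑ j, (A i j : ℕ) = M) ∧ ∀ j, ∑ i, (A i j : ℕ) = M),
        ∏ i, ∏ j, ((M - (A i j : ℕ)).factorial : ℝ) / ((A i j : ℕ).factorial : ℝ))
      ≤ (Finset.univ.filter
        (fun A : Fin k → Fin k → Fin (M + 1) =>
          (∀ i, ∑ j, (A i j : ℕ) = M) ∧ ∀ j, ∑ i, (A i j : ℕ) = M)).card • Wb k M :=
        Finset.sum_le_card_nsmul _ _ _ hterm
    _ ≤ ((M : ℝ) + 1) ^ (k * k) * Wb k M := by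
        rw [nsmul_eq_mul]
        apply mul_le_mul_of_nonneg_right _ (Wb_pos k M).le
        have h1 : (Finset.univ.filter
            (fun A : Fin k → Fin k → Fin (M + 1) =>
              (∀ i, ∑ j, (A i j : ℕ) = M) ∧ ∀ j, ∑ i, (A i j : ℕ) = M)).card
            ≤ (M + 1) ^ (k * k) := by
          calc _ ≤ (Finset.univ : Finset (Fin k → Fin k → Fin (M+1))).card :=
                Finset.card_filter_le _ _
            _ = (M + 1) ^ (k * k) := by
                simp [Finset.card_univ, pow_mul]
        calc ((Finset.univ.filter
            (fun A : Fin k → Fin k → Fin (M + 1) =>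
              (∀ i, ∑ j, (A i j : ℕ) = M) ∧ ∀ j, ∑ i, (A i j : ℕ) = M)).card : ℝ)
            ≤ (((M + 1) ^ (k * k) : ℕ) : ℝ) := by exact_mod_cast h1
          _ = ((M : ℝ) + 1) ^ (k * k) := by push_cast; ring


lemma log_succ_div_tendsto :
    Filter.Tendsto (fun M : ℕ => Real.log (M + 1) / M) atTop (nhds 0) := by
  have hA : Filter.Tendsto (fun x : ℝ => Real.log x / x) atTop (nhds 0) :=
    Real.isLittleO_log_id_atTop.tendsto_div_nhds_zero
  have hcomp : Filter.Tendsto (fun M : ℕ => ((M : ℝ) + 1)) atTop atTop :=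
    tendsto_atTop_add_const_right _ 1 tendsto_natCast_atTop_atTop
  have h1 : Filter.Tendsto (fun M : ℕ => Real.log (M + 1) / (M + 1)) atTop (nhds 0) :=
    hA.comp hcomp
  have h2 : Filter.Tendsto (fun M : ℕ => ((M : ℝ) + 1) / M) atTop (nhds 1) := by
    have : Filter.Tendsto (fun M : ℕ => 1 + 1 / (M : ℝ)) atTop (nhds (1 + 0)) :=
      tendsto_const_nhds.add tendsto_one_div_atTop_nhds_zero_nat
    rw [add_zero] at this
    apply this.congr'
    filter_upwards [eventually_ge_atTop 1] with M hM
    have hM0 : (M : ℝ) ≠ 0 := by positivity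
    field_simp
  have h3 := h1.mul h2
  rw [zero_mul] at h3
  apply h3.congr'
  filter_upwards [eventually_ge_atTop 1] with M hM
  have hM0 : (M : ℝ) ≠ 0 := by positivity
  field_simp

lemma err_div_tendsto :
    Filter.Tendsto (fun M : ℕ => 1 / (M:ℝ) + Real.log (M + 1) / M) atTop (nhds 0) := by
  have := tendsto_one_div_atTop_nhds_zero_nat.add log_succ_div_tendsto
  rw [add_zero] at this
  exact this

/-- ψ(t) = t log t − t -/
noncomputable def psi (t : ℝ) : ℝ := t * Real.log t - t

lemma psi_continuousAt {α : ℝ} (hα : 0 < α) : ContinuousAt psi α := by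
  unfold psi
  exact (continuousAt_id.mul (Real.continuousAt_log hα.ne')).sub continuousAt_id

lemma D_tendsto (u : ℕ → ℕ) (α : ℝ) (hα : 0 < α) (hle : ∀ᶠ M in atTop, u M ≤ M)
    (h : Filter.Tendsto (fun M : ℕ => (u M : ℝ) / M) atTop (nhds α)) :
    Filter.Tendsto
      (fun M : ℕ => Real.log ((u M).factorial) / M - ((u M : ℝ) / M) * Real.log M)
      atTop (nhds (psi α)) := by
  have hupos : ∀ᶠ M in atTop, 1 ≤ u M := by
    have hgt := h.eventually (eventually_gt_nhds (show α / 2 < α by linarith))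
    filter_upwards [hgt, eventually_ge_atTop 1] with M h1 h2
    by_contra hc
    push_neg at hc
    have hu : u M = 0 := by omega
    rw [hu] at h1
    simp at h1
    linarith
  have hident : ∀ M : ℕ, 1 ≤ M → 1 ≤ u M →
      psi ((u M : ℝ) / M) = ((u M : ℝ) * Real.log (u M) - u M) / M
        - ((u M : ℝ) / M) * Real.log M := by
    intro M hM1 hu1
    have hM0 : (0:ℝ) < M := by exact_mod_cast hM1
    have hu0 : (0:ℝ) < u M := by exact_mod_cast hu1
    unfold psi
    rw [Real.log_div (by positivity) (by positivity)]
    field_simp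
    ring
  have hlow : ∀ᶠ M in atTop, psi ((u M : ℝ) / M) ≤
      Real.log ((u M).factorial) / M - ((u M : ℝ) / M) * Real.log M := by
    filter_upwards [hupos, eventually_ge_atTop 1] with M hu1 hM1
    have hM0 : (0:ℝ) < M := by exact_mod_cast hM1
    rw [hident M hM1 hu1]
    apply sub_le_sub_right
    exact div_le_div_of_nonneg_right (logfac_lower (u M)) hM0.le
  have hup : ∀ᶠ M in atTop, Real.log ((u M).factorial) / M - ((u M : ℝ) / M) * Real.log M
      ≤ psi ((u M : ℝ) / M) + (1 / (M:ℝ) + Real.log (M + 1) / M) := by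
    filter_upwards [hupos, eventually_ge_atTop 1, hle] with M hu1 hM1 hleM
    have hM0 : (0:ℝ) < M := by exact_mod_cast hM1
    have hu0 : (0:ℝ) < u M := by exact_mod_cast hu1
    have hlogle : Real.log (u M) ≤ Real.log (M + 1) := by
      apply Real.log_le_log hu0
      have : (u M : ℝ) ≤ M := by exact_mod_cast hleM
      linarith
    have h1 : Real.log ((u M).factorial) ≤ (u M : ℝ) * Real.log (u M) - u M + 1 + Real.log (M+1) :=
      (logfac_upper (u M)).trans (by linarith)
    rw [hident M hM1 hu1]
    have h2 : Real.log ((u M).factorial) / M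
        ≤ ((u M : ℝ) * Real.log (u M) - u M + 1 + Real.log (M+1)) / M :=
      div_le_div_of_nonneg_right h1 hM0.le
    have h3 : ((u M : ℝ) * Real.log (u M) - u M + 1 + Real.log (M+1)) / M
        = ((u M : ℝ) * Real.log (u M) - u M) / M + (1 / (M:ℝ) + Real.log (M + 1) / M) := by
      ring
    linarith [h2, h3.symm.le]
  have hlowlim : Filter.Tendsto (fun M : ℕ => psi ((u M : ℝ) / M)) atTop (nhds (psi α)) :=
    (psi_continuousAt hα).tendsto.comp h
  have huplim : Filter.Tendsto
      (fun M : ℕ => psi ((u M : ℝ) / M) + (1 / (M:ℝ) + Real.log (M + 1) / M))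
      atTop (nhds (psi α)) := by
    have := hlowlim.add err_div_tendsto
    rwa [add_zero] at this
  exact tendsto_of_tendsto_of_tendsto_of_le_of_le' hlowlim huplim hlow hup



section limits
variable {k : ℕ}

lemma div_k_tendsto (hk3 : 3 ≤ k) :
    Filter.Tendsto (fun M : ℕ => ((M / k : ℕ) : ℝ) / M) atTop (nhds (1 / k)) := by
  have hk0 : (0:ℝ) < k := by exact_mod_cast (by omega : 0 < k)
  have key : ∀ M : ℕ, 1 ≤ M → ((M / k : ℕ) : ℝ) / M = 1 / k - ((M % k : ℕ) : ℝ) / (k * M) := by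
    intro M hM1
    have hM0 : (M : ℝ) ≠ 0 := by positivity
    have hdm : (M : ℝ) = k * ((M / k : ℕ) : ℝ) + ((M % k : ℕ) : ℝ) := by
      exact_mod_cast (Nat.div_add_mod M k).symm
    field_simp
    linear_combination (-1:ℝ) * hdm
  have h0 : Filter.Tendsto (fun M : ℕ => ((M % k : ℕ) : ℝ) / (k * M)) atTop (nhds 0) := by
    apply squeeze_zero (fun M => by positivity) (g := fun M : ℕ => 1 / (M:ℝ))
    · intro M
      rcases Nat.eq_zero_or_pos M with h | h
      · simp [h]
      · have hM0 : (0:ℝ) < M := by exact_mod_cast h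
        rw [div_le_div_iff₀ (by positivity) hM0]
        have h1 : ((M % k : ℕ) : ℝ) ≤ k := by
          exact_mod_cast (Nat.mod_lt M (by omega : 0 < k)).le
        nlinarith
    · exact tendsto_one_div_atTop_nhds_zero_nat
  have := (tendsto_const_nhds (x := 1/(k:ℝ))).sub h0
  rw [sub_zero] at this
  apply this.congr'
  filter_upwards [eventually_ge_atTop 1] with M hM
  exact (key M hM).symm

lemma div_k_succ_tendsto (hk3 : 3 ≤ k) :
    Filter.Tendsto (fun M : ℕ => ((M / k + 1 : ℕ) : ℝ) / M) atTop (nhds (1 / k)) := by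
  have := (div_k_tendsto hk3).add tendsto_one_div_atTop_nhds_zero_nat
  rw [add_zero] at this
  apply this.congr'
  filter_upwards [eventually_ge_atTop 1] with M hM
  have hM0 : (M : ℝ) ≠ 0 := by positivity
  push_cast
  field_simp

lemma sub_div_k_tendsto (hk3 : 3 ≤ k) :
    Filter.Tendsto (fun M : ℕ => ((M - M / k : ℕ) : ℝ) / M) atTop (nhds (1 - 1 / k)) := by
  have := (tendsto_const_nhds (x := (1:ℝ))).sub (div_k_tendsto hk3)
  apply this.congr'
  filter_upwards [eventually_ge_atTop 1] with M hM
  have hM0 : (M : ℝ) ≠ 0 := by positivity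
  have hle : M / k ≤ M := Nat.div_le_self M k
  rw [Nat.cast_sub hle]
  field_simp

lemma sub_div_k_succ_tendsto (hk3 : 3 ≤ k) :
    Filter.Tendsto (fun M : ℕ => ((M - M / k - 1 : ℕ) : ℝ) / M) atTop (nhds (1 - 1 / k)) := by
  have h2 := (sub_div_k_tendsto hk3).sub tendsto_one_div_atTop_nhds_zero_nat
  rw [sub_zero] at h2
  apply h2.congr'
  filter_upwards [eventually_ge_atTop k] with M hM
  have hM1 : 1 ≤ M := by omega
  have hM0 : (M : ℝ) ≠ 0 := by positivity
  have hlt : M / k < M := Nat.div_lt_self (by omega) (by omega)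
  have hle : M / k ≤ M := hlt.le
  rw [Nat.cast_sub (by omega : 1 ≤ M - M / k), Nat.cast_sub hle]
  field_simp
  simp

end limits


lemma T_tendsto {k : ℕ} (hk3 : 3 ≤ k) :
    Filter.Tendsto (fun M : ℕ => 1 / (M:ℝ) *
        Real.log (((M.factorial : ℝ) ^ (2 * (k : ℤ) - (k : ℤ) ^ 2)) * Wb k M))
      atTop
      (nhds (Real.log (((k : ℝ) - 1) ^ (k * (k - 1)) / (k : ℝ) ^ (k * (k - 2))))) := by
  have hk0 : (0:ℝ) < k := by exact_mod_cast (by omega : 0 < k)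
  have hk0' : (k:ℝ) ≠ 0 := hk0.ne'
  have hinvk : (0:ℝ) < 1 / k := by positivity
  have hinvk' : (0:ℝ) < 1 - 1 / k := by
    rw [sub_pos, div_lt_iff₀ hk0, one_mul]
    exact_mod_cast (by omega : 1 < k)
  set L : ℕ → ℝ := fun n => Real.log (n.factorial) with hL
  set G : ℕ → ℕ → ℝ := fun M n => L n / M - ((n:ℝ)/M) * Real.log M with hG
  -- individual limits
  have hG1 : Filter.Tendsto (fun M : ℕ => G M M) atTop (nhds (psi 1)) := by
    apply D_tendsto (fun M => M) 1 one_pos (Eventually.of_forall fun M => le_rfl)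
    have : Filter.Tendsto (fun M : ℕ => (1:ℝ)) atTop (nhds 1) := tendsto_const_nhds
    apply this.congr'
    filter_upwards [eventually_ge_atTop 1] with M hM
    have : (M:ℝ) ≠ 0 := by positivity
    field_simp
  have hGa : Filter.Tendsto (fun M : ℕ => G M (M - M/k - 1)) atTop (nhds (psi (1 - 1/k))) :=
    D_tendsto _ _ hinvk' (Eventually.of_forall fun M => le_trans (Nat.sub_le _ _) (Nat.sub_le _ _)) (sub_div_k_succ_tendsto hk3)
  have hGb : Filter.Tendsto (fun M : ℕ => G M (M/k + 1)) atTop (nhds (psi (1/k))) := by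
    apply D_tendsto _ _ hinvk ?_ (div_k_succ_tendsto hk3)
    filter_upwards [eventually_ge_atTop 1] with M hM
    have := Nat.div_lt_self (show 0 < M by omega) (show 1 < k by omega)
    omega
  have hGc : Filter.Tendsto (fun M : ℕ => G M (M - M/k)) atTop (nhds (psi (1 - 1/k))) :=
    D_tendsto _ _ hinvk' (Eventually.of_forall fun M => Nat.sub_le _ _) (sub_div_k_tendsto hk3)
  have hGd : Filter.Tendsto (fun M : ℕ => G M (M/k)) atTop (nhds (psi (1/k))) :=
    D_tendsto _ _ hinvk (Eventually.of_forall fun M => Nat.div_le_self M k) (div_k_tendsto hk3)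
  set Δ : ℝ := psi (1 - 1/k) - psi (1/k) with hΔ
  have hX1 : Filter.Tendsto (fun M : ℕ => G M (M - M/k - 1) - G M (M/k + 1)) atTop (nhds Δ) :=
    hGa.sub hGb
  have hX2 : Filter.Tendsto (fun M : ℕ => G M (M - M/k) - G M (M/k)) atTop (nhds Δ) :=
    hGc.sub hGd
  set z : ℝ := 2 * (k:ℝ) - (k:ℝ)^2 with hz
  -- error terms tend to zero
  have herr1 : Filter.Tendsto
      (fun M : ℕ => ((k * (M % k) : ℕ) : ℝ) * ((G M (M - M/k - 1) - G M (M/k + 1)) - Δ))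
      atTop (nhds 0) := by
    have hbnd : ∀ M : ℕ, ‖((k * (M % k) : ℕ) : ℝ) * ((G M (M - M/k - 1) - G M (M/k + 1)) - Δ)‖
        ≤ (k:ℝ)^2 * ‖(G M (M - M/k - 1) - G M (M/k + 1)) - Δ‖ := by
      intro M
      rw [norm_mul]
      apply mul_le_mul_of_nonneg_right _ (norm_nonneg _)
      rw [Real.norm_natCast]
      have : k * (M % k) ≤ k * k := Nat.mul_le_mul_left k (Nat.mod_lt M (by omega : 0 < k)).le
      calc ((k * (M % k) : ℕ) : ℝ) ≤ ((k * k : ℕ) : ℝ) := by exact_mod_cast this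
        _ = (k:ℝ)^2 := by push_cast; ring
    have h0 : Filter.Tendsto (fun M : ℕ => (G M (M - M/k - 1) - G M (M/k + 1)) - Δ) atTop (nhds 0) := by
      have := hX1.sub (tendsto_const_nhds (x := Δ)); rwa [sub_self] at this
    have h1 := (h0.norm).const_mul ((k:ℝ)^2)
    rw [norm_zero, mul_zero] at h1
    exact squeeze_zero_norm hbnd h1
  have herr2 : Filter.Tendsto
      (fun M : ℕ => ((k * (k - M % k) : ℕ) : ℝ) * ((G M (M - M/k) - G M (M/k)) - Δ))
      atTop (nhds 0) := by
    have hbnd : ∀ M : ℕ, ‖((k * (k - M % k) : ℕ) : ℝ) * ((G M (M - M/k) - G M (M/k)) - Δ)‖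
        ≤ (k:ℝ)^2 * ‖(G M (M - M/k) - G M (M/k)) - Δ‖ := by
      intro M
      rw [norm_mul]
      apply mul_le_mul_of_nonneg_right _ (norm_nonneg _)
      rw [Real.norm_natCast]
      have : k * (k - M % k) ≤ k * k := Nat.mul_le_mul_left k (by omega)
      calc ((k * (k - M % k) : ℕ) : ℝ) ≤ ((k * k : ℕ) : ℝ) := by exact_mod_cast this
        _ = (k:ℝ)^2 := by push_cast; ring
    have h0 : Filter.Tendsto (fun M : ℕ => (G M (M - M/k) - G M (M/k)) - Δ) atTop (nhds 0) := by
      have := hX2.sub (tendsto_const_nhds (x := Δ)); rwa [sub_self] at this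
    have h1 := (h0.norm).const_mul ((k:ℝ)^2)
    rw [norm_zero, mul_zero] at h1
    exact squeeze_zero_norm hbnd h1
  -- the combined limit
  have hcomb : Filter.Tendsto
      (fun M : ℕ => z * G M M + (k:ℝ)^2 * Δ
        + ((k * (M % k) : ℕ) : ℝ) * ((G M (M - M/k - 1) - G M (M/k + 1)) - Δ)
        + ((k * (k - M % k) : ℕ) : ℝ) * ((G M (M - M/k) - G M (M/k)) - Δ))
      atTop (nhds (z * psi 1 + (k:ℝ)^2 * Δ + 0 + 0)) :=
    (((hG1.const_mul z).add tendsto_const_nhds).add herr1).add herr2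
  rw [add_zero, add_zero] at hcomb
  -- identify the function eventually
  have hident : ∀ᶠ M : ℕ in atTop, 1 / (M:ℝ) *
      Real.log (((M.factorial : ℝ) ^ (2 * (k : ℤ) - (k : ℤ) ^ 2)) * Wb k M)
      = z * G M M + (k:ℝ)^2 * Δ
        + ((k * (M % k) : ℕ) : ℝ) * ((G M (M - M/k - 1) - G M (M/k + 1)) - Δ)
        + ((k * (k - M % k) : ℕ) : ℝ) * ((G M (M - M/k) - G M (M/k)) - Δ) := by
    filter_upwards [eventually_ge_atTop 1] with M hM1
    have hM0 : (0:ℝ) < M := by exact_mod_cast hM1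
    have hfacpos : (0:ℝ) < (M.factorial : ℝ) := by exact_mod_cast M.factorial_pos
    have hr : M % k < k := Nat.mod_lt M (by omega)
    have hf1M : M / k + 1 ≤ M := by
      have := Nat.div_lt_self (show 0 < M by omega) (show 1 < k by omega)
      omega
    have hfM : M / k ≤ M := Nat.div_le_self M k
    -- log of the product
    have hlogP : Real.log ((M.factorial : ℝ) ^ (2 * (k : ℤ) - (k : ℤ) ^ 2)) = z * L M := by
      rw [Real.log_zpow, hz, hL]
      push_cast
      ring
    have hlogW : Real.log (Wb k M)
        = (k:ℝ) * ((M % k : ℕ) * (L (M - M/k - 1) - L (M/k + 1))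
            + ((k - M % k : ℕ) : ℝ) * (L (M - M/k) - L (M/k))) := by
      unfold Wb
      rw [Real.log_pow, Real.log_mul (pow_ne_zero _ (vv_pos M (M/k+1)).ne')
        (pow_ne_zero _ (vv_pos M (M/k)).ne'), Real.log_pow, Real.log_pow]
      have hfz : ∀ n : ℕ, ((n.factorial : ℝ)) ≠ 0 :=
        fun n => Nat.cast_ne_zero.mpr (Nat.factorial_ne_zero n)
      have e1 : Real.log (vv M (M/k + 1)) = L (M - M/k - 1) - L (M/k + 1) := by
        unfold vv
        rw [Real.log_div (hfz _) (hfz _), Nat.sub_sub]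
      have e2 : Real.log (vv M (M/k)) = L (M - M/k) - L (M/k) := by
        unfold vv
        rw [Real.log_div (hfz _) (hfz _)]
      rw [e1, e2]
    rw [Real.log_mul (by positivity) (Wb_pos k M).ne', hlogP, hlogW]
    -- now a pure algebraic identity
    have hdm : (M : ℝ) = k * ((M / k : ℕ) : ℝ) + ((M % k : ℕ) : ℝ) := by
      exact_mod_cast (Nat.div_add_mod M k).symm
    have c1 : ((M - M/k - 1 : ℕ) : ℝ) = (M:ℝ) - ((M/k : ℕ):ℝ) - 1 := by
      rw [Nat.sub_sub, Nat.cast_sub hf1M]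
      push_cast
      ring
    have c2 : ((M - M/k : ℕ) : ℝ) = (M:ℝ) - ((M/k : ℕ):ℝ) := by
      rw [Nat.cast_sub hfM]
    have c3 : ((k - M % k : ℕ) : ℝ) = (k:ℝ) - ((M % k : ℕ):ℝ) := by
      rw [Nat.cast_sub hr.le]
    rw [hG]
    simp only []
    push_cast
    rw [c1, c2, c3]
    linear_combination (2 * (k:ℝ) * Real.log M / (M:ℝ)) * hdm
  have hval : z * psi 1 + (k:ℝ)^2 * Δ
      = Real.log (((k : ℝ) - 1) ^ (k * (k - 1)) / (k : ℝ) ^ (k * (k - 2))) := by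
    have hk1 : (0:ℝ) < (k:ℝ) - 1 := by
      have : (3:ℝ) ≤ k := by exact_mod_cast hk3
      linarith
    rw [Real.log_div (by positivity) (by positivity), Real.log_pow, Real.log_pow]
    have e1 : psi 1 = -1 := by unfold psi; simp
    have e2 : psi (1/k) = (1/k) * (-Real.log k) - 1/k := by
      unfold psi
      rw [one_div, Real.log_inv]
    have e3 : psi (1 - 1/k) = (1 - 1/k) * (Real.log ((k:ℝ)-1) - Real.log k) - (1 - 1/k) := by
      unfold psi
      congr 2
      rw [show (1:ℝ) - 1/k = ((k:ℝ)-1)/k by field_simp, Real.log_div hk1.ne' hk0']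
    rw [hΔ, e1, e2, e3, hz]
    have ck1 : ((k * (k-1) : ℕ) : ℝ) = (k:ℝ) * ((k:ℝ) - 1) := by
      push_cast [Nat.cast_sub (by omega : 1 ≤ k)]; ring
    have ck2 : ((k * (k-2) : ℕ) : ℝ) = (k:ℝ) * ((k:ℝ) - 2) := by
      push_cast [Nat.cast_sub (by omega : 2 ≤ k)]; ring
    rw [ck1, ck2]
    field_simp
    ring
  rw [hval] at hcomb
  exact Filter.Tendsto.congr' (Filter.EventuallyEq.symm hident) hcomb

end ZkMProof

/-- **Proposition 3(b), first limit.** For fixed k ≥ 3,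
lim_{M→∞} [(M!)^{2k−k²}]^{1/M} (Z_{k,M})^{1/M} = (k−1)^{k(k−1)} / k^{k(k−2)},
where Z_{k,M} = Σ_{A ∈ A_{k,M}} ∏_{i,j} (M−a_{i,j})!/a_{i,j}!. -/
theorem ZkM_growth_rate
    (k : ℕ) (hk : 3 ≤ k)
    (Z : ℕ → ℝ)
    (hZ : ∀ M, Z M = ∑ A ∈ Finset.univ.filter
        (fun A : Fin k → Fin k → Fin (M + 1) =>
          (∀ i, ∑ j, (A i j : ℕ) = M) ∧ ∀ j, ∑ i, (A i j : ℕ) = M),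
        ∏ i, ∏ j, ((M - (A i j : ℕ)).factorial : ℝ) / ((A i j : ℕ).factorial : ℝ)) :
    Filter.Tendsto
      (fun M : ℕ =>
        ((M.factorial : ℝ) ^ (2 * (k : ℤ) - (k : ℤ) ^ 2)) ^ ((1 : ℝ) / M) *
          (Z M) ^ ((1 : ℝ) / M))
      Filter.atTop
      (nhds (((k : ℝ) - 1) ^ (k * (k - 1)) / (k : ℝ) ^ (k * (k - 2)))) := by
  have hk1 : (0:ℝ) < (k:ℝ) - 1 := by
    have : (3:ℝ) ≤ k := by exact_mod_cast hk
    linarith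
  have hk0 : (0:ℝ) < k := by linarith
  have rt_pos : (0:ℝ) < ((k : ℝ) - 1) ^ (k * (k - 1)) / (k : ℝ) ^ (k * (k - 2)) := by positivity
  set rt : ℝ := ((k : ℝ) - 1) ^ (k * (k - 1)) / (k : ℝ) ^ (k * (k - 2)) with hrt
  have hP : ∀ M : ℕ, (0:ℝ) < (M.factorial : ℝ) ^ (2 * (k : ℤ) - (k : ℤ) ^ 2) := by
    intro M
    apply zpow_pos
    exact_mod_cast M.factorial_pos
  have hZpos : ∀ M : ℕ, 0 < Z M := fun M =>
    lt_of_lt_of_le (Wb_pos k M) (by rw [hZ M]; exact Z_lower hk M)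
  -- main limit
  have hmain : Filter.Tendsto
      (fun M : ℕ => (((M.factorial : ℝ) ^ (2 * (k : ℤ) - (k : ℤ) ^ 2)) * Wb k M) ^ ((1:ℝ)/M))
      atTop (nhds rt) := by
    have hexp : Filter.Tendsto
        (fun M : ℕ => Real.exp (1 / (M:ℝ) *
          Real.log (((M.factorial : ℝ) ^ (2 * (k : ℤ) - (k : ℤ) ^ 2)) * Wb k M)))
        atTop (nhds (Real.exp (Real.log rt))) :=
      (Real.continuous_exp.tendsto _).comp (T_tendsto hk)
    rw [Real.exp_log rt_pos] at hexp
    apply hexp.congr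
    intro M
    rw [Real.rpow_def_of_pos (mul_pos (hP M) (Wb_pos k M)), mul_comm]
  -- poly limit
  have hpoly : Filter.Tendsto
      (fun M : ℕ => (((M:ℝ) + 1) ^ (k * k)) ^ ((1:ℝ)/M)) atTop (nhds 1) := by
    have hinner : Filter.Tendsto
        (fun M : ℕ => ((k*k : ℕ) : ℝ) * (Real.log (M + 1) / M)) atTop (nhds 0) := by
      have := log_succ_div_tendsto.const_mul ((k*k : ℕ) : ℝ)
      rwa [mul_zero] at this
    have hexp := (Real.continuous_exp.tendsto _).comp hinner
    rw [Real.exp_zero] at hexp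
    apply hexp.congr
    intro M
    have hpos : (0:ℝ) < ((M:ℝ) + 1) ^ (k * k) := by positivity
    rw [Real.rpow_def_of_pos hpos, Real.log_pow]
    simp only [Function.comp]
    ring_nf
  -- upper limit
  have hupper : Filter.Tendsto
      (fun M : ℕ => (((M:ℝ) + 1) ^ (k * k) *
        (((M.factorial : ℝ) ^ (2 * (k : ℤ) - (k : ℤ) ^ 2)) * Wb k M)) ^ ((1:ℝ)/M))
      atTop (nhds rt) := by
    have := hpoly.mul hmain
    rw [one_mul] at this
    apply this.congr
    intro M
    rw [← Real.mul_rpow (by positivity) (mul_pos (hP M) (Wb_pos k M)).le]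
  -- squeeze
  apply tendsto_of_tendsto_of_tendsto_of_le_of_le hmain hupper
  · intro M
    have h1 : ((M.factorial : ℝ) ^ (2 * (k : ℤ) - (k : ℤ) ^ 2)) * Wb k M
        ≤ ((M.factorial : ℝ) ^ (2 * (k : ℤ) - (k : ℤ) ^ 2)) * Z M := by
      apply mul_le_mul_of_nonneg_left _ (hP M).le
      rw [hZ M]; exact Z_lower hk M
    calc (((M.factorial : ℝ) ^ (2 * (k : ℤ) - (k : ℤ) ^ 2)) * Wb k M) ^ ((1:ℝ)/M)
        ≤ (((M.factorial : ℝ) ^ (2 * (k : ℤ) - (k : ℤ) ^ 2)) * Z M) ^ ((1:ℝ)/M) :=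
          Real.rpow_le_rpow (mul_pos (hP M) (Wb_pos k M)).le h1 (by positivity)
      _ = ((M.factorial : ℝ) ^ (2 * (k : ℤ) - (k : ℤ) ^ 2)) ^ ((1:ℝ)/M) * (Z M) ^ ((1:ℝ)/M) :=
          Real.mul_rpow (hP M).le (hZpos M).le
  · intro M
    have h1 : ((M.factorial : ℝ) ^ (2 * (k : ℤ) - (k : ℤ) ^ 2)) * Z M
        ≤ ((M:ℝ) + 1) ^ (k * k) *
          (((M.factorial : ℝ) ^ (2 * (k : ℤ) - (k : ℤ) ^ 2)) * Wb k M) := by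
      have h2 : Z M ≤ ((M : ℝ) + 1) ^ (k * k) * Wb k M := by
        rw [hZ M]; exact Z_upper hk M
      calc ((M.factorial : ℝ) ^ (2 * (k : ℤ) - (k : ℤ) ^ 2)) * Z M
          ≤ ((M.factorial : ℝ) ^ (2 * (k : ℤ) - (k : ℤ) ^ 2)) *
            (((M : ℝ) + 1) ^ (k * k) * Wb k M) := mul_le_mul_of_nonneg_left h2 (hP M).le
        _ = ((M:ℝ) + 1) ^ (k * k) *
            (((M.factorial : ℝ) ^ (2 * (k : ℤ) - (k : ℤ) ^ 2)) * Wb k M) := by ring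
    calc ((M.factorial : ℝ) ^ (2 * (k : ℤ) - (k : ℤ) ^ 2)) ^ ((1:ℝ)/M) * (Z M) ^ ((1:ℝ)/M)
        = (((M.factorial : ℝ) ^ (2 * (k : ℤ) - (k : ℤ) ^ 2)) * Z M) ^ ((1:ℝ)/M) :=
          (Real.mul_rpow (hP M).le (hZpos M).le).symm
      _ ≤ (((M:ℝ) + 1) ^ (k * k) *
          (((M.factorial : ℝ) ^ (2 * (k : ℤ) - (k : ℤ) ^ 2)) * Wb k M)) ^ ((1:ℝ)/M) :=
          Real.rpow_le_rpow (mul_pos (hP M) (hZpos M)).le h1 (by positivity)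
end

section
/- Fix integers k ≥ 2 and M ≥ 1, write M = qk + r with q = ⌊M/k⌋ and 0 ≤ r < k, and let U be the k×k circulant matrix whose first row is (q+1,…,q+1,q,…,q) (with r entries equal to q+1 followed by k−r entries equal to q). Then U ∈ A_{k,M}, and U maximizes w(A) over A ∈ A_{k,M}; consequently max_{A∈A_{k,M}} w(A) = [ (M−(q+1))!/(q+1)! ]^{kr} · [ (M−q)!/q! ]^{k(k−r)}. -/
open Finset

private noncomputable def ffact (M n : ℕ) : ℝ :=
  ((M - n).factorial : ℝ) / (n.factorial : ℝ)

private lemma ffact_pos (M n : ℕ) : 0 < ffact M n := by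
  unfold ffact
  positivity

private lemma smooth (M a b : ℕ) (hab : a + b ≤ M) (h : a + 1 ≤ b) :
    ffact M a * ffact M b ≤ ffact M (a + 1) * ffact M (b - 1) := by
  have hbM : b ≤ M := by omega
  have key : (M - a) * (a + 1) ≤ (M - (b - 1)) * b := by
    obtain ⟨c, hc⟩ : ∃ c, M = b + c := ⟨M - b, by omega⟩
    obtain ⟨d, hd⟩ : ∃ d, b = a + 1 + d := ⟨b - a - 1, by omega⟩
    have h1 : M - a = c + d + 1 := by omega
    have h2 : M - (b - 1) = c + 1 := by omega
    have hac : a ≤ c := by omega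
    rw [h1, h2, hd]
    nlinarith
  have e1 : (M - a).factorial = (M - a) * (M - (a + 1)).factorial := by
    rw [show M - a = (M - (a + 1)) + 1 by omega, Nat.factorial_succ]
  have e2 : (M - (b - 1)).factorial = (M - (b - 1)) * (M - b).factorial := by
    rw [show M - (b - 1) = (M - b) + 1 by omega, Nat.factorial_succ]
  have e3 : (a + 1).factorial = (a + 1) * a.factorial := Nat.factorial_succ a
  have e4 : b.factorial = b * (b - 1).factorial := by
    obtain ⟨b', rfl⟩ : ∃ b', b = b' + 1 := ⟨b - 1, by omega⟩
    simp [Nat.factorial_succ]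
  have natineq : (M - a).factorial * (M - b).factorial * ((a + 1).factorial * (b - 1).factorial)
      ≤ (M - (a + 1)).factorial * (M - (b - 1)).factorial * (a.factorial * b.factorial) := by
    calc (M - a).factorial * (M - b).factorial * ((a + 1).factorial * (b - 1).factorial)
        = ((M - a) * (a + 1)) *
            ((M - (a + 1)).factorial * (M - b).factorial * (a.factorial * (b - 1).factorial)) := by
          rw [e1, e3]; ring
      _ ≤ ((M - (b - 1)) * b) *
            ((M - (a + 1)).factorial * (M - b).factorial * (a.factorial * (b - 1).factorial)) :=
          Nat.mul_le_mul_right _ key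
      _ = (M - (a + 1)).factorial * (M - (b - 1)).factorial * (a.factorial * b.factorial) := by
          rw [e2, e4]; ring
  unfold ffact
  rw [div_mul_div_comm, div_mul_div_comm, div_le_div_iff₀ (by positivity) (by positivity)]
  exact_mod_cast natineq

private lemma balanced_prod (M k q r : ℕ) (hM : M = q * k + r) (hrk : r < k)
    (x : Fin k → ℕ) (hx : ∀ j, x j = q ∨ x j = q + 1) (hsum : ∑ j, x j = M) :
    ∏ j, ffact M (x j) = ffact M (q + 1) ^ r * ffact M q ^ (k - r) := by
  classical
  set S : Finset (Fin k) := univ.filter (fun j => x j = q + 1) with hS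
  have hsum2 : ∑ j, x j = ∑ j : Fin k, (q + if x j = q + 1 then 1 else 0) := by
    refine Finset.sum_congr rfl fun j _ => ?_
    rcases hx j with h | h <;> simp [h]
  have hcardsum : ∑ j : Fin k, (q + if x j = q + 1 then 1 else 0) = k * q + S.card := by
    rw [Finset.sum_add_distrib, Finset.sum_const, Finset.card_univ, Fintype.card_fin,
      smul_eq_mul, ← Finset.card_filter]
  have hqk : k * q = q * k := Nat.mul_comm k q
  have hcard : S.card = r := by
    have := hsum2 ▸ hsum
    omega
  have hcardc : (univ.filter (fun j => ¬ x j = q + 1)).card = k - r := by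
    have := Finset.card_filter_add_card_filter_not (s := (univ : Finset (Fin k)))
      (p := fun j => x j = q + 1)
    rw [← hS] at this
    have hku : (univ : Finset (Fin k)).card = k := by simp
    omega
  rw [← Finset.prod_filter_mul_prod_filter_not univ (fun j => x j = q + 1)]
  have h1 : ∏ j ∈ S, ffact M (x j) = ffact M (q + 1) ^ r := by
    rw [Finset.prod_congr rfl (fun j hj => by rw [(Finset.mem_filter.1 hj).2]),
      Finset.prod_const, hcard]
  have h2 : ∏ j ∈ univ.filter (fun j => ¬ x j = q + 1), ffact M (x j) = ffact M q ^ (k - r) := by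
    rw [Finset.prod_congr rfl (fun j hj => by
        rcases hx j with h | h
        · rw [h]
        · exact absurd h (Finset.mem_filter.1 hj).2),
      Finset.prod_const, hcardc]
  rw [← hS] at *
  rw [h1, h2]

private lemma row_bound (M k q r : ℕ) (hM : M = q * k + r) (hrk : r < k) :
    ∀ N (x : Fin k → ℕ), (∑ j, x j * x j) ≤ N → (∑ j, x j = M) →
      ∏ j, ffact M (x j) ≤ ffact M (q + 1) ^ r * ffact M q ^ (k - r) := by
  classical
  intro N
  induction N using Nat.strong_induction_on with
  | _ N ih =>
    intro x hN hsum
    by_cases hpair : ∃ i j, x i + 2 ≤ x j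
    · obtain ⟨i0, j0, hij⟩ := hpair
      have hne : i0 ≠ j0 := by intro h; rw [h] at hij; omega
      set a := x i0 with ha
      set b := x j0 with hb
      have hb1 : 1 ≤ b := by omega
      have habM : a + b ≤ M := by
        have hsub : ({i0, j0} : Finset (Fin k)) ⊆ univ := Finset.subset_univ _
        have := Finset.sum_le_sum_of_subset (f := x) hsub
        rw [Finset.sum_pair hne] at this
        omega
      have hmemo : j0 ∈ (univ : Finset (Fin k)) := Finset.mem_univ _
      have hmemi : i0 ∈ (univ : Finset (Fin k)) \ {j0} := by simp [hne]
      have splitN : ∀ (f : Fin k → ℕ), ∑ j, f j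
          = f j0 + (f i0 + ∑ j ∈ ((univ : Finset (Fin k)) \ {j0}) \ {i0}, f j) := by
        intro f
        have h1 := Finset.sum_update_of_mem hmemo f (f j0)
        rw [Function.update_eq_self] at h1
        have h2 := Finset.sum_update_of_mem hmemi f (f i0)
        rw [Function.update_eq_self] at h2
        rw [h1, h2]
      have splitP : ∀ (f : Fin k → ℝ), ∏ j, f j
          = f j0 * (f i0 * ∏ j ∈ ((univ : Finset (Fin k)) \ {j0}) \ {i0}, f j) := by
        intro f
        have h1 := Finset.prod_update_of_mem hmemo f (f j0)
        rw [Function.update_eq_self] at h1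
        have h2 := Finset.prod_update_of_mem hmemi f (f i0)
        rw [Function.update_eq_self] at h2
        rw [h1, h2]
      set y : Fin k → ℕ := Function.update (Function.update x i0 (a + 1)) j0 (b - 1) with hy
      have hyrest : ∀ j ∈ ((univ : Finset (Fin k)) \ {j0}) \ {i0}, y j = x j := by
        intro j hj
        simp only [Finset.mem_sdiff, Finset.mem_singleton] at hj
        simp [hy, Function.update_of_ne hj.1.2, Function.update_of_ne hj.2]
      have hyio : y i0 = a + 1 := by
        simp [hy, Function.update_of_ne hne, Function.update_self]
      have hyjo : y j0 = b - 1 := by simp [hy, Function.update_self]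
      have hrestsum : ∑ j ∈ ((univ : Finset (Fin k)) \ {j0}) \ {i0}, y j
          = ∑ j ∈ ((univ : Finset (Fin k)) \ {j0}) \ {i0}, x j :=
        Finset.sum_congr rfl hyrest
      have hsumy : ∑ j, y j = M := by
        rw [splitN y, hyio, hyjo, hrestsum]
        rw [splitN x] at hsum
        omega
      have hsqy : ∑ j, y j * y j < N := by
        have hlt : ∑ j, y j * y j < ∑ j, x j * x j := by
          have e1 := splitN (fun j => y j * y j)
          have e2 := splitN (fun j => x j * x j)
          beta_reduce at e1 e2
          have erest : (∑ j ∈ ((univ : Finset (Fin k)) \ {j0}) \ {i0}, y j * y j)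
              = ∑ j ∈ ((univ : Finset (Fin k)) \ {j0}) \ {i0}, x j * x j :=
            Finset.sum_congr rfl (fun j hj => by rw [hyrest j hj])
          rw [hyio, hyjo, erest] at e1
          rw [← ha, ← hb] at e2
          rw [e1, e2]
          have hgen : ∀ u v : ℕ, u + 2 ≤ v →
              (v - 1) * (v - 1) + (u + 1) * (u + 1) < v * v + u * u := by
            intro u v huv
            obtain ⟨v', rfl⟩ : ∃ v', v = v' + 1 := ⟨v - 1, by omega⟩
            have : u + 1 ≤ v' := by omega
            simp only [Nat.add_sub_cancel]
            nlinarith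
          have hkey := hgen a b hij
          omega
        omega
      have hR : 0 ≤ ∏ j ∈ ((univ : Finset (Fin k)) \ {j0}) \ {i0}, ffact M (x j) :=
        Finset.prod_nonneg fun j _ => (ffact_pos M (x j)).le
      have hxy : ∏ j, ffact M (x j) ≤ ∏ j, ffact M (y j) := by
        have e1 := splitP (fun j => ffact M (x j))
        have e2 := splitP (fun j => ffact M (y j))
        beta_reduce at e1 e2
        have erest : (∏ j ∈ ((univ : Finset (Fin k)) \ {j0}) \ {i0}, ffact M (y j))
            = ∏ j ∈ ((univ : Finset (Fin k)) \ {j0}) \ {i0}, ffact M (x j) :=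
          Finset.prod_congr rfl (fun j hj => by rw [hyrest j hj])
        rw [hyio, hyjo, erest] at e2
        rw [← ha, ← hb] at e1
        rw [e1, e2]
        calc ffact M b * (ffact M a * ∏ j ∈ ((univ : Finset (Fin k)) \ {j0}) \ {i0}, ffact M (x j))
            = (ffact M a * ffact M b) *
                ∏ j ∈ ((univ : Finset (Fin k)) \ {j0}) \ {i0}, ffact M (x j) := by ring
          _ ≤ (ffact M (a + 1) * ffact M (b - 1)) *
                ∏ j ∈ ((univ : Finset (Fin k)) \ {j0}) \ {i0}, ffact M (x j) :=
              mul_le_mul_of_nonneg_right (smooth M a b habM (by omega)) hR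
          _ = ffact M (b - 1) *
                (ffact M (a + 1) * ∏ j ∈ ((univ : Finset (Fin k)) \ {j0}) \ {i0}, ffact M (x j)) := by
              ring
      exact le_trans hxy (ih _ hsqy y le_rfl hsumy)
    · push_neg at hpair
      have hx : ∀ j, x j = q ∨ x j = q + 1 := by
        intro j
        have hub : x j ≤ q + 1 := by
          by_contra hc
          push_neg at hc
          have hall : ∀ i ∈ (univ : Finset (Fin k)), q + 1 ≤ x i := by
            intro i _
            have := hpair i j
            omega
          have hbig := Finset.card_nsmul_le_sum univ x (q + 1) hall
          rw [Finset.card_univ, Fintype.card_fin, smul_eq_mul, hsum] at hbig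
          have e1 : k * (q + 1) = q * k + k := by ring
          omega
        have hlb : q ≤ x j := by
          by_contra hc
          push_neg at hc
          obtain ⟨k', rfl⟩ : ∃ k', k = k' + 1 := ⟨k - 1, by omega⟩
          have hall : ∀ i ∈ (univ : Finset (Fin (k' + 1))) \ {j}, x i ≤ q := by
            intro i _
            have := hpair j i
            omega
          have hcard : ((univ : Finset (Fin (k' + 1))) \ {j}).card = k' := by
            rw [Finset.sdiff_singleton_eq_erase, Finset.card_erase_of_mem (Finset.mem_univ j)]
            simp
          have hbound : ∑ i ∈ (univ : Finset (Fin (k' + 1))) \ {j}, x i ≤ k' * q := by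
            have := Finset.sum_le_card_nsmul ((univ : Finset (Fin (k' + 1))) \ {j}) x q hall
            rw [hcard, smul_eq_mul] at this
            simpa using this
          have hsplit : ∑ i, x i = x j + ∑ i ∈ (univ : Finset (Fin (k' + 1))) \ {j}, x i := by
            have h1 := Finset.sum_update_of_mem (Finset.mem_univ j) x (x j)
            rw [Function.update_eq_self] at h1
            exact h1
          rw [hsplit] at hsum
          have e1 : q * (k' + 1) = k' * q + q := by ring
          omega
        omega
      exact le_of_eq (balanced_prod M k q r hM hrk x hx hsum)

open Finset
section MainPf
variable (k M q r : ℕ)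

private lemma reindex_sum (hk0 : 0 < k) (g : ℕ → ℕ) (i : Fin k) :
    ∑ j : Fin k, g (((j : ℕ) + k - (i : ℕ)) % k) = ∑ t : Fin k, g (t : ℕ) := by
  haveI : NeZero k := ⟨by omega⟩
  have key : ∀ j : Fin k, ((j : ℕ) + k - (i : ℕ)) % k = ((j - i : Fin k) : ℕ) := by
    intro j
    rw [Fin.sub_def]
    simp only
    congr 1
    omega
  calc ∑ j : Fin k, g (((j : ℕ) + k - (i : ℕ)) % k)
      = ∑ j : Fin k, g ((j - i : Fin k) : ℕ) := by
        exact Finset.sum_congr rfl fun j _ => by rw [key j]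
    _ = ∑ t : Fin k, g (t : ℕ) :=
        Fintype.sum_equiv (Equiv.subRight i) _ _ (fun j => by simp)

private lemma reindex_sum_col (hk0 : 0 < k) (g : ℕ → ℕ) (j : Fin k) :
    ∑ i : Fin k, g (((j : ℕ) + k - (i : ℕ)) % k) = ∑ t : Fin k, g (t : ℕ) := by
  haveI : NeZero k := ⟨by omega⟩
  have key : ∀ i : Fin k, ((j : ℕ) + k - (i : ℕ)) % k = ((j - i : Fin k) : ℕ) := by
    intro i
    rw [Fin.sub_def]
    simp only
    congr 1
    omega
  calc ∑ i : Fin k, g (((j : ℕ) + k - (i : ℕ)) % k)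
      = ∑ i : Fin k, g ((j - i : Fin k) : ℕ) := by
        exact Finset.sum_congr rfl fun i _ => by rw [key i]
    _ = ∑ t : Fin k, g (t : ℕ) :=
        Fintype.sum_equiv (Equiv.subLeft j) _ _ (fun i => by simp)

private lemma sum_ite_val (hrk : r ≤ k) :
    ∑ t : Fin k, (if (t : ℕ) < r then q + 1 else q) = r * (q + 1) + (k - r) * q := by
  rw [Fin.sum_univ_eq_sum_range (fun t => if t < r then q + 1 else q) k,
    Finset.range_eq_Ico, ← Finset.sum_Ico_consecutive _ (Nat.zero_le r) hrk]
  have h1 : ∑ t ∈ Finset.Ico 0 r, (if t < r then q + 1 else q) = r * (q + 1) := by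
    rw [Finset.sum_congr rfl (fun t ht => by
      rw [if_pos (Finset.mem_Ico.1 ht).2]), Finset.sum_const, Nat.card_Ico, smul_eq_mul]
    rw [Nat.sub_zero]
  have h2 : ∑ t ∈ Finset.Ico r k, (if t < r then q + 1 else q) = (k - r) * q := by
    rw [Finset.sum_congr rfl (fun t ht => by
      rw [if_neg (by have := (Finset.mem_Ico.1 ht).1; omega)]), Finset.sum_const,
      Nat.card_Ico, smul_eq_mul]
  rw [h1, h2]

end MainPf




/-- **Proposition 4.** With M = qk + r (q = ⌊M/k⌋, 0 ≤ r < k), the circulant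
matrix U whose first row has r entries q+1 followed by k−r entries q (entry
U i j = c_{(j−i) mod k}) lies in A_{k,M} and maximizes
w(A) = ∏_{i,j} (M−a_{i,j})!/a_{i,j}! over A_{k,M}; consequently the maximum
equals [(M−(q+1))!/(q+1)!]^{kr} · [(M−q)!/q!]^{k(k−r)}. -/
theorem circulant_maximizes_w
    (k M : ℕ) (hk : 2 ≤ k) (hM : 1 ≤ M)
    (q r : ℕ) (hq : q = M / k) (hr : r = M % k)
    (U : Fin k → Fin k → ℕ)
    (hU : ∀ i j, U i j = if ((j : ℕ) + k - (i : ℕ)) % k < r then q + 1 else q)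
    (w : (Fin k → Fin k → ℕ) → ℝ)
    (hw : ∀ A, w A = ∏ i, ∏ j, ((M - A i j).factorial : ℝ) / ((A i j).factorial : ℝ)) :
    ((∀ i, ∑ j, U i j = M) ∧ (∀ j, ∑ i, U i j = M)) ∧
    (∀ A : Fin k → Fin k → ℕ,
      (∀ i, ∑ j, A i j = M) → (∀ j, ∑ i, A i j = M) → w A ≤ w U) ∧
    w U = (((M - (q + 1)).factorial : ℝ) / ((q + 1).factorial : ℝ)) ^ (k * r) *
          (((M - q).factorial : ℝ) / (q.factorial : ℝ)) ^ (k * (k - r)) := by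
  have hk0 : 0 < k := by omega
  have hrk : r < k := by rw [hr]; exact Nat.mod_lt M hk0
  have hMqr : M = q * k + r := by
    rw [hq, hr, Nat.mul_comm]
    exact (Nat.div_add_mod M k).symm
  have hval : r * (q + 1) + (k - r) * q = M := by
    have h1 : r * (q + 1) = r * q + r := by ring
    have h2 : (k - r) * q + r * q = k * q := by
      have : k - r + r = k := by omega
      calc (k - r) * q + r * q = (k - r + r) * q := by ring
        _ = k * q := by rw [this]
    have h3 : k * q = q * k := Nat.mul_comm k q
    omega
  -- row sums
  have hrow : ∀ i, ∑ j, U i j = M := by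
    intro i
    calc ∑ j, U i j
        = ∑ j : Fin k, (fun t => if t < r then q + 1 else q) (((j : ℕ) + k - (i : ℕ)) % k) := by
          exact Finset.sum_congr rfl fun j _ => hU i j
      _ = ∑ t : Fin k, (if (t : ℕ) < r then q + 1 else q) :=
          reindex_sum k hk0 (fun t => if t < r then q + 1 else q) i
      _ = M := by rw [sum_ite_val k q r (le_of_lt hrk)]; exact hval
  have hcol : ∀ j, ∑ i, U i j = M := by
    intro j
    calc ∑ i, U i j
        = ∑ i : Fin k, (fun t => if t < r then q + 1 else q) (((j : ℕ) + k - (i : ℕ)) % k) := by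
          exact Finset.sum_congr rfl fun i _ => hU i j
      _ = ∑ t : Fin k, (if (t : ℕ) < r then q + 1 else q) :=
          reindex_sum_col k hk0 (fun t => if t < r then q + 1 else q) j
      _ = M := by rw [sum_ite_val k q r (le_of_lt hrk)]; exact hval
  -- each row of U is balanced
  have hUrow : ∀ i : Fin k, ∏ j, ffact M (U i j)
      = ffact M (q + 1) ^ r * ffact M q ^ (k - r) := by
    intro i
    exact balanced_prod M k q r hMqr hrk (fun j => U i j)
      (fun j => by show U i j = q ∨ U i j = q + 1
                   rw [hU i j]; split <;> simp) (hrow i)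
  have hwU : w U = (ffact M (q + 1) ^ r * ffact M q ^ (k - r)) ^ k := by
    rw [hw U]
    have : ∀ i : Fin k, ∏ j, ((M - U i j).factorial : ℝ) / ((U i j).factorial : ℝ)
        = ffact M (q + 1) ^ r * ffact M q ^ (k - r) := fun i => hUrow i
    rw [Finset.prod_congr rfl (fun i _ => this i), Finset.prod_const, Finset.card_univ,
      Fintype.card_fin]
  refine ⟨⟨hrow, hcol⟩, ?_, ?_⟩
  · intro A hArow _
    rw [hw A, hwU]
    have h1 : ∀ i : Fin k, ∏ j, ((M - A i j).factorial : ℝ) / ((A i j).factorial : ℝ)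
        ≤ ffact M (q + 1) ^ r * ffact M q ^ (k - r) := by
      intro i
      exact row_bound M k q r hMqr hrk (∑ j, A i j * A i j) (fun j => A i j) le_rfl (hArow i)
    calc ∏ i, ∏ j, ((M - A i j).factorial : ℝ) / ((A i j).factorial : ℝ)
        ≤ ∏ _i : Fin k, (ffact M (q + 1) ^ r * ffact M q ^ (k - r)) := by
          refine Finset.prod_le_prod (fun i _ => ?_) (fun i _ => h1 i)
          exact Finset.prod_nonneg fun j _ => by positivity
      _ = (ffact M (q + 1) ^ r * ffact M q ^ (k - r)) ^ k := by
          rw [Finset.prod_const, Finset.card_univ, Fintype.card_fin]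
  · rw [hwU]
    show (ffact M (q + 1) ^ r * ffact M q ^ (k - r)) ^ k
        = ffact M (q + 1) ^ (k * r) * ffact M q ^ (k * (k - r))
    rw [mul_pow, ← pow_mul, ← pow_mul, Nat.mul_comm r k, Nat.mul_comm (k - r) k]
end

section
/- For every integer k ≥ 2, the function φ : ℤ_+^k → ℝ defined by φ(x_1,…,x_k) = ∏_{j=1}^k (Σ_{ℓ≠j} x_ℓ)! / (x_j)! is Schur-concave: for all x, y ∈ ℤ_+^k such that x is majorized by y, φ(x) ≥ φ(y). -/
open Finset

namespace PhiSchur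

noncomputable def gfun (S m : ℕ) : ℝ := ((S - m).factorial : ℝ) / (m.factorial : ℝ)

lemma gfun_pos (S m : ℕ) : 0 < gfun S m := by
  unfold gfun; positivity

lemma fact_key (S a b : ℕ) (h1 : b + 2 ≤ a) (h2 : a + b ≤ S) :
    (S - a).factorial * (S - b).factorial * ((a - 1).factorial * (b + 1).factorial) ≤
    (S - (a - 1)).factorial * (S - (b + 1)).factorial * (a.factorial * b.factorial) := by
  obtain ⟨a', rfl⟩ : ∃ a', a = a' + 1 := ⟨a - 1, by omega⟩
  have e1 : S - a' = (S - (a' + 1)) + 1 := by omega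
  have e2 : S - b = (S - (b + 1)) + 1 := by omega
  have key : (S - (b + 1) + 1) * (b + 1) ≤ (S - (a' + 1) + 1) * (a' + 1) := by
    have ha : a' + 1 ≤ S := by omega
    have hb : b + 1 ≤ S := by omega
    zify [ha, hb]
    nlinarith [sq_nonneg ((a' : ℤ) - b)]
  simp only [Nat.add_sub_cancel, e1, e2, Nat.factorial_succ]
  generalize (S - (a' + 1)).factorial = P
  generalize (S - (b + 1)).factorial = Q
  generalize a'.factorial = A
  generalize b.factorial = B
  calc P * ((S - (b + 1) + 1) * Q) * (A * ((b + 1) * B))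
      = ((S - (b + 1) + 1) * (b + 1)) * (P * Q * (A * B)) := by ring
    _ ≤ ((S - (a' + 1) + 1) * (a' + 1)) * (P * Q * (A * B)) := Nat.mul_le_mul_right _ key
    _ = (S - (a' + 1) + 1) * P * Q * ((a' + 1) * A * B) := by ring

lemma gfun_transfer (S a b : ℕ) (h1 : b + 2 ≤ a) (h2 : a + b ≤ S) :
    gfun S a * gfun S b ≤ gfun S (a - 1) * gfun S (b + 1) := by
  unfold gfun
  rw [div_mul_div_comm, div_mul_div_comm, div_le_div_iff₀ (by positivity) (by positivity)]
  have h := fact_key S a b h1 h2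
  have h' : (((S - a).factorial * (S - b).factorial *
        ((a - 1).factorial * (b + 1).factorial) : ℕ) : ℝ)
      ≤ (((S - (a - 1)).factorial * (S - (b + 1)).factorial *
        (a.factorial * b.factorial) : ℕ) : ℝ) :=
    Nat.cast_le.mpr h
  push_cast at h'
  linarith

variable {k : ℕ}

def pre (v : Fin k → ℕ) (l : ℕ) : ℕ :=
  ∑ m ∈ univ.filter (fun m : Fin k => (m : ℕ) < l), v m

def Tsum (v : Fin k → ℕ) (l : ℕ) : ℕ :=
  (powersetCard l (univ : Finset (Fin k))).sup (fun s => ∑ i ∈ s, v i)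

lemma pre_zero (v : Fin k → ℕ) : pre v 0 = 0 := by
  unfold pre
  simp

lemma pre_total (v : Fin k → ℕ) : pre v k = ∑ i, v i := by
  unfold pre
  congr 1
  ext m
  simp [m.isLt]

lemma pre_succ (v : Fin k → ℕ) {t : ℕ} (ht : t < k) :
    pre v (t + 1) = pre v t + v ⟨t, ht⟩ := by
  unfold pre
  have : (univ.filter (fun m : Fin k => (m : ℕ) < t + 1)) =
      insert ⟨t, ht⟩ (univ.filter (fun m : Fin k => (m : ℕ) < t)) := by
    ext m
    simp only [mem_filter, mem_univ, true_and, mem_insert, Fin.ext_iff]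
    omega
  rw [this, Finset.sum_insert (by simp)]
  ring

lemma pre_eq_sum_fin (v : Fin k → ℕ) {l : ℕ} (h : l ≤ k) :
    pre v l = ∑ t : Fin l, v (Fin.castLE h t) := by
  unfold pre
  refine Finset.sum_bij' (fun m hm => (⟨(m : ℕ), by simpa using hm⟩ : Fin l))
    (fun t _ => Fin.castLE h t) ?_ ?_ ?_ ?_ ?_ <;>
    simp [Fin.ext_iff]

lemma card_filter_lt {l : ℕ} (h : l ≤ k) :
    (univ.filter (fun m : Fin k => (m : ℕ) < l)).card = l := by
  have h1 : (univ.filter (fun m : Fin k => (m : ℕ) < l)).card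
      = pre (fun _ : Fin k => 1) l := by
    rw [pre, Finset.card_eq_sum_ones]
  rw [h1, pre_eq_sum_fin _ h]
  simp

lemma strictMono_le_val {l : ℕ} (f : Fin l → Fin k) (hf : StrictMono f) :
    ∀ t : Fin l, (t : ℕ) ≤ (f t : ℕ) := by
  intro t
  obtain ⟨m, hm⟩ := t
  induction m with
  | zero => exact Nat.zero_le _
  | succ n ih =>
    have h1 : (⟨n, by omega⟩ : Fin l) < ⟨n + 1, hm⟩ := by
      simp [Fin.lt_def]
    have := hf h1
    have := ih (by omega)
    simp only [Fin.lt_def] at this ⊢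
    omega

lemma sum_le_pre {v : Fin k → ℕ} (hv : Antitone v) {s : Finset (Fin k)} {l : ℕ}
    (hc : s.card = l) (hl : l ≤ k) : ∑ m ∈ s, v m ≤ pre v l := by
  classical
  have e := s.orderIsoOfFin hc
  have h1 : ∑ m ∈ s, v m = ∑ t : Fin l, v (e t) := by
    rw [← Finset.sum_attach s v]
    exact (Fintype.sum_equiv e.toEquiv _ _ (fun t => rfl)).symm
  rw [h1, pre_eq_sum_fin v hl]
  refine Finset.sum_le_sum fun t _ => ?_
  refine hv ?_
  have hsm : StrictMono (fun t : Fin l => ((e t : Fin k))) := by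
    intro a b hab
    exact e.strictMono hab
  have := strictMono_le_val _ hsm t
  simpa [Fin.le_def] using this

lemma le_Tsum (v : Fin k → ℕ) {s : Finset (Fin k)} {l : ℕ} (hc : s.card = l) :
    ∑ m ∈ s, v m ≤ Tsum v l :=
  Finset.le_sup (f := fun s => ∑ i ∈ s, v i)
    (Finset.mem_powersetCard.mpr ⟨Finset.subset_univ s, hc⟩)

lemma Tsum_le_pre {v : Fin k → ℕ} (hv : Antitone v) {l : ℕ} (hl : l ≤ k) :
    Tsum v l ≤ pre v l := by
  refine Finset.sup_le fun s hs => ?_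
  exact sum_le_pre hv (Finset.mem_powersetCard.mp hs).2 hl

lemma pre_le_Tsum (v : Fin k → ℕ) {l : ℕ} (hl : l ≤ k) : pre v l ≤ Tsum v l :=
  le_Tsum v (card_filter_lt hl)

lemma Tsum_comp_perm (v : Fin k → ℕ) (σ : Equiv.Perm (Fin k)) (l : ℕ) :
    Tsum (v ∘ σ) l = Tsum v l := by
  classical
  apply le_antisymm
  · refine Finset.sup_le fun s hs => ?_
    have h1 : ∑ m ∈ s, v (σ m) = ∑ m ∈ s.image σ, v m := by
      rw [Finset.sum_image (fun a _ b _ h => σ.injective h)]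
    rw [show (fun m => (v ∘ σ) m) = fun m => v (σ m) from rfl]
    rw [h1]
    exact le_Tsum v (by rw [Finset.card_image_of_injective _ σ.injective,
      (Finset.mem_powersetCard.mp hs).2])
  · refine Finset.sup_le fun s hs => ?_
    have h1 : ∑ m ∈ s, v m = ∑ m ∈ s.image σ.symm, v (σ m) := by
      rw [Finset.sum_image (fun a _ b _ h => σ.symm.injective h)]
      simp
    rw [h1]
    exact le_Tsum (v ∘ σ) (by rw [Finset.card_image_of_injective _ σ.symm.injective,
      (Finset.mem_powersetCard.mp hs).2])

lemma exists_sort_perm (v : Fin k → ℕ) :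
    ∃ σ : Equiv.Perm (Fin k), Antitone (v ∘ σ) := by
  refine ⟨(Fin.revPerm : Equiv.Perm (Fin k)).trans (Tuple.sort v), ?_⟩
  have h1 : Monotone (v ∘ (Tuple.sort v)) := Tuple.monotone_sort v
  have h2 : Antitone (Fin.rev : Fin k → Fin k) := fun a b h => Fin.rev_le_rev.mpr h
  exact h1.comp_antitone h2

lemma sum_pair_decomp {M : Type*} [AddCommMonoid M] (f : Fin k → M) {s : Finset (Fin k)}
    {i j : Fin k} (hi : i ∈ s) (hj : j ∈ s) (hij : i ≠ j) :
    ∑ m ∈ s, f m = f i + (f j + ∑ m ∈ (s.erase i).erase j, f m) := by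
  rw [← Finset.add_sum_erase _ f hi,
    ← Finset.add_sum_erase _ f (Finset.mem_erase.mpr ⟨hij.symm, hj⟩)]

lemma prod_pair_decomp {M : Type*} [CommMonoid M] (f : Fin k → M) {s : Finset (Fin k)}
    {i j : Fin k} (hi : i ∈ s) (hj : j ∈ s) (hij : i ≠ j) :
    ∏ m ∈ s, f m = f i * (f j * ∏ m ∈ (s.erase i).erase j, f m) := by
  rw [← Finset.mul_prod_erase _ f hi,
    ← Finset.mul_prod_erase _ f (Finset.mem_erase.mpr ⟨hij.symm, hj⟩)]

lemma transfer_facts (S : ℕ) (z : Fin k → ℕ) (i j : Fin k) (hij : i ≠ j)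
    (hgap : z j + 2 ≤ z i) (hS : ∑ m, z m = S) :
    ∑ m, Function.update (Function.update z i (z i - 1)) j (z j + 1) m = S ∧
    ∑ m, (Function.update (Function.update z i (z i - 1)) j (z j + 1) m) ^ 2 <
      ∑ m, (z m) ^ 2 ∧
    ∏ m, gfun S (z m) ≤
      ∏ m, gfun S (Function.update (Function.update z i (z i - 1)) j (z j + 1) m) := by
  set z' := Function.update (Function.update z i (z i - 1)) j (z j + 1) with hz'
  have hvi : z' i = z i - 1 := by
    rw [hz', Function.update_of_ne hij, Function.update_self]
  have hvj : z' j = z j + 1 := by rw [hz', Function.update_self]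
  have hvm : ∀ m, m ≠ i → m ≠ j → z' m = z m := fun m hmi hmj => by
    rw [hz', Function.update_of_ne hmj, Function.update_of_ne hmi]
  have hsum_z := sum_pair_decomp z (mem_univ i) (mem_univ j) hij
  have hij2 : z i + z j ≤ S := by
    rw [← hS, hsum_z]; omega
  refine ⟨?_, ?_, ?_⟩
  · have h1 := sum_pair_decomp z' (mem_univ i) (mem_univ j) hij
    have h2 : ∑ m ∈ (univ.erase i).erase j, z' m = ∑ m ∈ (univ.erase i).erase j, z m :=
      Finset.sum_congr rfl (fun m hm => by
        simp only [Finset.mem_erase] at hm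
        rw [hvm m hm.2.1 hm.1])
    rw [h1, h2, hvi, hvj]
    rw [hsum_z] at hS
    omega
  · rw [sum_pair_decomp (fun m => (z' m) ^ 2) (mem_univ i) (mem_univ j) hij,
      sum_pair_decomp (fun m => (z m) ^ 2) (mem_univ i) (mem_univ j) hij]
    have he : ∑ m ∈ (univ.erase i).erase j, (z' m) ^ 2 = ∑ m ∈ (univ.erase i).erase j, (z m) ^ 2 :=
      Finset.sum_congr rfl (fun m hm => by
        simp only [Finset.mem_erase] at hm
        rw [hvm m hm.2.1 hm.1])
    rw [he, hvi, hvj]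
    have : (z i - 1) ^ 2 + (z j + 1) ^ 2 < z i ^ 2 + z j ^ 2 := by
      obtain ⟨c, hc⟩ : ∃ c, z i = c + 1 := ⟨z i - 1, by omega⟩
      rw [hc]
      simp only [Nat.add_sub_cancel]
      nlinarith [hgap]
    omega
  · rw [prod_pair_decomp (fun m => gfun S (z' m)) (mem_univ i) (mem_univ j) hij,
      prod_pair_decomp (fun m => gfun S (z m)) (mem_univ i) (mem_univ j) hij]
    have he : ∏ m ∈ (univ.erase i).erase j, gfun S (z' m)
        = ∏ m ∈ (univ.erase i).erase j, gfun S (z m) :=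
      Finset.prod_congr rfl (fun m hm => by
        simp only [Finset.mem_erase] at hm
        rw [hvm m hm.2.1 hm.1])
    rw [he, hvi, hvj, ← mul_assoc, ← mul_assoc]
    refine mul_le_mul_of_nonneg_right ?_ (Finset.prod_nonneg fun m _ => (gfun_pos S _).le)
    exact gfun_transfer S (z i) (z j) hgap hij2

lemma key (S : ℕ) (hk : 2 ≤ k) (x : Fin k → ℕ) (hx : Antitone x)
    (hxS : ∑ i, x i = S) :
    ∀ n : ℕ, ∀ y : Fin k → ℕ, (∑ i, (y i) ^ 2 ≤ n) → (∑ i, y i = S) →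
    (∀ l, 1 ≤ l → l ≤ k - 1 → Tsum x l ≤ Tsum y l) →
    ∏ m, gfun S (y m) ≤ ∏ m, gfun S (x m) := by
  intro n
  induction n using Nat.strong_induction_on with
  | _ n IH =>
  intro y hn hyS hT
  classical
  obtain ⟨σ, hz⟩ := exists_sort_perm y
  set z : Fin k → ℕ := y ∘ σ with hzdef
  have hzS : ∑ i, z i = S := by
    rw [hzdef]
    rw [show ∑ i, (y ∘ σ) i = ∑ i, y (σ i) from rfl, Equiv.sum_comp σ y, hyS]
  have hzsq : ∑ i, (z i) ^ 2 = ∑ i, (y i) ^ 2 := by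
    rw [hzdef]
    exact Equiv.sum_comp σ (fun i => (y i) ^ 2)
  have hprodz : ∏ m, gfun S (z m) = ∏ m, gfun S (y m) := by
    rw [hzdef]
    exact Equiv.prod_comp σ (fun m => gfun S (y m))
  have hTz : ∀ l, Tsum z l = Tsum y l := fun l => Tsum_comp_perm y σ l
  have hpre : ∀ l, l ≤ k → pre x l ≤ pre z l := by
    intro l hl
    rcases Nat.eq_zero_or_pos l with rfl | hl1
    · simp [pre_zero]
    rcases eq_or_lt_of_le hl with rfl | hlk
    · rw [pre_total, pre_total, hxS, hzS]
    · have h1 : pre x l ≤ Tsum x l := pre_le_Tsum x hl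
      have h2 : Tsum x l ≤ Tsum y l := hT l hl1 (by omega)
      have h3 : Tsum z l ≤ pre z l := Tsum_le_pre hz hl
      rw [← hTz l] at h2
      omega
  by_cases hxz : ∀ m, x m = z m
  · rw [← hprodz]
    exact le_of_eq (Finset.prod_congr rfl fun m _ => by rw [hxz m])
  push_neg at hxz
  have hs1 : (univ.filter (fun m : Fin k => x m ≠ z m)).Nonempty := by
    obtain ⟨m, hm⟩ := hxz
    exact ⟨m, by simp [hm]⟩
  set i : Fin k := (univ.filter (fun m : Fin k => x m ≠ z m)).min' hs1 with hidef
  have hi_ne : x i ≠ z i := by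
    have := Finset.min'_mem _ hs1
    rw [← hidef] at this
    exact (Finset.mem_filter.mp this).2
  have hi_min : ∀ m, m < i → x m = z m := by
    intro m hm
    by_contra hc
    have : i ≤ m := Finset.min'_le _ m (by simp [hc])
    exact absurd hm (not_lt.mpr this)
  have hpre_eq : ∀ t, t ≤ (i : ℕ) → pre x t = pre z t := by
    intro t ht
    unfold pre
    refine Finset.sum_congr rfl fun m hm => ?_
    simp only [mem_filter, mem_univ, true_and] at hm
    exact hi_min m (by rw [Fin.lt_def]; omega)
  have hxi : x i < z i := by
    have hik : (i : ℕ) < k := i.isLt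
    have hle : pre x ((i : ℕ) + 1) ≤ pre z ((i : ℕ) + 1) := hpre _ (by omega)
    rw [pre_succ x hik, pre_succ z hik, hpre_eq (i : ℕ) le_rfl] at hle
    simp only [Fin.eta] at hle
    omega
  have hex : ∃ m, z m < x m := by
    by_contra hc
    push_neg at hc
    have heq := (Finset.sum_eq_sum_iff_of_le (fun m (_ : m ∈ univ) => hc m)).mp
      (by rw [hxS, hzS])
    exact absurd (heq i (mem_univ i)) (by omega)
  have hs2 : (univ.filter (fun m : Fin k => z m < x m)).Nonempty := by
    obtain ⟨m, hm⟩ := hex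
    exact ⟨m, by simp [hm]⟩
  set j : Fin k := (univ.filter (fun m : Fin k => z m < x m)).min' hs2 with hjdef
  have hj_lt : z j < x j := by
    have := Finset.min'_mem _ hs2
    rw [← hjdef] at this
    exact (Finset.mem_filter.mp this).2
  have hj_min : ∀ m, m < j → x m ≤ z m := by
    intro m hm
    by_contra hc
    have : j ≤ m := Finset.min'_le _ m (by simp; omega)
    exact absurd hm (not_lt.mpr this)
  have hij : i < j := by
    rcases lt_trichotomy i j with h | h | h
    · exact h
    · rw [h] at hxi; omega
    · have := hi_min j h; omega
  have hgap : z j + 2 ≤ z i := by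
    have h1 : x j ≤ x i := hx hij.le
    omega
  have hstrict : ∀ l, (i : ℕ) < l → l ≤ (j : ℕ) → pre x l < pre z l := by
    intro l h1
    induction l, h1 using Nat.le_induction with
    | base =>
      intro _
      have hik : (i : ℕ) < k := i.isLt
      rw [pre_succ x hik, pre_succ z hik, hpre_eq (i : ℕ) le_rfl]
      simp only [Fin.eta]
      omega
    | succ l hl ihl =>
      intro h2
      have hlk : l < k := by have := j.isLt; omega
      rw [pre_succ x hlk, pre_succ z hlk]
      have hm : (⟨l, hlk⟩ : Fin k) < j := by rw [Fin.lt_def]; simp; omega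
      have hxm : x ⟨l, hlk⟩ ≤ z ⟨l, hlk⟩ := hj_min _ hm
      have := ihl (by omega)
      omega
  have hij_ne : i ≠ j := ne_of_lt hij
  obtain ⟨hS', hsq', hprod'⟩ := transfer_facts S z i j hij_ne hgap hzS
  set z' : Fin k → ℕ := Function.update (Function.update z i (z i - 1)) j (z j + 1)
    with hz'def
  have hvi : z' i = z i - 1 := by
    rw [hz'def, Function.update_of_ne hij_ne, Function.update_self]
  have hvj : z' j = z j + 1 := by rw [hz'def, Function.update_self]
  have hvm : ∀ m, m ≠ i → m ≠ j → z' m = z m := fun m hmi hmj => by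
    rw [hz'def, Function.update_of_ne hmj, Function.update_of_ne hmi]
  have hT' : ∀ l, 1 ≤ l → l ≤ k - 1 → Tsum x l ≤ Tsum z' l := by
    intro l h1 h2
    have hlk : l ≤ k := by omega
    have hxT : Tsum x l ≤ pre x l := Tsum_le_pre hx hlk
    set s0 := univ.filter (fun m : Fin k => (m : ℕ) < l) with hs0
    have hcard : s0.card = l := card_filter_lt hlk
    have hprez : pre z l = ∑ m ∈ s0, z m := rfl
    have hle : pre x l ≤ ∑ m ∈ s0, z' m := by
      by_cases hcase : (i : ℕ) < l ∧ l ≤ (j : ℕ)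
      · have his : i ∈ s0 := by simp [hs0]; omega
        have hjs : j ∉ s0 := by simp [hs0]; omega
        have e1 : ∑ m ∈ s0, z' m = z' i + ∑ m ∈ s0.erase i, z' m :=
          (Finset.add_sum_erase _ z' his).symm
        have e2 : ∑ m ∈ s0, z m = z i + ∑ m ∈ s0.erase i, z m :=
          (Finset.add_sum_erase _ z his).symm
        have e3 : ∑ m ∈ s0.erase i, z' m = ∑ m ∈ s0.erase i, z m := by
          refine Finset.sum_congr rfl fun m hm => ?_
          have hmi : m ≠ i := (Finset.mem_erase.mp hm).1
          have hmj : m ≠ j := fun h => hjs (h ▸ (Finset.mem_erase.mp hm).2)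
          exact hvm m hmi hmj
        have hst := hstrict l hcase.1 hcase.2
        rw [hprez] at hst
        omega
      · push_neg at hcase
        by_cases hil : (i : ℕ) < l
        · have hjl : (j : ℕ) < l := by have := hcase hil; omega
          have his : i ∈ s0 := by simp [hs0]; omega
          have hjs : j ∈ s0 := by simp [hs0]; omega
          have e1 := sum_pair_decomp z' his hjs hij_ne
          have e2 := sum_pair_decomp z his hjs hij_ne
          have e3 : ∑ m ∈ (s0.erase i).erase j, z' m = ∑ m ∈ (s0.erase i).erase j, z m := by
            refine Finset.sum_congr rfl fun m hm => ?_
            simp only [Finset.mem_erase] at hm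
            exact hvm m hm.2.1 hm.1
          have := hpre l hlk
          rw [hprez] at this
          omega
        · have his : i ∉ s0 := by simp [hs0]; omega
          have hjs : j ∉ s0 := by
            simp only [hs0, mem_filter, mem_univ, true_and, not_lt]
            have : (i : ℕ) < (j : ℕ) := hij
            omega
          have e3 : ∑ m ∈ s0, z' m = ∑ m ∈ s0, z m := by
            refine Finset.sum_congr rfl fun m hm => ?_
            exact hvm m (fun h => his (h ▸ hm)) (fun h => hjs (h ▸ hm))
          have := hpre l hlk
          rw [hprez] at this
          omega
    exact le_trans hxT (le_trans hle (le_Tsum z' hcard))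
  have hlt : ∑ m, (z' m) ^ 2 < n := by
    rw [hzsq] at hsq'
    omega
  have hres := IH (∑ m, (z' m) ^ 2) hlt z' le_rfl hS' hT'
  calc ∏ m, gfun S (y m) = ∏ m, gfun S (z m) := hprodz.symm
    _ ≤ ∏ m, gfun S (z' m) := hprod'
    _ ≤ ∏ m, gfun S (x m) := hres

end PhiSchur

/-- **Schur-concavity of φ.** The function
φ(x₁,…,x_k) = ∏_j (Σ_{ℓ≠j} x_ℓ)!/x_j! on ℤ₊^k is Schur-concave: if x is
majorized by y (equal total sums, and for each ℓ = 1,…,k−1 the sum of the ℓ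
largest entries of x is at most that of y), then φ(x) ≥ φ(y). -/
theorem phi_schur_concave
    (k : ℕ) (hk : 2 ≤ k)
    (φ : (Fin k → ℕ) → ℝ)
    (hφ : ∀ x, φ x = ∏ j,
      ((∑ ℓ ∈ Finset.univ.erase j, x ℓ).factorial : ℝ) / ((x j).factorial : ℝ))
    (x y : Fin k → ℕ)
    (hsum : ∑ i, x i = ∑ i, y i)
    (hmaj : ∀ ℓ, 1 ≤ ℓ → ℓ ≤ k - 1 →
      (Finset.powersetCard ℓ (Finset.univ : Finset (Fin k))).sup (fun s => ∑ i ∈ s, x i) ≤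
      (Finset.powersetCard ℓ (Finset.univ : Finset (Fin k))).sup (fun s => ∑ i ∈ s, y i)) :
    φ y ≤ φ x := by
  classical
  set S := ∑ i, x i with hS
  have hyS : ∑ i, y i = S := hsum.symm
  have hφg : ∀ v : Fin k → ℕ, (∑ i, v i = S) →
      φ v = ∏ m, PhiSchur.gfun S (v m) := by
    intro v hv
    rw [hφ v]
    refine Finset.prod_congr rfl fun j _ => ?_
    have h1 : v j + ∑ l ∈ Finset.univ.erase j, v l = S := by
      rw [Finset.add_sum_erase _ v (Finset.mem_univ j), hv]
    have h2 : ∑ l ∈ Finset.univ.erase j, v l = S - v j := by omega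
    rw [PhiSchur.gfun, h2]
  obtain ⟨σ, hxs⟩ := PhiSchur.exists_sort_perm x
  set x' : Fin k → ℕ := x ∘ σ with hx'def
  have hx'S : ∑ i, x' i = S := by
    rw [hx'def, show ∑ i, (x ∘ σ) i = ∑ i, x (σ i) from rfl, Equiv.sum_comp σ x]
  have hT : ∀ l, 1 ≤ l → l ≤ k - 1 → PhiSchur.Tsum x' l ≤ PhiSchur.Tsum y l := by
    intro l h1 h2
    rw [hx'def, PhiSchur.Tsum_comp_perm x σ l]
    exact hmaj l h1 h2
  have hkey := PhiSchur.key S hk x' hxs hx'S (∑ i, (y i) ^ 2) y le_rfl hyS hT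
  have hfin : ∏ m, PhiSchur.gfun S (x' m) = ∏ m, PhiSchur.gfun S (x m) := by
    rw [hx'def]
    exact Equiv.prod_comp σ (fun m => PhiSchur.gfun S (x m))
  rw [hφg y hyS, hφg x hS.symm]
  rw [← hfin]
  exact hkey
end
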